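/- arXiv:1307.4670 — 7 statements merged into one kernel-verified Lean document; each statement's English description precedes it below -/
import Mathlib

section
/- Let A be a real symmetric n×n matrix, S an n×m matrix with SᵀS = I, and B = SᵀAS with eigenvalues μ₁ ≥ ⋯ ≥ μₘ interlacing those of A (λ₁ ≥ ⋯ ≥ λₙ). If the interlacing is tight, i.e., there exists 0 ≤ k ≤ m with λᵢ = μᵢ for i = 1,…,k and μᵢ = λ_{n-m+i} for i = k+1,…,m, then SB = AS. -/
open Matrix Finset

lemma conj_diag_apply {N : ℕ} (P : Matrix (Fin N) (Fin N) ℝ) (d : Fin N → ℝ) (a b : Fin N) :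
    (P * Matrix.diagonal d * Pᵀ) a b = ∑ c, P a c * d c * P b c := by
  rw [Matrix.mul_apply]
  exact Finset.sum_congr rfl fun c _ => by rw [Matrix.mul_diagonal, Matrix.transpose_apply]

lemma unitary_transpose_mul {N : ℕ} (A : Matrix (Fin N) (Fin N) ℝ) (hA : A.IsHermitian) :
    (hA.eigenvectorUnitary : Matrix (Fin N) (Fin N) ℝ)ᵀ * hA.eigenvectorUnitary = 1 := by
  have h2 := mem_unitaryGroup_iff'.mp hA.eigenvectorUnitary.2
  rw [← conjTranspose_eq_transpose_of_trivial, ← star_eq_conjTranspose]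
  exact h2


/-- Core support lemma: top part of tight interlacing forces eigenvector structure. -/
lemma tight_core (n m k : ℕ) (hmn : m ≤ n) (hk : k ≤ m) (lam : Fin n → ℝ)
    (hlamAnti : ∀ i j : Fin n, i ≤ j → lam j ≤ lam i)
    (mu : Fin m → ℝ) (w : Fin m → Fin n → ℝ)
    (horth : ∀ s t, (∑ j, w s j * w t j) = if s = t then 1 else 0)
    (hray : ∀ s, (∑ j, lam j * (w s j * w s j)) = mu s)
    (htop : ∀ i : Fin m, (i : ℕ) < k → mu i = lam ⟨(i : ℕ), lt_of_lt_of_le i.isLt hmn⟩) :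
    ∀ i : Fin m, (i : ℕ) < k → ∀ j, lam j ≠ mu i → w i j = 0 := by
  suffices H : ∀ N : ℕ, ∀ i : Fin m, (i : ℕ) = N → (i : ℕ) < k → ∀ j, lam j ≠ mu i → w i j = 0 by
    exact fun i hik j hj => H i i rfl hik j hj
  intro N
  induction N using Nat.strong_induction_on with
  | _ N IH =>
  intro i hiN hik j₀ hj₀
  subst hiN
  -- the "top" index in Fin n corresponding to i
  set il : Fin n := ⟨(i : ℕ), lt_of_lt_of_le i.isLt hmn⟩ with hil
  have hmui : mu i = lam il := htop i hik
  -- the set of strictly larger eigenvalue indices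
  set T : Finset (Fin n) := Finset.univ.filter (fun j => lam il < lam j) with hT
  set r : ℕ := T.card with hr
  -- T is an initial segment of length r
  have hdown : ∀ j j' : Fin n, j' ≤ j → j ∈ T → j' ∈ T := by
    intro j j' hle hj
    simp only [hT, mem_filter, mem_univ, true_and] at hj ⊢
    exact lt_of_lt_of_le hj (hlamAnti j' j hle)
  have hTle : ∀ j : Fin n, j ∈ T → (j : ℕ) < r := by
    intro j hj
    have hsub : Finset.Iic j ⊆ T := fun j' hj' => hdown j j' (mem_Iic.mp hj') hj
    have := Finset.card_le_card hsub
    rw [Fin.card_Iic] at this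
    omega
  have hTge : ∀ j : Fin n, (j : ℕ) < r → j ∈ T := by
    intro j hj
    by_contra hjT
    have hsub : T ⊆ Finset.Iio j := by
      intro t ht
      rw [mem_Iio]
      by_contra hle
      exact hjT (hdown t j (le_of_not_gt hle) ht)
    have := Finset.card_le_card hsub
    rw [Fin.card_Iio] at this
    omega
  -- r ≤ i
  have hri : r ≤ (i : ℕ) := by
    by_contra h
    have : il ∈ T := hTge il (not_le.mp h)
    simp only [hT, mem_filter, mem_univ, true_and] at this
    exact lt_irrefl _ this
  -- columns with index < r are supported on T, by induction hypothesis
  have hsupp : ∀ s : Fin m, (s : ℕ) < r → ∀ j : Fin n, j ∉ T → w s j = 0 := by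
    intro s hs j hj
    have hsk : (s : ℕ) < k := by omega
    have hsl : lam il < lam ⟨(s : ℕ), lt_of_lt_of_le s.isLt hmn⟩ := by
      have : (⟨(s : ℕ), lt_of_lt_of_le s.isLt hmn⟩ : Fin n) ∈ T := hTge _ (by simpa using hs)
      simpa [hT] using this
    have hjle : lam j ≤ lam il := by
      by_contra h
      exact hj (by simp [hT]; exact lt_of_not_ge h)
    have hne : lam j ≠ mu s := by
      rw [htop s hsk]; exact ne_of_lt (lt_of_le_of_lt hjle hsl)
    exact IH (s : ℕ) (by omega) s rfl hsk j hne
  -- embeddings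
  have hrn : r ≤ n := le_trans (le_trans hri (le_of_lt i.isLt)) hmn
  have hrm : r ≤ m := le_trans hri (le_of_lt i.isLt)
  set e : Fin r → Fin n := fun t => ⟨(t : ℕ), lt_of_lt_of_le t.isLt hrn⟩ with he
  set em : Fin r → Fin m := fun t => ⟨(t : ℕ), lt_of_lt_of_le t.isLt hrm⟩ with hem
  -- sum over Fin n of a function supported on T equals sum over Fin r
  have hsum : ∀ f : Fin n → ℝ, (∀ j ∉ T, f j = 0) → (∑ j, f j) = ∑ t : Fin r, f (e t) := by
    intro f hf
    rw [← Finset.sum_subset (Finset.subset_univ T) (fun x _ hx => hf x hx)]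
    have hTeq : T = Finset.image e Finset.univ := by
      ext j
      simp only [Finset.mem_image, Finset.mem_univ, true_and]
      constructor
      · intro hj; exact ⟨⟨(j : ℕ), hTle j hj⟩, Fin.ext rfl⟩
      · rintro ⟨t, rfl⟩; exact hTge _ t.isLt
    rw [hTeq, Finset.sum_image (fun a _ b _ hab => by
      have h2 := congrArg Fin.val hab
      exact Fin.ext h2)]
  -- the r×r matrix of restricted columns
  set M : Matrix (Fin r) (Fin r) ℝ := Matrix.of (fun s t => w (em s) (e t)) with hM
  have hMMT : M * Mᵀ = 1 := by
    ext s t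
    rw [Matrix.mul_apply]
    have : ∀ u : Fin r, M s u * Mᵀ u t = (fun j => w (em s) j * w (em t) j) (e u) := by
      intro u; simp [hM, Matrix.transpose_apply]
    rw [Finset.sum_congr rfl (fun u _ => this u)]
    rw [← hsum (fun j => w (em s) j * w (em t) j)
      (fun j hj => by simp only [hsupp (em s) s.isLt j hj, zero_mul])]
    rw [horth (em s) (em t)]
    by_cases hst : s = t
    · simp [hst, Matrix.one_apply]
    · have hne : em s ≠ em t := by
        intro h
        have h2 := congrArg Fin.val h
        exact hst (Fin.ext h2)
      simp [hst, hne, Matrix.one_apply]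
  have hMTM : Mᵀ * M = 1 := mul_eq_one_comm.mp hMMT
  -- restriction of column i
  set x : Fin r → ℝ := fun t => w i (e t) with hx
  have hMx : M *ᵥ x = 0 := by
    funext s
    rw [Matrix.mulVec, Pi.zero_apply]
    show (∑ t, M s t * x t) = 0
    have : ∀ u : Fin r, M s u * x u = (fun j => w (em s) j * w i j) (e u) := by
      intro u; simp [hM, hx]
    rw [Finset.sum_congr rfl (fun u _ => this u)]
    rw [← hsum (fun j => w (em s) j * w i j)
      (fun j hj => by simp only [hsupp (em s) s.isLt j hj, zero_mul])]
    rw [horth (em s) i]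
    have : em s ≠ i := by
      intro h
      have h2 := congrArg Fin.val h
      simp only [hem] at h2
      omega
    simp [this]
  have hx0 : x = 0 := by
    have : Mᵀ *ᵥ (M *ᵥ x) = x := by
      rw [Matrix.mulVec_mulVec, hMTM, Matrix.one_mulVec]
    rw [hMx, Matrix.mulVec_zero] at this
    exact this.symm
  -- column i vanishes on T
  have hiT : ∀ j : Fin n, j ∈ T → w i j = 0 := by
    intro j hj
    have hjr : (j : ℕ) < r := hTle j hj
    have : w i (e ⟨(j : ℕ), hjr⟩) = 0 := by
      rw [show w i (e ⟨(j : ℕ), hjr⟩) = x ⟨(j : ℕ), hjr⟩ from rfl, hx0]; rfl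
    simpa [he] using this
  -- final sum argument
  have hsum0 : (∑ j, (lam j - lam il) * (w i j * w i j)) = 0 := by
    have h1 : (∑ j, (lam j - lam il) * (w i j * w i j))
        = (∑ j, lam j * (w i j * w i j)) - lam il * (∑ j, w i j * w i j) := by
      rw [Finset.mul_sum, ← Finset.sum_sub_distrib]
      exact Finset.sum_congr rfl (fun j _ => by ring)
    rw [h1, hray i, horth i i, if_pos rfl, mul_one, hmui, sub_self]
  have hnonpos : ∀ j : Fin n, j ∈ Finset.univ → (lam j - lam il) * (w i j * w i j) ≤ 0 := by
    intro j _
    by_cases hj : j ∈ T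
    · rw [hiT j hj]; simp
    · have : lam j ≤ lam il := by
        by_contra h
        exact hj (by simp [hT]; exact lt_of_not_ge h)
      have h1 : lam j - lam il ≤ 0 := by linarith
      exact mul_nonpos_of_nonpos_of_nonneg h1 (mul_self_nonneg _)
  have heach := (Finset.sum_eq_zero_iff_of_nonpos hnonpos).mp hsum0 j₀ (Finset.mem_univ j₀)
  have hfac : lam j₀ - lam il ≠ 0 := by
    rw [hmui] at hj₀
    exact sub_ne_zero_of_ne hj₀
  have := (mul_eq_zero.mp heach).resolve_left hfac
  exact mul_self_eq_zero.mp this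

/-- Tight interlacing forces the eigen-equation for every column. -/
lemma tight_eig (n m k : ℕ) (hmn : m ≤ n) (hk : k ≤ m) (lam : Fin n → ℝ)
    (hlamAnti : ∀ i j : Fin n, i ≤ j → lam j ≤ lam i)
    (mu : Fin m → ℝ) (w : Fin m → Fin n → ℝ)
    (horth : ∀ s t, (∑ j, w s j * w t j) = if s = t then 1 else 0)
    (hray : ∀ s, (∑ j, lam j * (w s j * w s j)) = mu s)
    (htop : ∀ i : Fin m, (i : ℕ) < k → mu i = lam ⟨(i : ℕ), lt_of_lt_of_le i.isLt hmn⟩)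
    (hbot : ∀ i : Fin m, k ≤ (i : ℕ) →
      mu i = lam ⟨n - m + (i : ℕ), by have := i.isLt; omega⟩) :
    ∀ (i : Fin m) (j : Fin n), lam j * w i j = mu i * w i j := by
  intro i j
  by_cases hlj : lam j = mu i
  · rw [hlj]
  have hwij : w i j = 0 := by
    rcases lt_or_ge (i : ℕ) k with hik | hik
    · exact tight_core n m k hmn hk lam hlamAnti mu w horth hray htop i hik j hlj
    · set lam' : Fin n → ℝ := fun j => -lam j.rev with hlam'
      set mu' : Fin m → ℝ := fun s => -mu s.rev with hmu'
      set w' : Fin m → Fin n → ℝ := fun s j => w s.rev j.rev with hw'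
      have hlamAnti' : ∀ a b : Fin n, a ≤ b → lam' b ≤ lam' a := by
        intro a b hab
        simp only [hlam', neg_le_neg_iff]
        exact hlamAnti b.rev a.rev (Fin.rev_le_rev.mpr hab)
      have horth' : ∀ s t, (∑ j, w' s j * w' t j) = if s = t then 1 else 0 := by
        intro s t
        have h1 : (∑ j, w' s j * w' t j) = ∑ j, w s.rev j * w t.rev j :=
          Fintype.sum_equiv Fin.revPerm _ _ (fun j => rfl)
        rw [h1, horth s.rev t.rev]
        by_cases hst : s = t
        · simp [hst]
        · have hne : s.rev ≠ t.rev := fun h => hst (Fin.rev_injective h)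
          simp [hst, hne]
      have hray' : ∀ s, (∑ j, lam' j * (w' s j * w' s j)) = mu' s := by
        intro s
        have h1 : (∑ j, lam' j * (w' s j * w' s j))
            = ∑ j, -(lam j * (w s.rev j * w s.rev j)) :=
          Fintype.sum_equiv Fin.revPerm _ _ (fun j => by simp [hlam', hw', neg_mul])
        rw [h1, Finset.sum_neg_distrib, hray s.rev, hmu']
      have htop' : ∀ s : Fin m, (s : ℕ) < m - k →
          mu' s = lam' ⟨(s : ℕ), lt_of_lt_of_le s.isLt hmn⟩ := by
        intro s hs
        have hks : k ≤ ((Fin.rev s : Fin m) : ℕ) := by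
          simp only [Fin.val_rev]; omega
        have h2 := hbot s.rev hks
        simp only [hmu', hlam', neg_inj]
        rw [h2]
        congr 1
        apply Fin.ext
        simp only [Fin.val_rev]
        omega
      have hcore := tight_core n m (m - k) hmn (Nat.sub_le m k) lam' hlamAnti' mu' w'
        horth' hray' htop'
      have hir : ((Fin.rev i : Fin m) : ℕ) < m - k := by
        have := i.isLt
        simp only [Fin.val_rev]; omega
      have hres := hcore i.rev hir j.rev (by
        show lam' j.rev ≠ mu' i.rev
        simp only [hlam', hmu', Fin.rev_rev, ne_eq, neg_inj]
        exact hlj)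
      simpa [hw', Fin.rev_rev] using hres
  rw [hwij]; ring


/-- Tight interlacing implies `SB = AS`. -/
theorem stmt1 (n m : ℕ) (hm : m < n)
    (A : Matrix (Fin n) (Fin n) ℝ) (hA : A.IsHermitian)
    (S : Matrix (Fin n) (Fin m) ℝ) (hS : Sᵀ * S = 1)
    (hB : (Sᵀ * A * S).IsHermitian)
    (lam : Fin n → ℝ) (σ : Equiv.Perm (Fin n))
    (hlam : lam = hA.eigenvalues ∘ σ)
    (hlamAnti : ∀ i j : Fin n, i ≤ j → lam j ≤ lam i)
    (mu : Fin m → ℝ) (τ : Equiv.Perm (Fin m))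
    (hmu : mu = hB.eigenvalues ∘ τ)
    (hmuAnti : ∀ i j : Fin m, i ≤ j → mu j ≤ mu i)
    (hinterlace : ∀ i : Fin m,
      mu i ≤ lam ⟨(i : ℕ), lt_trans i.isLt hm⟩ ∧
      lam ⟨n - m + (i : ℕ), by have := i.isLt; omega⟩ ≤ mu i)
    (k : ℕ) (hk : k ≤ m)
    (htop : ∀ i : Fin m, (i : ℕ) < k → lam ⟨(i : ℕ), lt_trans i.isLt hm⟩ = mu i)
    (hbot : ∀ i : Fin m, k ≤ (i : ℕ) →
      mu i = lam ⟨n - m + (i : ℕ), by have := i.isLt; omega⟩) :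
    S * (Sᵀ * A * S) = A * S := by
  have hmn : m ≤ n := le_of_lt hm
  set Q : Matrix (Fin n) (Fin n) ℝ := (hA.eigenvectorUnitary : Matrix (Fin n) (Fin n) ℝ) with hQdef
  have hQ1 : Qᵀ * Q = 1 := unitary_transpose_mul A hA
  have hQ2 : Q * Qᵀ = 1 := mul_eq_one_comm.mp hQ1
  have hAspec : A = Q * Matrix.diagonal hA.eigenvalues * Qᵀ := by
    simpa [Matrix.star_eq_conjTranspose, conjTranspose_eq_transpose_of_trivial] using hA.spectral_theorem
  set U := Q.submatrix id σ with hUdef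
  have hU1 : Uᵀ * U = 1 := by
    ext a b
    have h1 : (Uᵀ * U) a b = (Qᵀ * Q) (σ a) (σ b) := by
      rw [Matrix.mul_apply, Matrix.mul_apply]
      rfl
    rw [h1, hQ1]
    simp [Matrix.one_apply, EmbeddingLike.apply_eq_iff_eq]
  have hU2 : U * Uᵀ = 1 := mul_eq_one_comm.mp hU1
  have hAU : A = U * Matrix.diagonal lam * Uᵀ := by
    ext a b
    conv_lhs => rw [hAspec]
    rw [conj_diag_apply, conj_diag_apply]
    exact (Fintype.sum_equiv σ _ _ (fun c => by simp [hUdef, hlam])).symm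
  set R : Matrix (Fin m) (Fin m) ℝ := (hB.eigenvectorUnitary : Matrix (Fin m) (Fin m) ℝ) with hRdef
  have hR1 : Rᵀ * R = 1 := unitary_transpose_mul _ hB
  have hBspec : Sᵀ * A * S = R * Matrix.diagonal hB.eigenvalues * Rᵀ := by
    simpa [Matrix.star_eq_conjTranspose, conjTranspose_eq_transpose_of_trivial] using hB.spectral_theorem
  set V := R.submatrix id τ with hVdef
  have hV1 : Vᵀ * V = 1 := by
    ext a b
    have h1 : (Vᵀ * V) a b = (Rᵀ * R) (τ a) (τ b) := by
      rw [Matrix.mul_apply, Matrix.mul_apply]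
      rfl
    rw [h1, hR1]
    simp [Matrix.one_apply, EmbeddingLike.apply_eq_iff_eq]
  have hV2 : V * Vᵀ = 1 := mul_eq_one_comm.mp hV1
  have hBV : Sᵀ * A * S = V * Matrix.diagonal mu * Vᵀ := by
    ext a b
    conv_lhs => rw [hBspec]
    rw [conj_diag_apply, conj_diag_apply]
    exact (Fintype.sum_equiv τ _ _ (fun c => by simp [hVdef, hmu])).symm
  set W := Uᵀ * S * V with hWdef
  have hWT : Wᵀ = Vᵀ * (Sᵀ * U) := by
    rw [hWdef, Matrix.transpose_mul, Matrix.transpose_mul, Matrix.transpose_transpose]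
  have hW1 : Wᵀ * W = 1 := by
    rw [hWT, hWdef]
    have h1 : Vᵀ * (Sᵀ * U) * (Uᵀ * S * V) = Vᵀ * (Sᵀ * ((U * Uᵀ) * (S * V))) := by
      simp only [Matrix.mul_assoc]
    rw [h1, hU2, Matrix.one_mul, ← Matrix.mul_assoc Sᵀ S V, hS, Matrix.one_mul, hV1]
  have hUtS : Uᵀ * S = W * Vᵀ := by
    have h1 : W * Vᵀ = Uᵀ * (S * (V * Vᵀ)) := by
      rw [hWdef]; simp only [Matrix.mul_assoc]
    rw [h1, hV2, Matrix.mul_one]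
  have hWDW : Wᵀ * (Matrix.diagonal lam * W) = Matrix.diagonal mu := by
    have h2 : U * (Matrix.diagonal lam * (Uᵀ * (S * V))) = A * (S * V) := by
      rw [hAU]; simp only [Matrix.mul_assoc]
    calc Wᵀ * (Matrix.diagonal lam * W)
        = Vᵀ * (Sᵀ * (U * (Matrix.diagonal lam * (Uᵀ * (S * V))))) := by
          rw [hWT, hWdef]; simp only [Matrix.mul_assoc]
      _ = Vᵀ * (Sᵀ * (A * (S * V))) := by rw [h2]
      _ = Vᵀ * ((Sᵀ * A * S) * V) := by simp only [Matrix.mul_assoc]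
      _ = Vᵀ * ((V * Matrix.diagonal mu * Vᵀ) * V) := by rw [hBV]
      _ = (Vᵀ * V) * Matrix.diagonal mu * (Vᵀ * V) := by simp only [Matrix.mul_assoc]
      _ = Matrix.diagonal mu := by rw [hV1, Matrix.one_mul, Matrix.mul_one]
  set w : Fin m → Fin n → ℝ := fun s j => W j s with hwdef
  have horth : ∀ s t, (∑ j, w s j * w t j) = if s = t then 1 else 0 := by
    intro s t
    calc (∑ j, w s j * w t j) = (Wᵀ * W) s t := by rw [Matrix.mul_apply]; rfl
      _ = (1 : Matrix (Fin m) (Fin m) ℝ) s t := by rw [hW1]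
      _ = if s = t then 1 else 0 := Matrix.one_apply
  have hray : ∀ s, (∑ j, lam j * (w s j * w s j)) = mu s := by
    intro s
    calc (∑ j, lam j * (w s j * w s j)) = (Wᵀ * (Matrix.diagonal lam * W)) s s := by
          rw [Matrix.mul_apply]
          apply Finset.sum_congr rfl
          intro j _
          rw [Matrix.transpose_apply, Matrix.diagonal_mul]
          show lam j * (W j s * W j s) = W j s * (lam j * W j s)
          ring
      _ = Matrix.diagonal mu s s := by rw [hWDW]
      _ = mu s := by simp
  have heig := tight_eig n m k hmn hk lam hlamAnti mu w horth hray
      (fun i hik => (htop i hik).symm) (fun i hik => hbot i hik)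
  have hDW : Matrix.diagonal lam * W = W * Matrix.diagonal mu := by
    ext j s
    rw [Matrix.diagonal_mul, Matrix.mul_diagonal]
    calc lam j * W j s = mu s * W j s := heig s j
      _ = W j s * mu s := by ring
  have hSV : S * V = U * W := by
    have h1 : U * W = (U * Uᵀ) * (S * V) := by
      rw [hWdef]; simp only [Matrix.mul_assoc]
    rw [h1, hU2, Matrix.one_mul]
  calc S * (Sᵀ * A * S)
      = S * (V * Matrix.diagonal mu * Vᵀ) := by rw [hBV]
    _ = (S * V) * (Matrix.diagonal mu * Vᵀ) := by simp only [Matrix.mul_assoc]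
    _ = U * (W * Matrix.diagonal mu) * Vᵀ := by rw [hSV]; simp only [Matrix.mul_assoc]
    _ = U * (Matrix.diagonal lam * W) * Vᵀ := by rw [← hDW]
    _ = U * Matrix.diagonal lam * (W * Vᵀ) := by simp only [Matrix.mul_assoc]
    _ = U * Matrix.diagonal lam * (Uᵀ * S) := by rw [← hUtS]
    _ = A * S := by rw [hAU]; simp only [Matrix.mul_assoc]
end

section
/- Let G be a connected finite simple graph on n vertices with Laplacian eigenvalues λ₁ ≥ ⋯ ≥ λₙ = 0. For any vertex subset U with |U| = m, 0 < m < n, we have λ₁ + ⋯ + λₘ ≥ (∑_{u∈U} d_u) + |∂(U, Ū)|/(n − m), where d_u is the degree of u and ∂(U, Ū) is the set of edges between U and its complement Ū. -/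
open Finset Matrix

/-- The number of edges of `G` with one endpoint in `U` and the other outside `U`. -/
def edgeBoundary {n : ℕ} (G : SimpleGraph (Fin n)) [DecidableRel G.Adj]
    (U : Finset (Fin n)) : ℕ :=
  ((Finset.univ : Finset (Fin n × Fin n)).filter
    (fun p => p.1 ∈ U ∧ p.2 ∉ U ∧ G.Adj p.1 p.2)).card

section aux

variable {n : ℕ}

lemma vmv_mul (u v w x : Fin n → ℝ) :
    Matrix.vecMulVec u v * Matrix.vecMulVec w x
      = (v ⬝ᵥ w) • Matrix.vecMulVec u x := by
  ext i j
  simp only [Matrix.mul_apply, Matrix.vecMulVec_apply, Matrix.smul_apply,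
    dotProduct, smul_eq_mul]
  rw [Finset.sum_mul]
  exact Finset.sum_congr rfl fun k _ => by ring

lemma diag_mul_vmv (d u v : Fin n → ℝ) :
    Matrix.diagonal d * Matrix.vecMulVec u v
      = Matrix.vecMulVec (fun i => d i * u i) v := by
  ext i j
  simp [Matrix.diagonal_mul, Matrix.vecMulVec_apply, mul_assoc]

lemma vmv_mul_diag (d u v : Fin n → ℝ) :
    Matrix.vecMulVec u v * Matrix.diagonal d
      = Matrix.vecMulVec u (fun j => v j * d j) := by
  ext i j
  simp [Matrix.mul_diagonal, Matrix.vecMulVec_apply, mul_assoc]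

lemma trace_vmv_mul (u v : Fin n → ℝ) (M : Matrix (Fin n) (Fin n) ℝ) :
    Matrix.trace (Matrix.vecMulVec u v * M) = v ⬝ᵥ (M *ᵥ u) := by
  simp only [Matrix.trace, Matrix.diag, Matrix.mul_apply, Matrix.vecMulVec_apply,
    dotProduct, Matrix.mulVec, dotProduct]
  rw [Finset.sum_comm]
  refine Finset.sum_congr rfl fun j _ => ?_
  rw [Finset.mul_sum]
  exact Finset.sum_congr rfl fun i _ => by ring

/-- `{i : Fin n | i < m}` has cardinality `m`. -/
lemma card_filter_lt_eq (m : ℕ) (hmn : m ≤ n) :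
    (Finset.filter (fun i : Fin n => (i : ℕ) < m) Finset.univ).card = m := by
  have : Finset.filter (fun i : Fin n => (i : ℕ) < m) Finset.univ
      = Finset.map (Fin.castLEEmb hmn) Finset.univ := by
    ext i
    simp only [Finset.mem_filter, Finset.mem_univ, true_and, Finset.mem_map]
    constructor
    · intro h
      exact ⟨⟨(i : ℕ), h⟩, by simp [Fin.ext_iff]⟩
    · rintro ⟨j, rfl⟩
      simpa using j.isLt
  rw [this, Finset.card_map, Finset.card_univ, Fintype.card_fin]

/-- Ky-Fan-type summation lemma. -/
lemma kyfan_sum {m : ℕ} (hmn : m < n) (lam c : Fin n → ℝ)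
    (hanti : ∀ i j : Fin n, i ≤ j → lam j ≤ lam i)
    (hc0 : ∀ i, 0 ≤ c i) (hc1 : ∀ i, c i ≤ 1) (hsum : ∑ i, c i = m) :
    ∑ i, c i * lam i ≤ ∑ i ∈ Finset.filter (fun i : Fin n => (i : ℕ) < m) Finset.univ, lam i := by
  set p : Fin n := ⟨m, hmn⟩ with hp
  set S := Finset.filter (fun i : Fin n => (i : ℕ) < m) Finset.univ with hS
  set T := Finset.filter (fun i : Fin n => ¬ (i : ℕ) < m) Finset.univ with hT
  have cardS : S.card = m := card_filter_lt_eq m hmn.le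
  have hsplit : ∑ i ∈ S, c i + ∑ i ∈ T, c i = (m : ℝ) := by
    rw [hS, hT, Finset.sum_filter_add_sum_filter_not]; exact hsum
  have hAle : ∑ i ∈ S, c i * lam i ≤ ∑ i ∈ S, (lam i - (1 - c i) * lam p) := by
    refine Finset.sum_le_sum fun i hi => ?_
    have hip : lam p ≤ lam i := by
      refine hanti i p ?_
      have : (i : ℕ) < m := (Finset.mem_filter.mp hi).2
      exact le_of_lt (by simpa [hp, Fin.lt_def] using this)
    nlinarith [hc1 i, mul_le_mul_of_nonneg_left hip (by linarith [hc1 i] : (0:ℝ) ≤ 1 - c i)]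
  have hBle : ∑ i ∈ T, c i * lam i ≤ ∑ i ∈ T, c i * lam p := by
    refine Finset.sum_le_sum fun i hi => ?_
    have hpi : lam i ≤ lam p := by
      refine hanti p i ?_
      have : ¬ (i : ℕ) < m := (Finset.mem_filter.mp hi).2
      simpa [hp, Fin.le_def] using le_of_not_gt this
    exact mul_le_mul_of_nonneg_left hpi (hc0 i)
  have e1 : ∑ i ∈ S, (lam i - (1 - c i) * lam p)
      = ∑ i ∈ S, lam i - ((m : ℝ) - ∑ i ∈ S, c i) * lam p := by
    rw [Finset.sum_sub_distrib, ← Finset.sum_mul, Finset.sum_sub_distrib,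
      Finset.sum_const, cardS]
    simp
  have e2 : ∑ i ∈ T, c i * lam p = (∑ i ∈ T, c i) * lam p := by
    rw [Finset.sum_mul]
  have hTeq : ∑ i ∈ T, c i = (m : ℝ) - ∑ i ∈ S, c i := by linarith
  calc ∑ i, c i * lam i
      = ∑ i ∈ S, c i * lam i + ∑ i ∈ T, c i * lam i := by
        rw [hS, hT, Finset.sum_filter_add_sum_filter_not]
    _ ≤ ∑ i ∈ S, (lam i - (1 - c i) * lam p) + ∑ i ∈ T, c i * lam p :=
        add_le_add hAle hBle
    _ = ∑ i ∈ S, lam i := by rw [e1, e2, hTeq]; ring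

end aux

/-- Basic interlacing bound: `∑_{i≤m} λᵢ ≥ ∑_{u∈U} d_u + |∂(U,Ū)|/(n-m)`. -/
theorem stmt4 (n : ℕ) (G : SimpleGraph (Fin n)) [DecidableRel G.Adj]
    (hconn : G.Connected)
    (hL : (G.lapMatrix ℝ).IsHermitian)
    (lam : Fin n → ℝ) (σ : Equiv.Perm (Fin n))
    (hlam : lam = hL.eigenvalues ∘ σ)
    (hlamAnti : ∀ i j : Fin n, i ≤ j → lam j ≤ lam i)
    (U : Finset (Fin n)) (m : ℕ) (hU : U.card = m) (hm0 : 0 < m) (hmn : m < n) :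
    (∑ u ∈ U, (G.degree u : ℝ)) + (edgeBoundary G U : ℝ) / ((n : ℝ) - m) ≤
      ∑ i ∈ Finset.filter (fun i : Fin n => (i : ℕ) < m) Finset.univ, lam i := by
  classical
  classical
  set L : Matrix (Fin n) (Fin n) ℝ := G.lapMatrix ℝ with hLdef
  have hmnR : (m : ℝ) < n := by exact_mod_cast hmn
  have hnm : (0:ℝ) < (n : ℝ) - m := by linarith
  have hn0 : (0:ℝ) < (n : ℝ) := by
    have : (0:ℝ) ≤ m := by positivity
    linarith
  set d : Fin n → ℝ := fun i => if i ∈ U then 1 else 0 with hd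
  set χ : Fin n → ℝ := fun i => if i ∈ U then 0 else 1 with hχ
  set A : Matrix (Fin n) (Fin n) ℝ := Matrix.diagonal d with hAdef
  set B : Matrix (Fin n) (Fin n) ℝ := ((n:ℝ)-m)⁻¹ • Matrix.vecMulVec χ χ with hBdef
  set J : Matrix (Fin n) (Fin n) ℝ := (n:ℝ)⁻¹ • Matrix.vecMulVec (1 : Fin n → ℝ) 1 with hJdef
  set P : Matrix (Fin n) (Fin n) ℝ := A + B - J with hPdef
  -- pointwise facts
  have hdd : ∀ i, d i * d i = d i := fun i => by by_cases h : i ∈ U <;> simp [hd, h]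
  have hdχ0 : ∀ i, d i * χ i = 0 := fun i => by by_cases h : i ∈ U <;> simp [hd, hχ, h]
  have hχχ1 : ∀ i, χ i * χ i = χ i := fun i => by by_cases h : i ∈ U <;> simp [hχ, h]
  have hdχ1 : ∀ i, d i + χ i = 1 := fun i => by by_cases h : i ∈ U <;> simp [hd, hχ, h]
  have hdsum : ∑ i, d i = (m : ℝ) := by
    rw [hd, Finset.sum_boole]
    norm_num [Finset.filter_univ_mem, hU]
  have hχsum : ∑ i, χ i = (n : ℝ) - m := by
    have : ∀ i, χ i = 1 - d i := fun i => by
      have := hdχ1 i; linarith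
    simp_rw [this]
    rw [Finset.sum_sub_distrib, Finset.sum_const, Finset.card_univ, Fintype.card_fin, hdsum]
    simp
  -- dot products
  have hχχ : χ ⬝ᵥ χ = (n:ℝ) - m := by
    unfold dotProduct
    simp_rw [hχχ1]
    exact hχsum
  have hχ1 : χ ⬝ᵥ (1 : Fin n → ℝ) = (n:ℝ) - m := by
    unfold dotProduct
    simpa using hχsum
  have h1χ : (1 : Fin n → ℝ) ⬝ᵥ χ = (n:ℝ) - m := by
    unfold dotProduct
    simpa using hχsum
  have h11 : (1 : Fin n → ℝ) ⬝ᵥ (1 : Fin n → ℝ) = (n:ℝ) := by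
    unfold dotProduct
    simp [Finset.card_univ]
  -- matrix product identities
  have hAA : A * A = A := by
    rw [hAdef, Matrix.diagonal_mul_diagonal]
    exact congrArg _ (funext hdd)
  have hAB : A * B = 0 := by
    rw [hAdef, hBdef, Matrix.mul_smul, diag_mul_vmv]
    have : (fun i => d i * χ i) = fun _ => (0:ℝ) := funext hdχ0
    rw [this]
    ext i j
    simp [Matrix.vecMulVec_apply]
  have hBA : B * A = 0 := by
    rw [hAdef, hBdef, Matrix.smul_mul, vmv_mul_diag]
    have : (fun j => χ j * d j) = fun _ => (0:ℝ) := funext fun j => by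
      rw [mul_comm]; exact hdχ0 j
    rw [this]
    ext i j
    simp [Matrix.vecMulVec_apply]
  have hBB : B * B = B := by
    rw [hBdef, Matrix.smul_mul, Matrix.mul_smul, vmv_mul, hχχ, smul_smul, smul_smul]
    congr 1
    field_simp
  have hABJ : (A + B) * J = J := by
    rw [hJdef, Matrix.mul_smul, add_mul]
    congr 1
    rw [hAdef, hBdef, diag_mul_vmv, Matrix.smul_mul, vmv_mul, hχ1]
    rw [smul_smul, inv_mul_cancel₀ (ne_of_gt hnm), one_smul]
    ext i j
    simp only [Matrix.add_apply, Matrix.vecMulVec_apply, Pi.one_apply, mul_one]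
    have := hdχ1 i
    linarith
  have hJAB : J * (A + B) = J := by
    rw [hJdef, Matrix.smul_mul, mul_add]
    congr 1
    rw [hAdef, hBdef, vmv_mul_diag, Matrix.mul_smul, vmv_mul, h1χ]
    rw [smul_smul, inv_mul_cancel₀ (ne_of_gt hnm), one_smul]
    ext i j
    simp only [Matrix.add_apply, Matrix.vecMulVec_apply, Pi.one_apply, one_mul]
    have := hdχ1 j
    linarith
  have hJJ : J * J = J := by
    rw [hJdef, Matrix.smul_mul, Matrix.mul_smul, vmv_mul, h11, smul_smul, smul_smul]
    congr 1
    field_simp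
  have hPP : P * P = P := by
    have e1 : (A + B) * (A + B) = A + B := by
      rw [add_mul, mul_add, mul_add, hAA, hAB, hBA, hBB, add_zero, zero_add]
    rw [hPdef, sub_mul, mul_sub, mul_sub, e1, hABJ, hJAB, hJJ]
    abel
  have hPsymm : ∀ i j, P i j = P j i := by
    intro i j
    rw [hPdef]
    simp only [hAdef, hBdef, hJdef, Matrix.sub_apply, Matrix.add_apply, Matrix.smul_apply,
      Matrix.vecMulVec_apply, Matrix.diagonal_apply, Pi.one_apply, smul_eq_mul]
    by_cases h : i = j
    · subst h; ring
    · rw [if_neg h, if_neg (Ne.symm h)]; ring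
  have hPstar : star P = P := by
    ext i j
    rw [Matrix.star_apply, star_trivial]
    exact hPsymm j i
  -- traces
  have trace_diag_mul : ∀ (f : Fin n → ℝ) (M : Matrix (Fin n) (Fin n) ℝ),
      Matrix.trace (Matrix.diagonal f * M) = ∑ i, f i * M i i := by
    intro f M
    simp [Matrix.trace, Matrix.diag, Matrix.diagonal_mul]
  have trace_vmv : ∀ (u v : Fin n → ℝ),
      Matrix.trace (Matrix.vecMulVec u v) = u ⬝ᵥ v := by
    intro u v
    simp [Matrix.trace, Matrix.diag, Matrix.vecMulVec_apply, dotProduct]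
  have htrP : Matrix.trace P = (m : ℝ) := by
    rw [hPdef, Matrix.trace_sub, Matrix.trace_add, hAdef, Matrix.trace_diagonal, hdsum,
      hBdef, hJdef, Matrix.trace_smul, Matrix.trace_smul, trace_vmv, trace_vmv, hχχ, h11]
    rw [smul_eq_mul, smul_eq_mul, inv_mul_cancel₀ (ne_of_gt hnm), inv_mul_cancel₀ (ne_of_gt hn0)]
    ring
  -- diagonal of L
  have hLdiag : ∀ i, L i i = (G.degree i : ℝ) := by
    intro i
    rw [hLdef]
    simp [SimpleGraph.lapMatrix, SimpleGraph.degMatrix, Matrix.sub_apply,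
      Matrix.diagonal_apply_eq]
  have htrAL : Matrix.trace (A * L) = ∑ u ∈ U, (G.degree u : ℝ) := by
    rw [hAdef, trace_diag_mul]
    have : ∀ i, d i * L i i = if i ∈ U then (G.degree i : ℝ) else 0 := by
      intro i
      by_cases h : i ∈ U <;> simp [hd, h, hLdiag i]
    simp_rw [this]
    rw [Finset.sum_ite_mem, Finset.univ_inter]
  -- quadratic form: boundary count
  have hquad : χ ⬝ᵥ (L *ᵥ χ) = (edgeBoundary G U : ℝ) := by
    have h2 : χ ⬝ᵥ (L *ᵥ χ) = Matrix.toLinearMap₂' ℝ (G.lapMatrix ℝ) χ χ := by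
      rw [Matrix.toLinearMap₂'_apply', hLdef]
    rw [h2, SimpleGraph.lapMatrix_toLinearMap₂']
    have hpt : ∀ i j : Fin n, (if G.Adj i j then (χ i - χ j)^2 else 0)
        = (if (i ∈ U ∧ j ∉ U ∧ G.Adj i j) then (1:ℝ) else 0)
          + (if (j ∈ U ∧ i ∉ U ∧ G.Adj i j) then (1:ℝ) else 0) := by
      intro i j
      by_cases hij : G.Adj i j
      · have hne : i ≠ j := G.ne_of_adj hij
        by_cases hi : i ∈ U <;> by_cases hj : j ∈ U <;>
          simp [hχ, hi, hj, hij] <;> norm_num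
      · simp [hij]
    have hsum1 : ∑ i : Fin n, ∑ j : Fin n, (if (i ∈ U ∧ j ∉ U ∧ G.Adj i j) then (1:ℝ) else 0)
        = (edgeBoundary G U : ℝ) := by
      rw [← Finset.sum_product']
      rw [Finset.sum_boole]
      congr 1
    have hsum2 : ∑ i : Fin n, ∑ j : Fin n, (if (j ∈ U ∧ i ∉ U ∧ G.Adj i j) then (1:ℝ) else 0)
        = (edgeBoundary G U : ℝ) := by
      rw [← Finset.sum_product']
      rw [Finset.sum_boole]
      congr 1
      simp only [edgeBoundary, Finset.univ_product_univ]
      apply Finset.card_nbij' (fun p => p.swap) (fun p => p.swap)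
      · intro p hp
        simp only [Finset.mem_coe, Finset.mem_filter, Finset.mem_univ, true_and] at hp ⊢
        exact ⟨hp.1, hp.2.1, hp.2.2.symm⟩
      · intro p hp
        simp only [Finset.mem_coe, Finset.mem_filter, Finset.mem_univ, true_and] at hp ⊢
        exact ⟨hp.1, hp.2.1, hp.2.2.symm⟩
      · intro p _; simp
      · intro p _; simp
    simp_rw [hpt, Finset.sum_add_distrib]
    rw [hsum1, hsum2]
    ring
  have htrBL : Matrix.trace (B * L) = (edgeBoundary G U : ℝ) / ((n:ℝ) - m) := by
    rw [hBdef, Matrix.smul_mul, Matrix.trace_smul, trace_vmv_mul, hquad, smul_eq_mul]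
    rw [div_eq_inv_mul]
  have htrJL : Matrix.trace (J * L) = 0 := by
    rw [hJdef, Matrix.smul_mul, Matrix.trace_smul, trace_vmv_mul]
    have hzero : L *ᵥ (1 : Fin n → ℝ) = 0 := by
      rw [hLdef]
      have := G.lapMatrix_mulVec_const_eq_zero (R := ℝ)
      convert this using 2
      rfl
    rw [hzero]
    simp
  have htrPL : Matrix.trace (P * L)
      = (∑ u ∈ U, (G.degree u : ℝ)) + (edgeBoundary G U : ℝ) / ((n:ℝ) - m) := by
    rw [hPdef, sub_mul, add_mul, Matrix.trace_sub, Matrix.trace_add, htrAL, htrBL, htrJL]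
    ring
  -- spectral part
  set V : Matrix (Fin n) (Fin n) ℝ := (hL.eigenvectorUnitary : Matrix (Fin n) (Fin n) ℝ)
    with hVdef
  have hVsV : V * star V = 1 := Matrix.mem_unitaryGroup_iff.mp hL.eigenvectorUnitary.2
  have hsVV : star V * V = 1 := Matrix.mem_unitaryGroup_iff'.mp hL.eigenvectorUnitary.2
  set D : Matrix (Fin n) (Fin n) ℝ := Matrix.diagonal hL.eigenvalues with hDdef
  have hspec : L = V * D * star V := by
    have h := hL.spectral_theorem
    rw [hDdef]
    have : (RCLike.ofReal ∘ hL.eigenvalues : Fin n → ℝ) = hL.eigenvalues := by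
      funext i
      simp [RCLike.ofReal_real_eq_id]
    rw [← this]
    exact h
  set C : Matrix (Fin n) (Fin n) ℝ := star V * P * V with hCdef
  have hCC : C * C = C := by
    rw [hCdef]
    calc (star V * P * V) * (star V * P * V)
        = star V * (P * ((V * star V) * (P * V))) := by simp only [Matrix.mul_assoc]
      _ = star V * (P * (P * V)) := by rw [hVsV, one_mul]
      _ = star V * (P * P * V) := by rw [Matrix.mul_assoc P P V]
      _ = star V * (P * V) := by rw [hPP]
      _ = star V * P * V := by rw [Matrix.mul_assoc]
  have hCsym : ∀ i j, C i j = C j i := by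
    intro i j
    have hstarC : star C = C := by
      rw [hCdef, StarMul.star_mul, StarMul.star_mul, star_star, hPstar, Matrix.mul_assoc]
    conv_lhs => rw [← hstarC]
    rw [Matrix.star_apply, star_trivial]
  have hCdiag : ∀ i, C i i = ∑ j, (C i j)^2 := by
    intro i
    conv_lhs => rw [← hCC]
    rw [Matrix.mul_apply]
    exact Finset.sum_congr rfl fun j _ => by rw [hCsym j i]; ring
  have hC0 : ∀ i, 0 ≤ C i i := by
    intro i
    rw [hCdiag i]
    exact Finset.sum_nonneg fun j _ => sq_nonneg _
  have hC1 : ∀ i, C i i ≤ 1 := by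
    intro i
    have h2 : (C i i)^2 ≤ C i i := by
      conv_rhs => rw [hCdiag i]
      exact Finset.single_le_sum (fun j _ => sq_nonneg (C i j)) (Finset.mem_univ i)
    nlinarith [hC0 i]
  have htrC : Matrix.trace C = (m : ℝ) := by
    rw [hCdef, Matrix.trace_mul_cycle, hVsV, one_mul, htrP]
  have htrCD : Matrix.trace (C * D) = Matrix.trace (P * L) := by
    have e : P * L = (P * (V * D)) * star V := by
      rw [hspec]
      simp only [Matrix.mul_assoc]
    rw [e, Matrix.trace_mul_comm (P * (V * D)) (star V), hCdef]
    simp only [Matrix.mul_assoc]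
  have htrCD' : Matrix.trace (C * D) = ∑ i, C i i * hL.eigenvalues i := by
    rw [hDdef]
    simp [Matrix.trace, Matrix.diag, Matrix.mul_diagonal]
  -- permute
  set c : Fin n → ℝ := fun i => C (σ i) (σ i) with hcdef
  have hcsum : ∑ i, c i = (m : ℝ) := by
    rw [hcdef, ← htrC]
    exact Equiv.sum_comp σ (fun j => C j j)
  have hkey : ∑ i, c i * lam i = Matrix.trace (P * L) := by
    rw [← htrCD, htrCD']
    rw [hlam]
    calc ∑ i, C (σ i) (σ i) * hL.eigenvalues (σ i)
        = ∑ i, C i i * hL.eigenvalues i := Equiv.sum_comp σ (fun j => C j j * hL.eigenvalues j)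
      _ = _ := rfl
  calc (∑ u ∈ U, (G.degree u : ℝ)) + (edgeBoundary G U : ℝ) / ((n : ℝ) - m)
      = ∑ i, c i * lam i := by rw [hkey, htrPL]
    _ ≤ _ := kyfan_sum hmn lam c hlamAnti (fun i => hC0 (σ i)) (fun i => hC1 (σ i)) hcsum
end

section
/- Let G be a connected finite simple graph on n vertices with Laplacian eigenvalues λ₁ ≥ ⋯ ≥ λₙ = 0. For any vertex subset U with |U| = m, 0 < m < n, we have λ_{n-1} + λ_{n-2} + ⋯ + λ_{n-m} ≤ (∑_{u∈U} d_u) + |∂(U, Ū)|/(n − m). -/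
open Finset Matrix
open scoped RealInnerProductSpace

lemma spec_expand {n : ℕ} (L : Matrix (Fin n) (Fin n) ℝ) (hL : L.IsHermitian)
    (v : EuclideanSpace ℝ (Fin n)) :
    ⟪v, (WithLp.toLp 2 (L *ᵥ v : Fin n → ℝ) : EuclideanSpace ℝ (Fin n))⟫ =
      ∑ i, hL.eigenvalues i * ⟪hL.eigenvectorBasis i, v⟫ ^ 2 := by
  set b := hL.eigenvectorBasis with hb
  have hev : ∀ i, (L *ᵥ (b i : Fin n → ℝ)) = hL.eigenvalues i • (b i : Fin n → ℝ) :=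
    fun i => hL.mulVec_eigenvectorBasis i
  have hmul : (L *ᵥ (v : Fin n → ℝ) : Fin n → ℝ)
      = ∑ i, (b.repr v i * hL.eigenvalues i) • (b i : Fin n → ℝ) := by
    conv_lhs => rw [← b.sum_repr v]
    simp only [WithLp.ofLp_sum, WithLp.ofLp_smul]
    rw [show (L *ᵥ ∑ i, b.repr v i • (b i : Fin n → ℝ) : Fin n → ℝ)
        = L.mulVecLin (∑ i, b.repr v i • (b i : Fin n → ℝ)) from rfl, map_sum]
    refine Finset.sum_congr rfl fun i _ => ?_
    rw [_root_.map_smul, mulVecLin_apply, hev]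
    funext k; simp; ring
  have hx : ∀ i, ⟪v, b i⟫ = b.repr v i := fun i => by
    rw [real_inner_comm]; exact (b.repr_apply_apply v i).symm
  have hx' : ∀ i, ⟪b i, v⟫ = b.repr v i := fun i => (b.repr_apply_apply v i).symm
  calc ⟪v, (WithLp.toLp 2 (L *ᵥ v : Fin n → ℝ) : EuclideanSpace ℝ (Fin n))⟫
      = ⟪v, (∑ i, (b.repr v i * hL.eigenvalues i) • b i : EuclideanSpace ℝ (Fin n))⟫ := by
        rw [show (WithLp.toLp 2 (L *ᵥ v : Fin n → ℝ) : EuclideanSpace ℝ (Fin n))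
          = (∑ i, (b.repr v i * hL.eigenvalues i) • b i : EuclideanSpace ℝ (Fin n)) from by
            rw [hmul, WithLp.toLp_sum]; simp only [WithLp.toLp_smul, WithLp.toLp_ofLp]]
    _ = ∑ i, (b.repr v i * hL.eigenvalues i) * ⟪v, b i⟫ := by
        rw [inner_sum]; simp only [real_inner_smul_right]
    _ = ∑ i, hL.eigenvalues i * ⟪b i, v⟫ ^ 2 := by
        refine Finset.sum_congr rfl fun i _ => ?_
        rw [hx, hx']; ring


lemma weight_bound {n : ℕ} (lam q : Fin n → ℝ)
    (hAnti : ∀ i j : Fin n, i ≤ j → lam j ≤ lam i)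
    (T : Finset (Fin n)) (i₀ : Fin n) (hT : ∀ i, i ∈ T ↔ i₀ ≤ i)
    (hq0 : ∀ i, 0 ≤ q i) (hq1 : ∀ i, q i ≤ 1) (hqs : ∑ i, q i = T.card) :
    ∑ i ∈ T, lam i ≤ ∑ i, lam i * q i := by
  set t := lam i₀ with ht
  have hsplit : ∑ i, lam i * q i = ∑ i ∈ T, lam i * q i + ∑ i ∈ Tᶜ, lam i * q i :=
    (Finset.sum_add_sum_compl T _).symm
  have hqsplit : ∑ i ∈ Tᶜ, q i = ∑ i ∈ T, (1 - q i) := by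
    have h1 : ∑ i ∈ T, q i + ∑ i ∈ Tᶜ, q i = (T.card : ℝ) := by
      rw [Finset.sum_add_sum_compl T q, hqs]
    have h2 : ∑ i ∈ T, (1 - q i) = (T.card : ℝ) - ∑ i ∈ T, q i := by
      rw [Finset.sum_sub_distrib]; simp
    linarith
  have hlow : t * ∑ i ∈ Tᶜ, q i ≤ ∑ i ∈ Tᶜ, lam i * q i := by
    rw [Finset.mul_sum]
    refine Finset.sum_le_sum fun i hi => ?_
    have : ¬ i₀ ≤ i := fun h => (Finset.mem_compl.mp hi) ((hT i).mpr h)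
    exact mul_le_mul_of_nonneg_right (hAnti i i₀ (le_of_not_ge this)) (hq0 i)
  have hupper : ∑ i ∈ T, lam i ≤ ∑ i ∈ T, lam i * q i + t * ∑ i ∈ T, (1 - q i) := by
    rw [Finset.mul_sum, ← Finset.sum_add_distrib]
    refine Finset.sum_le_sum fun i hi => ?_
    have hle : lam i ≤ t := hAnti i₀ i ((hT i).mp hi)
    nlinarith [hq1 i, hq0 i]
  calc ∑ i ∈ T, lam i ≤ ∑ i ∈ T, lam i * q i + t * ∑ i ∈ T, (1 - q i) := hupper
    _ = ∑ i ∈ T, lam i * q i + t * ∑ i ∈ Tᶜ, q i := by rw [hqsplit]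
    _ ≤ ∑ i ∈ T, lam i * q i + ∑ i ∈ Tᶜ, lam i * q i := by linarith
    _ = ∑ i, lam i * q i := hsplit.symm


lemma cross_count {n : ℕ} (G : SimpleGraph (Fin n)) [DecidableRel G.Adj]
    (U : Finset (Fin n)) (c : ℝ) :
    ∑ i, ∑ j, (if G.Adj i j then
        ((if i ∈ U then 0 else c) - (if j ∈ U then 0 else c))^2 else 0)
      = 2 * (edgeBoundary G U : ℝ) * c^2 := by
  have hpt : ∀ i j : Fin n, (if G.Adj i j then
        ((if i ∈ U then 0 else c) - (if j ∈ U then 0 else c))^2 else 0)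
      = (if i ∈ U ∧ j ∉ U ∧ G.Adj i j then c^2 else 0)
        + (if j ∈ U ∧ i ∉ U ∧ G.Adj i j then c^2 else 0) := by
    intro i j
    by_cases hij : G.Adj i j <;> by_cases hi : i ∈ U <;> by_cases hj : j ∈ U <;>
      simp [hij, hi, hj] <;> ring
  simp_rw [hpt, Finset.sum_add_distrib]
  have h1 : ∑ i : Fin n, ∑ j : Fin n, (if i ∈ U ∧ j ∉ U ∧ G.Adj i j then c^2 else (0:ℝ))
      = (edgeBoundary G U : ℝ) * c^2 := by
    rw [← Finset.sum_product', Finset.univ_product_univ]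
    rw [Finset.sum_ite, Finset.sum_const, Finset.sum_const, edgeBoundary]
    simp [mul_comm]
  have h2 : ∑ i : Fin n, ∑ j : Fin n, (if j ∈ U ∧ i ∉ U ∧ G.Adj i j then c^2 else (0:ℝ))
      = (edgeBoundary G U : ℝ) * c^2 := by
    rw [← Finset.sum_product', Finset.univ_product_univ]
    rw [Finset.sum_ite, Finset.sum_const, Finset.sum_const]
    have hcard : ((Finset.univ : Finset (Fin n × Fin n)).filter
        (fun p => p.2 ∈ U ∧ p.1 ∉ U ∧ G.Adj p.1 p.2)).card = edgeBoundary G U := by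
      rw [edgeBoundary]
      apply Finset.card_bij' (fun p _ => Prod.swap p) (fun p _ => Prod.swap p)
      · intro p hp
        simp only [Finset.mem_filter, Finset.mem_univ, true_and] at hp ⊢
        exact ⟨hp.1, hp.2.1, hp.2.2.symm⟩
      · intro p hp
        simp only [Finset.mem_filter, Finset.mem_univ, true_and] at hp ⊢
        exact ⟨hp.1, hp.2.1, hp.2.2.symm⟩
      · intro p _; simp
      · intro p _; simp
    rw [hcard]; simp [mul_comm]
  rw [h1, h2]; ring

/-- Basic interlacing bound: `λ_{n-1} + ⋯ + λ_{n-m} ≤ ∑_{u∈U} d_u + |∂(U,Ū)|/(n-m)`.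
In 0-based indexing these are the eigenvalues `lam i` with `n-1-m ≤ i < n-1`. -/
theorem stmt5 (n : ℕ) (G : SimpleGraph (Fin n)) [DecidableRel G.Adj]
    (hconn : G.Connected)
    (hL : (G.lapMatrix ℝ).IsHermitian)
    (lam : Fin n → ℝ) (σ : Equiv.Perm (Fin n))
    (hlam : lam = hL.eigenvalues ∘ σ)
    (hlamAnti : ∀ i j : Fin n, i ≤ j → lam j ≤ lam i)
    (U : Finset (Fin n)) (m : ℕ) (hU : U.card = m) (hm0 : 0 < m) (hmn : m < n) :
    ∑ i ∈ Finset.filter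
        (fun i : Fin n => n - 1 - m ≤ (i : ℕ) ∧ (i : ℕ) < n - 1) Finset.univ, lam i ≤
      (∑ u ∈ U, (G.degree u : ℝ)) + (edgeBoundary G U : ℝ) / ((n : ℝ) - m) := by
  classical
  set L := G.lapMatrix ℝ with hLdef
  set b := hL.eigenvectorBasis with hb
  set μ := hL.eigenvalues with hμ
  have hnm : (0:ℝ) < (n:ℝ) - m := by
    have : (m:ℝ) < n := by exact_mod_cast hmn
    linarith
  set c : ℝ := 1 / Real.sqrt ((n:ℝ) - m) with hc
  have hsq : Real.sqrt ((n:ℝ) - m) > 0 := Real.sqrt_pos.mpr hnm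
  have hc2 : c^2 = 1 / ((n:ℝ) - m) := by
    rw [hc, div_pow, one_pow, Real.sq_sqrt hnm.le]
  -- the orthonormal family
  set xv : EuclideanSpace ℝ (Fin n) := WithLp.toLp 2 (fun i => if i ∈ U then 0 else c) with hxv
  set w : Option {x : Fin n // x ∈ U} → EuclideanSpace ℝ (Fin n) :=
    fun j => j.elim xv (fun u => EuclideanSpace.single u.1 1) with hw
  have hinner : ∀ x y : EuclideanSpace ℝ (Fin n), ⟪x, y⟫ = ∑ i, x i * y i := by
    intro x y
    rw [PiLp.inner_apply]
    simp [RCLike.inner_apply, mul_comm]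
  have hcardc : ((Finset.univ.filter (fun i : Fin n => i ∉ U)).card : ℝ) = (n:ℝ) - m := by
    have : Finset.univ.filter (fun i : Fin n => i ∉ U) = Uᶜ := by
      ext i; simp
    rw [this, Finset.card_compl, hU]
    simp [Nat.cast_sub hmn.le]
  have hxnorm : ⟪xv, xv⟫ = 1 := by
    rw [hinner]
    have : ∀ i : Fin n, xv i * xv i = if i ∈ U then 0 else c^2 := by
      intro i; by_cases hi : i ∈ U <;> simp [hxv, hi, sq]
    simp_rw [this]
    rw [Finset.sum_ite, Finset.sum_const, Finset.sum_const]
    simp only [smul_eq_mul, mul_zero, zero_add, nsmul_eq_mul]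
    have : Finset.univ.filter (fun i : Fin n => ¬ i ∈ U) =
        Finset.univ.filter (fun i : Fin n => i ∉ U) := rfl
    rw [this, hc2]
    rw [hcardc]
    field_simp
  have horth : Orthonormal ℝ w := by
    rw [orthonormal_iff_ite]
    intro j k
    match j, k with
    | some u, some u' =>
      rw [hinner]
      by_cases h : u = u'
      · subst h; simp [hw, EuclideanSpace.single_apply]
      · have : u.1 ≠ u'.1 := fun hh => h (Subtype.ext hh)
        simp [hw, EuclideanSpace.single_apply, this, this.symm, h]
    | some u, none =>
      rw [hinner]
      simp only [hw, hxv, Option.elim]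
      refine Finset.sum_eq_zero fun x _ => ?_
      by_cases hx : x ∈ U
      · simp [hx]
      · have hxu : x ≠ ↑u := fun h => hx (h ▸ u.2)
        simp [hx, EuclideanSpace.single_apply, hxu]
    | none, some u =>
      rw [hinner]
      simp only [hw, hxv, Option.elim]
      refine Finset.sum_eq_zero fun x _ => ?_
      by_cases hx : x ∈ U
      · simp [hx]
      · have hxu : x ≠ ↑u := fun h => hx (h ▸ u.2)
        simp [hx, EuclideanSpace.single_apply, hxu]
    | none, none =>
      simpa [hw] using hxnorm
    -- weights p
  set p : Fin n → ℝ := fun i => ∑ j, ⟪b i, w j⟫^2 with hp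
  have hp0 : ∀ i, 0 ≤ p i := fun i => Finset.sum_nonneg fun j _ => sq_nonneg _
  have hp1 : ∀ i, p i ≤ 1 := by
    intro i
    have hbes := horth.sum_inner_products_le (b i) (s := Finset.univ)
    have hnorm : ‖b i‖ = 1 := b.orthonormal.1 i
    calc p i = ∑ j, ‖⟪w j, b i⟫‖^2 := by
          refine Finset.sum_congr rfl fun j _ => ?_
          rw [real_inner_comm, Real.norm_eq_abs, sq_abs]
      _ ≤ ‖b i‖^2 := hbes
      _ = 1 := by rw [hnorm]; norm_num
  have hps : ∑ i, p i = (m : ℝ) + 1 := by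
    rw [hp, Finset.sum_comm]
    have hone : ∀ j, ∑ i, ⟪b i, w j⟫^2 = 1 := by
      intro j
      have hk := b.sum_inner_mul_inner (w j) (w j)
      have h2 : ∀ i, ⟪w j, b i⟫ * ⟪b i, w j⟫ = ⟪b i, w j⟫^2 := fun i => by
        rw [real_inner_comm (w j) (b i)]; ring
      rw [Finset.sum_congr rfl (fun i _ => (h2 i).symm), hk,
        real_inner_self_eq_norm_sq, horth.1 j]
      norm_num
    rw [Finset.sum_congr rfl (fun j _ => hone j), Finset.sum_const]
    simp [Fintype.card_option, hU]
  -- central identity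
  have hquadeq : ∑ i, μ i * p i
      = ∑ j, ⟪w j, (WithLp.toLp 2 (L *ᵥ w j : Fin n → ℝ) : EuclideanSpace ℝ (Fin n))⟫ := by
    have h1 : ∑ i, μ i * p i = ∑ i, ∑ j, μ i * ⟪b i, w j⟫^2 := by
      refine Finset.sum_congr rfl fun i _ => ?_
      rw [hp, Finset.mul_sum]
    rw [h1, Finset.sum_comm]
    exact Finset.sum_congr rfl fun j _ => (spec_expand L hL (w j)).symm
  -- quadratic values
  have hdeg : ∀ u : {x : Fin n // x ∈ U},
      ⟪w (some u), (WithLp.toLp 2 (L *ᵥ w (some u) : Fin n → ℝ) : EuclideanSpace ℝ (Fin n))⟫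
        = (G.degree u.1 : ℝ) := by
    intro u
    rw [hinner]
    have hwu : ∀ i, (w (some u)) i = if i = u.1 then 1 else 0 := fun i => by
      simp [hw, EuclideanSpace.single_apply]
    have : ∀ i, (w (some u)) i * (L *ᵥ (w (some u) : Fin n → ℝ)) i
        = if i = u.1 then (L *ᵥ (w (some u) : Fin n → ℝ)) i else 0 := by
      intro i; rw [hwu i]; by_cases h : i = u.1 <;> simp [h]
    rw [Finset.sum_congr rfl fun i _ => this i, Finset.sum_ite_eq' Finset.univ u.1]
    simp only [Finset.mem_univ, if_true]
    have : (L *ᵥ (w (some u) : Fin n → ℝ)) u.1 = ∑ k, L u.1 k * (w (some u)) k := rfl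
    rw [this, Finset.sum_congr rfl fun k _ => by rw [hwu k]]
    rw [Finset.sum_congr rfl fun k _ => (by by_cases h : k = u.1 <;> simp [h] :
      L u.1 k * (if k = u.1 then (1:ℝ) else 0) = if k = u.1 then L u.1 u.1 else 0)]
    rw [Finset.sum_ite_eq' Finset.univ u.1]
    simp only [Finset.mem_univ, if_true, hLdef]
    simp [SimpleGraph.lapMatrix, SimpleGraph.degMatrix]
  have hxquad : ⟪w none, (WithLp.toLp 2 (L *ᵥ w none : Fin n → ℝ) : EuclideanSpace ℝ (Fin n))⟫
      = (edgeBoundary G U : ℝ) / ((n:ℝ) - m) := by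
    rw [hinner]
    have h1 : ∑ i, (w none) i * (L *ᵥ (w none : Fin n → ℝ)) i
        = Matrix.toLinearMap₂' ℝ L (w none) (w none) := by
      rw [Matrix.toLinearMap₂'_apply']; rfl
    rw [h1, hLdef, SimpleGraph.lapMatrix_toLinearMap₂']
    have hwn : ∀ i, (w none) i = if i ∈ U then 0 else c := fun i => rfl
    have : (∑ i, ∑ j, if G.Adj i j then ((w none) i - (w none) j)^2 else 0)
        = 2 * (edgeBoundary G U : ℝ) * c^2 := by
      rw [Finset.sum_congr rfl fun i _ => Finset.sum_congr rfl fun j _ => by rw [hwn i, hwn j]]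
      exact cross_count G U c
    rw [this, hc2]
    field_simp
  have hsum : ∑ j, ⟪w j, (WithLp.toLp 2 (L *ᵥ w j : Fin n → ℝ) : EuclideanSpace ℝ (Fin n))⟫
      = (∑ u ∈ U, (G.degree u : ℝ)) + (edgeBoundary G U : ℝ) / ((n : ℝ) - m) := by
    rw [Fintype.sum_option, hxquad, Finset.sum_congr rfl fun u _ => hdeg u]
    rw [Finset.sum_coe_sort U (fun u => (G.degree u : ℝ))]
    ring
  -- permuted weights
  set q : Fin n → ℝ := fun i => p (σ i) with hqdef
  have hqsum : ∑ i, lam i * q i = ∑ i, μ i * p i := by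
    rw [hlam]
    exact Equiv.sum_comp σ (fun i => μ i * p i)
  have hi0 : n - 1 - m < n := by omega
  set i₀ : Fin n := ⟨n - 1 - m, hi0⟩ with hi₀
  set T : Finset (Fin n) := Finset.Ici i₀ with hT
  have hTmem : ∀ i, i ∈ T ↔ i₀ ≤ i := fun i => Finset.mem_Ici
  have hTcard : T.card = m + 1 := by
    rw [hT, Fin.card_Ici]
    simp only [hi₀]
    omega
  have hqs : ∑ i, q i = (T.card : ℝ) := by
    have : ∑ i, q i = ∑ i, p i := Equiv.sum_comp σ p
    rw [this, hps, hTcard]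
    push_cast; ring
  have hmain : ∑ i ∈ T, lam i ≤ ∑ i, lam i * q i :=
    weight_bound lam q hlamAnti T i₀ hTmem (fun i => hp0 _) (fun i => hp1 _) hqs
  have hsub : (Finset.filter
      (fun i : Fin n => n - 1 - m ≤ (i : ℕ) ∧ (i : ℕ) < n - 1) Finset.univ) ⊆ T := by
    intro i hi
    simp only [Finset.mem_filter, Finset.mem_univ, true_and] at hi
    rw [hTmem, Fin.le_def]
    exact hi.1
  have hlamnn : ∀ i, 0 ≤ lam i := by
    intro i
    rw [hlam]
    exact (SimpleGraph.posSemidef_lapMatrix ℝ G).eigenvalues_nonneg _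
  calc ∑ i ∈ Finset.filter
        (fun i : Fin n => n - 1 - m ≤ (i : ℕ) ∧ (i : ℕ) < n - 1) Finset.univ, lam i
      ≤ ∑ i ∈ T, lam i :=
        Finset.sum_le_sum_of_subset_of_nonneg hsub (fun i _ _ => hlamnn i)
    _ ≤ ∑ i, lam i * q i := hmain
    _ = ∑ i, μ i * p i := hqsum
    _ = ∑ j, ⟪w j, (WithLp.toLp 2 (L *ᵥ w j : Fin n → ℝ) : EuclideanSpace ℝ (Fin n))⟫ := hquadeq
    _ = (∑ u ∈ U, (G.degree u : ℝ)) + (edgeBoundary G U : ℝ) / ((n : ℝ) - m) := hsum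
end

section
/- Let G be a connected finite simple graph on n > 1 vertices with Laplacian eigenvalues λ₁ ≥ ⋯ ≥ λₙ = 0 and degrees d₁ ≥ ⋯ ≥ dₙ. Then for every 0 < m < n, λ₁ + ⋯ + λₘ ≥ d₁ + ⋯ + dₘ + 1. -/
open Finset Matrix


section spectral
variable {N M : Type*} [Fintype N] [Fintype M] [DecidableEq N] [DecidableEq M]

lemma diagWW_eq_sum_sq (W : Matrix N M ℝ) (i : N) :
    (W * Wᴴ) i i = ∑ k, (W i k)^2 := by
  rw [mul_apply]
  exact Finset.sum_congr rfl fun k _ => by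
    rw [conjTranspose_apply]; simp [sq]

lemma diagWW_nonneg (W : Matrix N M ℝ) (i : N) : 0 ≤ (W * Wᴴ) i i := by
  rw [diagWW_eq_sum_sq]
  exact Finset.sum_nonneg fun k _ => sq_nonneg _

lemma diagWW_le_one (W : Matrix N M ℝ) (h : Wᴴ * W = 1) (i : N) :
    (W * Wᴴ) i i ≤ 1 := by
  have hP2 : (W * Wᴴ) * (W * Wᴴ) = W * Wᴴ := by
    rw [Matrix.mul_assoc W Wᴴ (W * Wᴴ), ← Matrix.mul_assoc Wᴴ W Wᴴ, h, Matrix.one_mul]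
  have hPsymm : ∀ a b, (W * Wᴴ) b a = (W * Wᴴ) a b := by
    intro a b
    have hh : (W * Wᴴ)ᴴ = W * Wᴴ := by
      rw [conjTranspose_mul, conjTranspose_conjTranspose]
    conv_lhs => rw [← hh]
    simp [conjTranspose_apply]
  have hdiagsq : (W * Wᴴ) i i = ∑ k, ((W * Wᴴ) i k)^2 := by
    conv_lhs => rw [← hP2]
    rw [mul_apply]
    exact Finset.sum_congr rfl fun k _ => by rw [hPsymm i k]; ring
  have h0 : 0 ≤ (W * Wᴴ) i i := diagWW_nonneg W i
  have hge : ((W * Wᴴ) i i)^2 ≤ (W * Wᴴ) i i := by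
    conv_rhs => rw [hdiagsq]
    exact Finset.single_le_sum (f := fun k => ((W * Wᴴ) i k)^2)
      (fun k _ => sq_nonneg _) (Finset.mem_univ i)
  nlinarith

lemma auxHelper (U : Matrix N N ℝ) (hU2 : U * star U = 1)
    (μ : N → ℝ) (X : Matrix N M ℝ) :
    ∃ c : N → ℝ, (∀ i, 0 ≤ c i) ∧ (∑ i, c i = trace (Xᴴ * X)) ∧
      trace (Xᴴ * (U * diagonal μ * star U) * X) = ∑ i, μ i * c i ∧
      (Xᴴ * X = 1 → ∀ i, c i ≤ 1) := by
  have hWc : (star U * X)ᴴ = Xᴴ * U := by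
    rw [conjTranspose_mul, star_eq_conjTranspose, conjTranspose_conjTranspose]
  have hWW : (star U * X)ᴴ * (star U * X) = Xᴴ * X := by
    rw [hWc, Matrix.mul_assoc Xᴴ U (star U * X), ← Matrix.mul_assoc U (star U) X, hU2, Matrix.one_mul]
  refine ⟨fun i => ((star U * X) * (star U * X)ᴴ) i i,
    fun i => diagWW_nonneg _ i, ?_, ?_, ?_⟩
  · show trace ((star U * X) * (star U * X)ᴴ) = _
    rw [trace_mul_comm, hWW]
  · have h2 : Xᴴ * (U * diagonal μ * star U) * X
        = (star U * X)ᴴ * (diagonal μ * (star U * X)) := by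
      rw [hWc]
      simp only [Matrix.mul_assoc]
    rw [h2, trace_mul_comm, Matrix.mul_assoc]
    simp [trace, diag_apply, diagonal_mul]
  · intro hX i
    exact diagWW_le_one _ (by rw [hWW, hX]) i

lemma auxSpecSum (B : Matrix N N ℝ) (hB : B.IsHermitian) (X : Matrix N M ℝ) :
    ∃ c : N → ℝ, (∀ i, 0 ≤ c i) ∧ (∑ i, c i = trace (Xᴴ * X)) ∧
      trace (Xᴴ * B * X) = ∑ i, hB.eigenvalues i * c i ∧
      (Xᴴ * X = 1 → ∀ i, c i ≤ 1) := by
  have hU2 : (hB.eigenvectorUnitary : Matrix N N ℝ) * star (hB.eigenvectorUnitary : Matrix N N ℝ) = 1 :=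
    Unitary.coe_mul_star_self hB.eigenvectorUnitary
  have hdiag : star (hB.eigenvectorUnitary : Matrix N N ℝ) * B * (hB.eigenvectorUnitary : Matrix N N ℝ)
      = diagonal hB.eigenvalues := by
    simpa using hB.conjStarAlgAut_star_eigenvectorUnitary
  have hBe : (hB.eigenvectorUnitary : Matrix N N ℝ) * diagonal hB.eigenvalues
      * star (hB.eigenvectorUnitary : Matrix N N ℝ) = B := by
    rw [← hdiag]
    simp only [← Matrix.mul_assoc]
    rw [hU2, Matrix.one_mul, Matrix.mul_assoc, hU2, Matrix.mul_one]
  obtain ⟨c, h0, h1, h2, h3⟩ := auxHelper _ hU2 hB.eigenvalues X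
  rw [hBe] at h2
  exact ⟨c, h0, h1, h2, h3⟩

lemma auxTraceEig (B : Matrix N N ℝ) (hB : B.IsHermitian) :
    trace B = ∑ i, hB.eigenvalues i := by
  have hU2 : (hB.eigenvectorUnitary : Matrix N N ℝ) * star (hB.eigenvectorUnitary : Matrix N N ℝ) = 1 :=
    Unitary.coe_mul_star_self hB.eigenvectorUnitary
  have hdiag : star (hB.eigenvectorUnitary : Matrix N N ℝ) * B * (hB.eigenvectorUnitary : Matrix N N ℝ)
      = diagonal hB.eigenvalues := by
    simpa using hB.conjStarAlgAut_star_eigenvectorUnitary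
  have h := congrArg trace hdiag
  rw [trace_diagonal] at h
  rw [← h, mul_assoc, trace_mul_comm, mul_assoc, hU2, mul_one]

end spectral


set_option linter.unusedSectionVars false

lemma auxDrop {k : ℕ} (B : Matrix (Fin (k+1)) (Fin (k+1)) ℝ) (hB : B.IsHermitian)
    (i₀ : Fin (k+1)) :
    ∃ Y : Matrix (Fin (k+1)) (Fin k) ℝ, Yᴴ * Y = 1 ∧
      trace (Yᴴ * B * Y) = (∑ i, hB.eigenvalues i) - hB.eigenvalues i₀ := by
  classical
  set J : Matrix (Fin (k+1)) (Fin k) ℝ :=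
    Matrix.of (fun i j => if i = i₀.succAbove j then (1:ℝ) else 0) with hJ
  set V : Matrix (Fin (k+1)) (Fin (k+1)) ℝ := (hB.eigenvectorUnitary : Matrix (Fin (k+1)) (Fin (k+1)) ℝ) with hV
  have hU1 : star V * V = 1 := Unitary.coe_star_mul_self hB.eigenvectorUnitary
  have hdiag : star V * B * V = diagonal hB.eigenvalues := by
    simpa using hB.conjStarAlgAut_star_eigenvectorUnitary
  have hJJ : Jᴴ * J = 1 := by
    ext j j'
    simp only [mul_apply, conjTranspose_apply, hJ, Matrix.of_apply, star_trivial,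
      ite_mul, one_mul, zero_mul]
    rw [Finset.sum_ite_eq' Finset.univ (i₀.succAbove j)
      (fun x => if x = i₀.succAbove j' then (1:ℝ) else 0)]
    simp only [Finset.mem_univ, if_true, Matrix.one_apply]
    by_cases h : j = j'
    · subst h; simp
    · rw [if_neg, if_neg h]
      intro hc
      exact h (Fin.succAbove_right_injective hc)
  have e : (V * J)ᴴ * (V * J) = Jᴴ * (star V * V) * J := by
    rw [conjTranspose_mul, star_eq_conjTranspose]
    simp only [Matrix.mul_assoc]
  refine ⟨V * J, ?_, ?_⟩
  · rw [e, hU1, Matrix.mul_one, hJJ]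
  · have h1 : (V * J)ᴴ * B * (V * J) = Jᴴ * diagonal hB.eigenvalues * J := by
      rw [← hdiag, conjTranspose_mul, star_eq_conjTranspose]
      simp only [Matrix.mul_assoc]
    rw [h1]
    have h2 : ∀ j : Fin k, (Jᴴ * diagonal hB.eigenvalues * J) j j
        = hB.eigenvalues (i₀.succAbove j) := by
      intro j
      rw [Matrix.mul_assoc, mul_apply]
      have hterm : ∀ i, (Jᴴ) j i * (diagonal hB.eigenvalues * J) i j
          = if i = i₀.succAbove j then hB.eigenvalues i else 0 := by
        intro i
        rw [conjTranspose_apply, diagonal_mul]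
        simp only [hJ, Matrix.of_apply, star_trivial]
        by_cases h : i = i₀.succAbove j <;> simp [h]
      rw [Finset.sum_congr rfl (fun i _ => hterm i),
        Finset.sum_ite_eq' Finset.univ (i₀.succAbove j) (fun i => hB.eigenvalues i)]
      simp
    have h3 : trace (Jᴴ * diagonal hB.eigenvalues * J) = ∑ j, hB.eigenvalues (i₀.succAbove j) := by
      simp only [trace, diag_apply]
      exact Finset.sum_congr rfl fun j _ => h2 j
    rw [h3, Fin.sum_univ_succAbove (fun i => hB.eigenvalues i) i₀]
    ring

lemma auxWeight {n : ℕ} (m : ℕ) (hmn : m < n) (lam c : Fin n → ℝ)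
    (hAnti : ∀ i j : Fin n, i ≤ j → lam j ≤ lam i)
    (h0 : ∀ i, 0 ≤ c i) (h1 : ∀ i, c i ≤ 1) (hsum : ∑ i, c i = (m:ℝ)) :
    ∑ i, lam i * c i ≤ ∑ i ∈ Finset.filter (fun i : Fin n => (i:ℕ) < m) Finset.univ, lam i := by
  classical
  set p : Fin n := ⟨m, hmn⟩ with hp
  set F := Finset.filter (fun i : Fin n => (i:ℕ) < m) Finset.univ with hF
  have hcard : F.card = m := by
    rw [hF]
    rw [Finset.card_eq_of_bijective (fun j hj => ⟨j, lt_trans hj hmn⟩)]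
    · intro a ha
      simp only [Finset.mem_filter] at ha
      exact ⟨a, ha.2, rfl⟩
    · intro j hj
      simp only [Finset.mem_filter]
      exact ⟨Finset.mem_univ _, hj⟩
    · intro j j' hj hj' h
      simpa using congrArg Fin.val h
  have hsplit : ∑ i, lam i * c i = ∑ i ∈ F, lam i * c i + ∑ i ∈ Fᶜ, lam i * c i := by
    rw [← Finset.sum_add_sum_compl F]
  have hb1 : ∀ i ∈ F, lam i * c i ≤ lam i - lam p * (1 - c i) := by
    intro i hi
    simp only [hF, Finset.mem_filter] at hi
    have hip : i ≤ p := le_of_lt (by exact hi.2)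
    have := hAnti i p hip
    nlinarith [h1 i, h0 i]
  have hb2 : ∀ i ∈ Fᶜ, lam i * c i ≤ lam p * c i := by
    intro i hi
    simp only [hF, Finset.mem_compl, Finset.mem_filter, Finset.mem_univ, true_and, not_lt] at hi
    have hpi : p ≤ i := hi
    have := hAnti p i hpi
    nlinarith [h0 i]
  have hsum2 : ∑ i ∈ Fᶜ, c i = (m:ℝ) - ∑ i ∈ F, c i := by
    have := Finset.sum_add_sum_compl F c
    linarith [this.symm ▸ hsum]
  have e0 : ∑ i ∈ F, ((1:ℝ) - c i) = (m:ℝ) - ∑ i ∈ F, c i := by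
    rw [Finset.sum_sub_distrib, Finset.sum_const, hcard]
    simp [nsmul_eq_mul]
  calc ∑ i, lam i * c i
      ≤ ∑ i ∈ F, (lam i - lam p * (1 - c i)) + ∑ i ∈ Fᶜ, lam p * c i := by
        rw [hsplit]
        exact add_le_add (Finset.sum_le_sum hb1) (Finset.sum_le_sum hb2)
    _ = ∑ i ∈ F, lam i - lam p * (∑ i ∈ F, (1 - c i)) + lam p * ((m:ℝ) - ∑ i ∈ F, c i) := by
        rw [Finset.sum_sub_distrib, ← Finset.mul_sum, ← Finset.mul_sum, hsum2]
    _ = ∑ i ∈ F, lam i := by rw [e0]; ring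


lemma auxCross {V : Type*} {G : SimpleGraph V} {a b : V} (p : G.Walk a b)
    (S : Set V) : a ∈ S → b ∉ S → ∃ u w, u ∈ S ∧ w ∉ S ∧ G.Adj u w := by
  induction p with
  | nil => intro ha hb; exact absurd ha hb
  | @cons u v w h q ih =>
    intro ha hb
    by_cases hv : v ∈ S
    · exact ih hv hb
    · exact ⟨u, v, ha, hv, h⟩

lemma entry3 {N M : Type*} [Fintype N] (A : Matrix N N ℝ) (X : Matrix N M ℝ)
    (c c' : M) :
    (Xᴴ * A * X) c c' = (fun v => X v c) ⬝ᵥ (A *ᵥ (fun v => X v c')) := by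
  rw [Matrix.mul_assoc, mul_apply]
  simp only [conjTranspose_apply, star_trivial, dotProduct, mulVec, mul_apply]

lemma auxQuadChi {n : ℕ} (G : SimpleGraph (Fin n)) [DecidableRel G.Adj]
    (W : Finset (Fin n)) :
    (fun v => if v ∈ W then (1:ℝ) else 0) ⬝ᵥ
      (G.lapMatrix ℝ *ᵥ (fun v => if v ∈ W then (1:ℝ) else 0))
    = ∑ v ∈ W, ∑ u ∈ Wᶜ, (if G.Adj v u then (1:ℝ) else 0) := by
  classical
  have hdot : ∀ v, (G.lapMatrix ℝ *ᵥ (fun v => if v ∈ W then (1:ℝ) else 0)) v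
      = (G.degree v : ℝ) * (if v ∈ W then (1:ℝ) else 0)
        - ∑ u ∈ W, (if G.Adj v u then (1:ℝ) else 0) := by
    intro v
    rw [SimpleGraph.lapMatrix_mulVec_apply]
    congr 1
    rw [SimpleGraph.neighborFinset_eq_filter, Finset.sum_filter]
    rw [← Finset.sum_filter_add_sum_filter_not Finset.univ (fun u => u ∈ W)]
    have h2 : ∑ u ∈ Finset.univ.filter (fun u => u ∉ W),
        (if G.Adj v u then (if u ∈ W then (1:ℝ) else 0) else 0) = 0 := by
      apply Finset.sum_eq_zero
      intro u hu
      simp only [Finset.mem_filter] at hu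
      simp [hu.2]
    rw [h2, add_zero, Finset.filter_mem_eq_inter, Finset.univ_inter]
    apply Finset.sum_congr rfl
    intro u hu
    simp [hu]
  rw [dotProduct]
  simp only [hdot]
  rw [show ∑ v, (if v ∈ W then (1:ℝ) else 0) *
      ((G.degree v : ℝ) * (if v ∈ W then (1:ℝ) else 0) - ∑ u ∈ W, (if G.Adj v u then (1:ℝ) else 0))
    = ∑ v ∈ W, ((G.degree v : ℝ) - ∑ u ∈ W, (if G.Adj v u then (1:ℝ) else 0)) by
    rw [← Finset.sum_filter_add_sum_filter_not Finset.univ (fun v => v ∈ W)]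
    have hz : ∑ v ∈ Finset.univ.filter (fun v => v ∉ W), (if v ∈ W then (1:ℝ) else 0) *
        ((G.degree v : ℝ) * (if v ∈ W then (1:ℝ) else 0) - ∑ u ∈ W, (if G.Adj v u then (1:ℝ) else 0)) = 0 := by
      apply Finset.sum_eq_zero
      intro v hv
      simp only [Finset.mem_filter] at hv
      simp [hv.2]
    rw [hz, add_zero, Finset.filter_mem_eq_inter, Finset.univ_inter]
    apply Finset.sum_congr rfl
    intro v hv
    simp [hv]]
  rw [Finset.sum_sub_distrib]
  have hdeg : ∀ v, (G.degree v : ℝ) = ∑ u ∈ W, (if G.Adj v u then (1:ℝ) else 0)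
      + ∑ u ∈ Wᶜ, (if G.Adj v u then (1:ℝ) else 0) := by
    intro v
    rw [G.degree_eq_sum_if_adj v, ← Finset.sum_add_sum_compl W]
  rw [Finset.sum_congr rfl (fun v _ => hdeg v), Finset.sum_add_distrib]
  ring

lemma auxQuadSingle {n : ℕ} (G : SimpleGraph (Fin n)) [DecidableRel G.Adj]
    (u : Fin n) :
    (fun v => if v = u then (1:ℝ) else 0) ⬝ᵥ
      (G.lapMatrix ℝ *ᵥ (fun v => if v = u then (1:ℝ) else 0))
    = (G.degree u : ℝ) := by
  classical
  have h := auxQuadChi G {u}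
  have he : ∀ v : Fin n, (v ∈ ({u} : Finset (Fin n))) = (v = u) := by
    intro v; simp
  simp only [he] at h
  rw [h, Finset.sum_singleton]
  rw [G.degree_eq_sum_if_adj u,
    ← Finset.sum_add_sum_compl ({u} : Finset (Fin n)) (fun x => if G.Adj u x then (1:ℝ) else 0),
    Finset.sum_singleton, if_neg (G.irrefl), zero_add]


/-- Grone's theorem: for a connected graph and `0 < m < n`,
`∑_{i≤m} λᵢ ≥ ∑_{i≤m} dᵢ + 1`. -/
theorem stmt6 (n : ℕ) (hn : 1 < n) (G : SimpleGraph (Fin n)) [DecidableRel G.Adj]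
    (hconn : G.Connected)
    (hL : (G.lapMatrix ℝ).IsHermitian)
    (lam : Fin n → ℝ) (σ : Equiv.Perm (Fin n))
    (hlam : lam = hL.eigenvalues ∘ σ)
    (hlamAnti : ∀ i j : Fin n, i ≤ j → lam j ≤ lam i)
    (d : Fin n → ℝ) (τ : Equiv.Perm (Fin n))
    (hd : d = (fun v => (G.degree v : ℝ)) ∘ τ)
    (hdAnti : ∀ i j : Fin n, i ≤ j → d j ≤ d i)
    (m : ℕ) (hm0 : 0 < m) (hmn : m < n) :
    (∑ i ∈ Finset.filter (fun i : Fin n => (i : ℕ) < m) Finset.univ, d i) + 1 ≤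
      ∑ i ∈ Finset.filter (fun i : Fin n => (i : ℕ) < m) Finset.univ, lam i := by
  classical
  have hmn' : m ≤ n := hmn.le
  set L : Matrix (Fin n) (Fin n) ℝ := G.lapMatrix ℝ with hLdef
  set emb : Fin m → Fin n := fun j => τ (Fin.castLE hmn' j) with hemb
  have hembInj : Function.Injective emb := fun j j' h =>
    Fin.castLE_injective hmn' (τ.injective h)
  set Sfin : Finset (Fin n) := Finset.univ.filter (fun v => ((τ.symm v : Fin n) : ℕ) < m) with hSdef
  have hSmem : ∀ v, v ∈ Sfin ↔ ((τ.symm v : Fin n) : ℕ) < m := by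
    intro v; simp [hSdef]
  have hSimage : Sfin = Finset.univ.image emb := by
    ext v
    simp only [hSdef, Finset.mem_filter, Finset.mem_univ, true_and, Finset.mem_image]
    constructor
    · intro hv
      refine ⟨⟨((τ.symm v : Fin n) : ℕ), hv⟩, ?_⟩
      show τ (Fin.castLE hmn' ⟨((τ.symm v : Fin n) : ℕ), hv⟩) = v
      have he : Fin.castLE hmn' ⟨((τ.symm v : Fin n) : ℕ), hv⟩ = τ.symm v := by
        apply Fin.ext; rfl
      rw [he, τ.apply_symm_apply]
    · rintro ⟨j, rfl⟩
      show ((τ.symm (τ (Fin.castLE hmn' j)) : Fin n) : ℕ) < m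
      rw [τ.symm_apply_apply]
      exact j.2
  -- the degree sum
  have hfil : Finset.filter (fun i : Fin n => (i : ℕ) < m) Finset.univ
      = Finset.univ.image (Fin.castLE hmn') := by
    ext i
    simp only [Finset.mem_filter, Finset.mem_univ, true_and, Finset.mem_image]
    constructor
    · intro hi; exact ⟨⟨(i : ℕ), hi⟩, Fin.ext rfl⟩
    · rintro ⟨j, rfl⟩; exact j.2
  have hsum_d : ∑ i ∈ Finset.filter (fun i : Fin n => (i : ℕ) < m) Finset.univ, d i
      = ∑ j : Fin m, (G.degree (emb j) : ℝ) := by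
    rw [hd, hfil, Finset.sum_image (fun a _ b _ h => Fin.castLE_injective hmn' h)]
    rfl
  have hsum_S : ∀ f : Fin n → ℝ, ∑ v ∈ Sfin, f v = ∑ j : Fin m, f (emb j) := by
    intro f
    rw [hSimage, Finset.sum_image (fun a _ b _ h => hembInj h)]
  -- the boundary set
  set Dd : Finset (Fin n) := Finset.univ.filter
      (fun w => w ∉ Sfin ∧ ∃ v ∈ Sfin, G.Adj v w) with hDdef
  have hDdmem : ∀ w, w ∈ Dd ↔ (w ∉ Sfin ∧ ∃ v ∈ Sfin, G.Adj v w) := by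
    intro w; simp [hDdef]
  have hSnotD : ∀ v ∈ Sfin, v ∉ Dd := by
    intro v hv hvD
    exact ((hDdmem v).mp hvD).1 hv
  have hu0 : τ (Fin.castLE hmn' ⟨0, hm0⟩) ∈ Sfin := by
    rw [hSmem, τ.symm_apply_apply]
    exact hm0
  have hw0 : τ ⟨m, hmn⟩ ∉ Sfin := by
    rw [hSmem, τ.symm_apply_apply]
    simp
  have hDdne : Dd.Nonempty := by
    obtain ⟨u, w, huS, hwS, hadj⟩ := auxCross
      ((hconn.preconnected (τ (Fin.castLE hmn' ⟨0, hm0⟩)) (τ ⟨m, hmn⟩)).some)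
      (fun v => v ∈ Sfin) hu0 hw0
    exact ⟨w, (hDdmem w).mpr ⟨hwS, u, huS, hadj⟩⟩
  set bR : ℝ := (Dd.card : ℝ) with hbRdef
  have hbR : 0 < bR := by
    simp only [hbRdef]
    exact_mod_cast Finset.card_pos.mpr hDdne
  have hsqrt : Real.sqrt bR * Real.sqrt bR = bR := Real.mul_self_sqrt hbR.le
  have hsqrtpos : 0 < Real.sqrt bR := Real.sqrt_pos.mpr hbR
  -- the remainder set
  set Rr : Finset (Fin n) := (Sfin ∪ Dd)ᶜ with hRdef
  set aaDS : ℝ := ∑ v ∈ Dd, ∑ u ∈ Sfin, (if G.Adj v u then (1:ℝ) else 0) with haaDS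
  set aaDR : ℝ := ∑ v ∈ Dd, ∑ u ∈ Rr, (if G.Adj v u then (1:ℝ) else 0) with haaDR
  have hdisjSR : Disjoint Sfin Rr := by
    rw [Finset.disjoint_left]
    intro v hv hvR
    rw [hRdef, Finset.mem_compl] at hvR
    exact hvR (Finset.mem_union_left _ hv)
  have hDdc : Ddᶜ = Sfin ∪ Rr := by
    ext v
    simp only [Finset.mem_compl, Finset.mem_union, hRdef]
    constructor
    · intro hv
      by_cases hvS : v ∈ Sfin
      · exact Or.inl hvS
      · exact Or.inr (fun h => h.elim hvS hv)
    · intro hv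
      rcases hv with hvS | hvR
      · exact hSnotD v hvS
      · exact fun h => hvR (Or.inr h)
  have haaSR : ∑ v ∈ Sfin, ∑ u ∈ Rr, (if G.Adj v u then (1:ℝ) else 0) = 0 := by
    apply Finset.sum_eq_zero
    intro v hv
    apply Finset.sum_eq_zero
    intro u hu
    rw [if_neg]
    intro hadj
    simp only [hRdef, Finset.mem_compl, Finset.mem_union] at hu
    push_neg at hu
    exact hu.2 ((hDdmem u).mpr ⟨hu.1, v, hv, hadj⟩)
  have haaDSge : bR ≤ aaDS := by
    rw [haaDS, hbRdef]
    calc (Dd.card : ℝ) = ∑ v ∈ Dd, (1:ℝ) := by rw [Finset.sum_const, nsmul_eq_mul, mul_one]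
      _ ≤ ∑ v ∈ Dd, ∑ u ∈ Sfin, (if G.Adj v u then (1:ℝ) else 0) := by
          apply Finset.sum_le_sum
          intro w hw
          obtain ⟨-, v, hvS, hadj⟩ := (hDdmem w).mp hw
          calc (1:ℝ) = if G.Adj w v then (1:ℝ) else 0 := by rw [if_pos hadj.symm]
            _ ≤ ∑ u ∈ Sfin, (if G.Adj w u then (1:ℝ) else 0) :=
              Finset.single_le_sum (f := fun u => if G.Adj w u then (1:ℝ) else 0)
                (fun u _ => by positivity) hvS
  have haaDRge : 0 ≤ aaDR := by
    rw [haaDR]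
    apply Finset.sum_nonneg
    intro v _
    apply Finset.sum_nonneg
    intro u _
    positivity
  have hinv : (Real.sqrt bR)⁻¹ * (Real.sqrt bR)⁻¹ = bR⁻¹ := by
    rw [← mul_inv, hsqrt]
  have hdisjSD : Disjoint Sfin Dd := Finset.disjoint_left.mpr hSnotD
  -- the frame
  set gv : Fin n → ℝ := fun v => if v ∈ Dd then (Real.sqrt bR)⁻¹ else 0 with hgv
  set col : Fin (m+1) → (Fin n → ℝ) :=
    Fin.snoc (fun j => fun v => if v = emb j then (1:ℝ) else 0) gv with hcol
  set NN : Matrix (Fin n) (Fin (m+1)) ℝ := Matrix.of (fun v c => col c v) with hNNdef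
  have hcolcast : ∀ j : Fin m, col (Fin.castSucc j) = fun v => if v = emb j then (1:ℝ) else 0 := by
    intro j; rw [hcol]; exact Fin.snoc_castSucc _ _ j
  have hcollast : col (Fin.last m) = gv := by rw [hcol]; exact Fin.snoc_last _ _
  have hembS : ∀ j, emb j ∈ Sfin := fun j => by
    rw [hSimage]; exact Finset.mem_image_of_mem emb (Finset.mem_univ j)
  have hentry : ∀ (A : Matrix (Fin n) (Fin n) ℝ) (c c' : Fin (m+1)), (NNᴴ * A * NN) c c'
      = (col c) ⬝ᵥ (A *ᵥ (col c')) := by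
    intro A c c'
    rw [entry3]
    rfl
  have hdotcol : ∀ c c', (NNᴴ * NN) c c' = ∑ v, col c v * col c' v := by
    intro c c'
    rw [mul_apply]
    exact Finset.sum_congr rfl fun v _ => by
      rw [conjTranspose_apply]; simp [hNNdef]
  have hdot_eg : ∀ j : Fin m, ∑ v, (if v = emb j then (1:ℝ) else 0) * gv v = 0 := by
    intro j
    rw [Finset.sum_eq_single (emb j)]
    · rw [if_pos rfl, one_mul]
      simp only [hgv]
      rw [if_neg (hSnotD _ (hembS j))]
    · intro v _ hne; rw [if_neg hne, zero_mul]
    · intro h; exact absurd (Finset.mem_univ _) h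
  have hNNorth : NNᴴ * NN = 1 := by
    ext c c'
    rw [hdotcol]
    induction c using Fin.lastCases with
    | last =>
      induction c' using Fin.lastCases with
      | last =>
        rw [hcollast, Matrix.one_apply_eq]
        have h1 : ∀ v, gv v * gv v = if v ∈ Dd then bR⁻¹ else 0 := by
          intro v
          simp only [hgv]
          by_cases hv : v ∈ Dd
          · rw [if_pos hv, if_pos hv, hinv]
          · rw [if_neg hv, if_neg hv, zero_mul]
        rw [Finset.sum_congr rfl fun v _ => h1 v, Finset.sum_ite_mem,
          Finset.univ_inter, Finset.sum_const, nsmul_eq_mul, ← hbRdef,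
          mul_inv_cancel₀ hbR.ne']
      | cast j' =>
        rw [Matrix.one_apply_ne (Fin.castSucc_lt_last j').ne']
        simp only [hcollast, hcolcast]
        calc ∑ v, gv v * (if v = emb j' then (1:ℝ) else 0)
            = ∑ v, (if v = emb j' then (1:ℝ) else 0) * gv v :=
              Finset.sum_congr rfl fun v _ => by ring
          _ = 0 := hdot_eg j'
    | cast j =>
      induction c' using Fin.lastCases with
      | last =>
        rw [Matrix.one_apply_ne (Fin.castSucc_lt_last j).ne]
        simp only [hcollast, hcolcast]
        exact hdot_eg j
      | cast j' =>
        simp only [hcolcast]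
        rw [Finset.sum_eq_single (emb j)]
        · rw [if_pos rfl, one_mul]
          by_cases h : j = j'
          · subst h; rw [if_pos rfl, Matrix.one_apply_eq]
          · rw [if_neg (fun he => h (hembInj he)), Matrix.one_apply_ne]
            simp only [ne_eq, Fin.castSucc_inj]
            exact h
        · intro v _ hne; rw [if_neg hne, zero_mul]
        · intro h; exact absurd (Finset.mem_univ _) h
  -- quadratic forms
  have hquadg : gv ⬝ᵥ (L *ᵥ gv) = bR⁻¹ * (aaDS + aaDR) := by
    have hgs : gv = (Real.sqrt bR)⁻¹ • (fun v => if v ∈ Dd then (1:ℝ) else 0) := by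
      funext v
      simp only [hgv, Pi.smul_apply, smul_eq_mul, mul_ite, mul_one, mul_zero]
    rw [hgs, smul_dotProduct, mulVec_smul, dotProduct_smul, hLdef, auxQuadChi,
      smul_eq_mul, smul_eq_mul, ← mul_assoc, hinv]
    congr 1
    calc ∑ v ∈ Dd, ∑ u ∈ Ddᶜ, (if G.Adj v u then (1:ℝ) else 0)
        = ∑ v ∈ Dd, (∑ u ∈ Sfin, (if G.Adj v u then (1:ℝ) else 0)
            + ∑ u ∈ Rr, (if G.Adj v u then (1:ℝ) else 0)) := by
          exact Finset.sum_congr rfl fun v _ => by rw [hDdc, Finset.sum_union hdisjSR]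
      _ = aaDS + aaDR := by rw [Finset.sum_add_distrib, ← haaDS, ← haaDR]
  have hquadh : (fun v => if v ∈ Sfin ∪ Dd then (1:ℝ) else 0) ⬝ᵥ
      (L *ᵥ (fun v => if v ∈ Sfin ∪ Dd then (1:ℝ) else 0)) = aaDR := by
    rw [hLdef, auxQuadChi, Finset.sum_union hdisjSD, ← hRdef, haaSR, zero_add, ← haaDR]
  -- B and its properties
  set B : Matrix (Fin (m+1)) (Fin (m+1)) ℝ := NNᴴ * L * NN with hBdef
  have hBH : B.IsHermitian := isHermitian_conjTranspose_mul_mul NN hL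
  have htraceB : trace B = (∑ j : Fin m, (G.degree (emb j) : ℝ)) + bR⁻¹ * (aaDS + aaDR) := by
    have h0 : trace B = ∑ c, (col c) ⬝ᵥ (L *ᵥ (col c)) := by
      rw [hBdef, trace]
      exact Finset.sum_congr rfl fun c _ => by rw [diag_apply, hentry]
    rw [h0, Fin.sum_univ_castSucc]
    congr 1
    · apply Finset.sum_congr rfl
      intro j _
      rw [hcolcast j, hLdef, auxQuadSingle]
    · rw [hcollast]; exact hquadg
  -- Rayleigh quotient bound for the smallest eigenvalue of B
  obtain ⟨i₀, -, hi₀⟩ := Finset.exists_min_image Finset.univ hBH.eigenvalues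
    ⟨⟨0, Nat.succ_pos m⟩, Finset.mem_univ _⟩
  set z : Fin (m+1) → ℝ := Fin.snoc (fun _ => (1:ℝ)) (Real.sqrt bR) with hz
  set Z : Matrix (Fin (m+1)) (Fin 1) ℝ := Matrix.of (fun c _ => z c) with hZdef
  have hzcast : ∀ j : Fin m, z (Fin.castSucc j) = 1 := by
    intro j; rw [hz]; exact Fin.snoc_castSucc _ _ j
  have hzlast : z (Fin.last m) = Real.sqrt bR := by rw [hz]; exact Fin.snoc_last _ _
  have hNZ : (fun v => (NN * Z) v 0) = (fun v => if v ∈ Sfin ∪ Dd then (1:ℝ) else 0) := by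
    funext v
    rw [mul_apply]
    have hterm : ∀ c, NN v c * Z c 0 = col c v * z c := fun c => rfl
    rw [Finset.sum_congr rfl fun c _ => hterm c, Fin.sum_univ_castSucc]
    have h1 : ∀ j : Fin m, col (Fin.castSucc j) v * z (Fin.castSucc j)
        = if v = emb j then (1:ℝ) else 0 := by
      intro j
      rw [hcolcast j, hzcast j, mul_one]
    have h2 : col (Fin.last m) v * z (Fin.last m) = if v ∈ Dd then (1:ℝ) else 0 := by
      rw [hcollast, hzlast]
      simp only [hgv]
      by_cases hv : v ∈ Dd
      · rw [if_pos hv, if_pos hv, inv_mul_cancel₀ hsqrtpos.ne']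
      · rw [if_neg hv, if_neg hv, zero_mul]
    rw [Finset.sum_congr rfl (fun j _ => h1 j), h2]
    have h3 : ∑ j : Fin m, (if v = emb j then (1:ℝ) else 0)
        = if v ∈ Sfin then 1 else 0 := by
      by_cases hv : v ∈ Sfin
      · rw [if_pos hv]
        obtain ⟨j₀, -, hj₀⟩ := Finset.mem_image.mp (hSimage ▸ hv : v ∈ Finset.univ.image emb)
        rw [Finset.sum_eq_single j₀]
        · rw [if_pos hj₀.symm]
        · intro j _ hne
          rw [if_neg]
          intro he
          exact hne (hembInj (by rw [← he, hj₀]))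
        · intro h; exact absurd (Finset.mem_univ _) h
      · rw [if_neg hv]
        apply Finset.sum_eq_zero
        intro j _
        rw [if_neg]
        intro he
        exact hv (he ▸ hembS j)
    rw [h3]
    by_cases hvS : v ∈ Sfin
    · rw [if_pos hvS, if_neg (hSnotD v hvS), if_pos (Finset.mem_union_left _ hvS), add_zero]
    · by_cases hvD : v ∈ Dd
      · rw [if_neg hvS, if_pos hvD, if_pos (Finset.mem_union_right _ hvD), zero_add]
      · rw [if_neg hvS, if_neg hvD,
          if_neg (fun h => (Finset.mem_union.mp h).elim hvS hvD), add_zero]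
  have hzBz : trace (Zᴴ * B * Z) = aaDR := by
    have he : Zᴴ * B * Z = (NN * Z)ᴴ * L * (NN * Z) := by
      rw [hBdef, conjTranspose_mul]
      simp only [Matrix.mul_assoc]
    rw [he, trace_fin_one, entry3, hNZ]
    exact hquadh
  have hZZ : trace (Zᴴ * Z) = (m:ℝ) + bR := by
    rw [trace_fin_one, mul_apply]
    have hterm : ∀ c, (Zᴴ) 0 c * Z c 0 = z c * z c := by
      intro c
      rw [conjTranspose_apply]
      simp [hZdef]
    rw [Finset.sum_congr rfl fun c _ => hterm c, Fin.sum_univ_castSucc]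
    have h1 : ∀ j : Fin m, z (Fin.castSucc j) * z (Fin.castSucc j) = 1 := by
      intro j; rw [hzcast j, mul_one]
    rw [Finset.sum_congr rfl fun j _ => h1 j, hzlast, hsqrt, Finset.sum_const,
      Finset.card_univ, Fintype.card_fin, nsmul_eq_mul, mul_one]
  have hmBRpos : (0:ℝ) < (m:ℝ) + bR := by positivity
  have hmin : hBH.eigenvalues i₀ * ((m:ℝ) + bR) ≤ aaDR := by
    obtain ⟨c', hc0, hcsum, hctr, -⟩ := auxSpecSum B hBH Z
    rw [hZZ] at hcsum
    rw [hzBz] at hctr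
    calc hBH.eigenvalues i₀ * ((m:ℝ) + bR) = hBH.eigenvalues i₀ * ∑ i, c' i := by rw [hcsum]
      _ = ∑ i, hBH.eigenvalues i₀ * c' i := by rw [Finset.mul_sum]
      _ ≤ ∑ i, hBH.eigenvalues i * c' i := by
          apply Finset.sum_le_sum
          intro i _
          exact mul_le_mul_of_nonneg_right (hi₀ i (Finset.mem_univ i)) (hc0 i)
      _ = aaDR := hctr.symm
  -- the test frame X = NN * Y
  obtain ⟨Y, hY1, hY2⟩ := auxDrop B hBH i₀
  have hXorth : (NN * Y)ᴴ * (NN * Y) = 1 := by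
    rw [conjTranspose_mul]
    calc Yᴴ * NNᴴ * (NN * Y) = Yᴴ * ((NNᴴ * NN) * Y) := by simp only [Matrix.mul_assoc]
      _ = 1 := by rw [hNNorth, Matrix.one_mul, hY1]
  have htrX : trace ((NN * Y)ᴴ * L * (NN * Y)) = trace B - hBH.eigenvalues i₀ := by
    have he : (NN * Y)ᴴ * L * (NN * Y) = Yᴴ * B * Y := by
      rw [hBdef, conjTranspose_mul]
      simp only [Matrix.mul_assoc]
    rw [he, hY2, ← auxTraceEig B hBH]
  -- Ky Fan bound
  obtain ⟨c, hc0, hcsum, hctr, hcle⟩ := auxSpecSum L hL (NN * Y)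
  have hcsum' : ∑ i, c i = (m:ℝ) := by
    rw [hcsum, hXorth, trace_one, Fintype.card_fin]
  have hKF : trace ((NN * Y)ᴴ * L * (NN * Y))
      ≤ ∑ i ∈ Finset.filter (fun i : Fin n => (i : ℕ) < m) Finset.univ, lam i := by
    rw [hctr]
    have hre : ∑ i, hL.eigenvalues i * c i = ∑ i, lam i * c (σ i) := by
      rw [← Equiv.sum_comp σ (fun i => hL.eigenvalues i * c i)]
      exact Finset.sum_congr rfl fun i _ => by rw [hlam]; rfl
    rw [hre]
    exact auxWeight m hmn lam (fun i => c (σ i)) hlamAnti (fun i => hc0 _)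
      (fun i => hcle hXorth _) (by rw [Equiv.sum_comp σ c]; exact hcsum')
  -- final arithmetic
  have hm1 : (1:ℝ) ≤ (m:ℝ) := by exact_mod_cast hm0
  have h1 : hBH.eigenvalues i₀ ≤ aaDR / ((m:ℝ) + bR) :=
    (le_div_iff₀ hmBRpos).mpr hmin
  have e1 : (1:ℝ) ≤ aaDS / bR := (one_le_div hbR).mpr haaDSge
  have e2 : aaDR / ((m:ℝ) + bR) ≤ aaDR / bR := by
    apply div_le_div_of_nonneg_left haaDRge hbR
    linarith
  have e3 : bR⁻¹ * (aaDS + aaDR) = aaDS / bR + aaDR / bR := by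
    rw [← add_div, div_eq_inv_mul]
  have hfinal : (∑ j : Fin m, (G.degree (emb j) : ℝ)) + 1 ≤ trace B - hBH.eigenvalues i₀ := by
    rw [htraceB]
    have : (1:ℝ) + aaDR / ((m:ℝ) + bR) ≤ bR⁻¹ * (aaDS + aaDR) := by
      rw [e3]; linarith
    linarith
  calc (∑ i ∈ Finset.filter (fun i : Fin n => (i : ℕ) < m) Finset.univ, d i) + 1
      = (∑ j : Fin m, (G.degree (emb j) : ℝ)) + 1 := by rw [hsum_d]
    _ ≤ trace B - hBH.eigenvalues i₀ := hfinal
    _ = trace ((NN * Y)ᴴ * L * (NN * Y)) := htrX.symm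
    _ ≤ ∑ i ∈ Finset.filter (fun i : Fin n => (i : ℕ) < m) Finset.univ, lam i := hKF
end

section
/- Let G be a connected finite simple graph on n vertices with Laplacian eigenvalues λ₁ ≥ ⋯ ≥ λₙ = 0. For any vertex subset U with |U| = m, 0 < m < n, we have λ₁ + ⋯ + λₘ ≥ (∑_{u∈U} d_u) + |∂(U, Ū)|/|∂U|, where ∂U is the set of vertices in Ū with at least one neighbor in U, and ∂(U, Ū) is the set of edges between U and Ū. -/
open Finset Matrix

/-- The vertex boundary of `U`: vertices outside `U` with a neighbor in `U`. -/
def vertexBoundary {n : ℕ} (G : SimpleGraph (Fin n)) [DecidableRel G.Adj]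
    (U : Finset (Fin n)) : Finset (Fin n) :=
  Finset.univ.filter (fun v => v ∉ U ∧ ∃ u ∈ U, G.Adj u v)

/-- Indicator vector of a vertex subset. -/
def chi {n : ℕ} (S : Finset (Fin n)) : Fin n → ℝ := fun v => if v ∈ S then 1 else 0

section dotlemmas
variable {n : ℕ}

lemma dot_chi (x : Fin n → ℝ) (S : Finset (Fin n)) :
    x ⬝ᵥ chi S = ∑ v ∈ S, x v := by
  simp [dotProduct, chi, mul_ite, Finset.sum_ite_mem]

lemma chi_dot_self (S : Finset (Fin n)) :
    chi S ⬝ᵥ chi S = (S.card : ℝ) := by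
  rw [dot_chi]; simp [chi]

lemma single_dot_lap (G : SimpleGraph (Fin n)) [DecidableRel G.Adj] (v : Fin n) :
    Pi.single v (1:ℝ) ⬝ᵥ (G.lapMatrix ℝ *ᵥ Pi.single v (1:ℝ)) = (G.degree v : ℝ) := by
  rw [single_dotProduct, one_mul, Matrix.mulVec_single]
  simp [SimpleGraph.lapMatrix, SimpleGraph.degMatrix]

end dotlemmas

section spec
variable {n : ℕ} {A : Matrix (Fin n) (Fin n) ℝ} (hA : A.IsHermitian)

lemma basis_norm (j : Fin n) :
    (hA.eigenvectorBasis j : Fin n → ℝ) ⬝ᵥ (hA.eigenvectorBasis j : Fin n → ℝ) = 1 := by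
  have h := hA.eigenvectorBasis.orthonormal.1 j
  have h2 : (inner ℝ (hA.eigenvectorBasis j) (hA.eigenvectorBasis j) : ℝ) = 1 := by
    rw [real_inner_self_eq_norm_sq, h]; norm_num
  rw [← h2]
  simp only [PiLp.inner_apply, RCLike.inner_apply, conj_trivial, dotProduct]

lemma dual_ortho (i k : Fin n) :
    ∑ j, hA.eigenvectorBasis j i * hA.eigenvectorBasis j k = if i = k then (1:ℝ) else 0 := by
  have h := Matrix.mem_unitaryGroup_iff.mp (hA.eigenvectorUnitary).2
  have h2 := congrFun (congrFun h i) k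
  simpa [Matrix.mul_apply, Matrix.one_apply] using h2

lemma reconstruct (x : Fin n → ℝ) (i : Fin n) :
    ∑ j, ((hA.eigenvectorBasis j : Fin n → ℝ) ⬝ᵥ x) * hA.eigenvectorBasis j i = x i := by
  simp_rw [dotProduct, Finset.sum_mul, mul_assoc]
  rw [Finset.sum_comm]
  have : ∀ k, ∑ j, hA.eigenvectorBasis j k * (x k * hA.eigenvectorBasis j i)
      = x k * (if k = i then 1 else 0) := by
    intro k
    rw [← dual_ortho hA k i, Finset.mul_sum]
    congr 1; ext j; ring
  simp_rw [this]
  simp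

lemma parseval (x : Fin n → ℝ) :
    ∑ j, ((hA.eigenvectorBasis j : Fin n → ℝ) ⬝ᵥ x)^2 = x ⬝ᵥ x := by
  have : ∀ j, ((hA.eigenvectorBasis j : Fin n → ℝ) ⬝ᵥ x)^2
      = ∑ i, x i * (((hA.eigenvectorBasis j : Fin n → ℝ) ⬝ᵥ x) * hA.eigenvectorBasis j i) := by
    intro j
    rw [sq]
    nth_rewrite 2 [dotProduct]
    rw [Finset.mul_sum]
    congr 1; ext i; ring
  simp_rw [this]
  rw [Finset.sum_comm]
  simp_rw [← Finset.mul_sum, reconstruct hA]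
  rfl

lemma quad_expand (x : Fin n → ℝ) :
    ∑ j, hA.eigenvalues j * ((hA.eigenvectorBasis j : Fin n → ℝ) ⬝ᵥ x)^2
      = x ⬝ᵥ (A *ᵥ x) := by
  have hsymm : Aᵀ = A := by
    rw [← Matrix.conjTranspose_eq_transpose_of_trivial]; exact hA
  have key : ∀ j, ((hA.eigenvectorBasis j : Fin n → ℝ)) ⬝ᵥ (A *ᵥ x)
      = hA.eigenvalues j * ((hA.eigenvectorBasis j : Fin n → ℝ) ⬝ᵥ x) := by
    intro j
    rw [Matrix.dotProduct_mulVec]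
    have h1 : (hA.eigenvectorBasis j : Fin n → ℝ) ᵥ* A
        = hA.eigenvalues j • (hA.eigenvectorBasis j : Fin n → ℝ) := by
      rw [← Matrix.mulVec_transpose, hsymm]
      exact hA.mulVec_eigenvectorBasis j
    rw [h1, smul_dotProduct]
    rfl
  have hAx : ∀ i, (A *ᵥ x) i
      = ∑ j, hA.eigenvalues j * ((hA.eigenvectorBasis j : Fin n → ℝ) ⬝ᵥ x)
          * hA.eigenvectorBasis j i := by
    intro i
    rw [← reconstruct hA (A *ᵥ x) i]
    congr 1; ext j; rw [key j]
  have hdot : x ⬝ᵥ (A *ᵥ x) = ∑ i, x i * (A *ᵥ x) i := rfl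
  rw [hdot]
  simp_rw [hAx, Finset.mul_sum]
  rw [Finset.sum_comm]
  congr 1; ext j
  rw [sq, dotProduct, Finset.mul_sum, Finset.mul_sum]
  congr 1; ext i; ring

end spec

section comb
variable {n : ℕ} (G : SimpleGraph (Fin n)) [DecidableRel G.Adj] (U : Finset (Fin n))

lemma edgeBoundary_cast (S : Finset (Fin n)) :
    (edgeBoundary G S : ℝ) = ∑ i, ∑ j, (if i ∈ S ∧ j ∉ S ∧ G.Adj i j then (1:ℝ) else 0) := by
  rw [edgeBoundary, Finset.card_filter]
  push_cast
  rw [Fintype.sum_prod_type]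

lemma quad_chi (S : Finset (Fin n)) :
    chi S ⬝ᵥ (G.lapMatrix ℝ *ᵥ chi S) = (edgeBoundary G S : ℝ) := by
  rw [← Matrix.toLinearMap₂'_apply', SimpleGraph.lapMatrix_toLinearMap₂', edgeBoundary_cast]
  have key : ∀ i j : Fin n, (if G.Adj i j then (chi S i - chi S j)^2 else 0) =
      (if i ∈ S ∧ j ∉ S ∧ G.Adj i j then (1:ℝ) else 0)
      + (if j ∈ S ∧ i ∉ S ∧ G.Adj i j then (1:ℝ) else 0) := by
    intro i j
    by_cases h : G.Adj i j <;> by_cases hi : i ∈ S <;> by_cases hj : j ∈ S <;>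
      simp [chi, h, hi, hj]
  simp_rw [key, Finset.sum_add_distrib]
  have swap : ∑ i : Fin n, ∑ j : Fin n, (if j ∈ S ∧ i ∉ S ∧ G.Adj i j then (1:ℝ) else 0)
      = ∑ i : Fin n, ∑ j : Fin n, (if i ∈ S ∧ j ∉ S ∧ G.Adj i j then (1:ℝ) else 0) := by
    rw [Finset.sum_comm]
    simp_rw [G.adj_comm]
  rw [swap]
  ring

lemma mem_vb {v : Fin n} : v ∈ vertexBoundary G U ↔ v ∉ U ∧ ∃ u ∈ U, G.Adj u v := by
  simp [vertexBoundary]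

lemma vb_disjoint : Disjoint U (vertexBoundary G U) := by
  rw [Finset.disjoint_right]
  intro v hv
  exact ((mem_vb G U).mp hv).1

lemma eb_split :
    edgeBoundary G (vertexBoundary G U)
      = edgeBoundary G U + edgeBoundary G (U ∪ vertexBoundary G U) := by
  set W := vertexBoundary G U with hW
  set P := (Finset.univ : Finset (Fin n × Fin n)).filter
    (fun p => p.1 ∈ W ∧ p.2 ∉ W ∧ G.Adj p.1 p.2) with hP
  have hsplit := Finset.card_filter_add_card_filter_not
    (s := P) (p := fun p : Fin n × Fin n => p.2 ∈ U)
  have h1 : (P.filter (fun p : Fin n × Fin n => p.2 ∈ U)).card = edgeBoundary G U := by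
    rw [edgeBoundary]
    refine Finset.card_nbij' Prod.swap Prod.swap ?_ ?_ ?_ ?_
    · intro p hp
      simp only [hP, Finset.mem_coe, Finset.mem_filter, Finset.mem_univ, true_and] at hp ⊢
      obtain ⟨⟨h1, h2, h3⟩, h4⟩ := hp
      exact ⟨h4, ((mem_vb G U).mp h1).1, h3.symm⟩
    · intro p hp
      simp only [hP, Finset.mem_coe, Finset.mem_filter, Finset.mem_univ, true_and] at hp ⊢
      obtain ⟨h1, h2, h3⟩ := hp
      refine ⟨⟨(mem_vb G U).mpr ⟨h2, ⟨p.1, h1, h3⟩⟩, ?_, h3.symm⟩, h1⟩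
      intro hc
      exact ((mem_vb G U).mp hc).1 h1
    · intro p _; exact Prod.swap_swap p
    · intro p _; exact Prod.swap_swap p
  have h2 : P.filter (fun p : Fin n × Fin n => p.2 ∉ U)
      = (Finset.univ : Finset (Fin n × Fin n)).filter
        (fun p => p.1 ∈ U ∪ W ∧ p.2 ∉ U ∪ W ∧ G.Adj p.1 p.2) := by
    ext p
    simp only [hP, Finset.mem_filter, Finset.mem_univ, true_and, Finset.mem_union]
    constructor
    · rintro ⟨⟨h1, h2, h3⟩, h4⟩
      exact ⟨Or.inr h1, fun hc => hc.elim h4 h2, h3⟩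
    · rintro ⟨h1, h2, h3⟩
      push_neg at h2
      obtain ⟨h2u, h2w⟩ := h2
      have hp1 : p.1 ∈ W := by
        rcases h1 with h1 | h1
        · exact absurd ((mem_vb G U).mpr ⟨h2u, ⟨p.1, h1, h3⟩⟩) h2w
        · exact h1
      exact ⟨⟨hp1, h2w, h3⟩, h2u⟩
  have hcard : edgeBoundary G W = P.card := rfl
  rw [hcard, ← hsplit, h1, h2]
  rfl

lemma walk_cross {V : Type*} {G : SimpleGraph V} {U : Finset V} [DecidableEq V] :
    ∀ {a b : V} (p : G.Walk a b), a ∈ U → b ∉ U →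
      ∃ x y, x ∈ U ∧ y ∉ U ∧ G.Adj x y := by
  intro a b p
  induction p with
  | nil => intro h1 h2; exact absurd h1 h2
  | @cons u v w h q ih =>
    intro h1 h2
    by_cases hc : v ∈ U
    · exact ih hc h2
    · exact ⟨u, v, h1, hc, h⟩

lemma vb_nonempty (hconn : G.Connected) (hne : U.Nonempty) (hne2 : ∃ v, v ∉ U) :
    (vertexBoundary G U).Nonempty := by
  obtain ⟨a, ha⟩ := hne
  obtain ⟨b, hb⟩ := hne2
  obtain ⟨p⟩ := hconn.preconnected a b
  obtain ⟨x, y, hx, hy, hxy⟩ := walk_cross p ha hb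
  exact ⟨y, (mem_vb G U).mpr ⟨hy, ⟨x, hx, hxy⟩⟩⟩

end comb

lemma card_filter_lt' {n m : ℕ} (hmn : m < n) :
    (Finset.filter (fun i : Fin n => (i : ℕ) < m) Finset.univ).card = m := by
  have h : Finset.filter (fun i : Fin n => (i : ℕ) < m) Finset.univ = Finset.Iio ⟨m, hmn⟩ := by
    ext i; simp [Fin.lt_def]
  rw [h, Fin.card_Iio]

lemma sorting {n m : ℕ} (hmn : m < n) (lam : Fin n → ℝ)
    (hAnti : ∀ i j : Fin n, i ≤ j → lam j ≤ lam i) (d : Fin n → ℝ)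
    (hd0 : ∀ j, 0 ≤ d j) (hd1 : ∀ j, d j ≤ 1) (hsum : ∑ j, d j = m) :
    ∑ j, lam j * d j ≤ ∑ i ∈ Finset.filter (fun i : Fin n => (i : ℕ) < m) Finset.univ, lam i := by
  set θ := lam ⟨m, hmn⟩ with hθ
  set F := Finset.filter (fun i : Fin n => (i : ℕ) < m) Finset.univ with hF
  have hcard : F.card = m := card_filter_lt' hmn
  have key : ∑ j, (lam j - θ) * d j ≤ ∑ i ∈ F, (lam i - θ) := by
    rw [← Finset.sum_filter_add_sum_filter_not Finset.univ
      (fun i : Fin n => (i : ℕ) < m) (fun j => (lam j - θ) * d j)]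
    have h1 : ∑ j ∈ F, (lam j - θ) * d j ≤ ∑ j ∈ F, (lam j - θ) := by
      apply Finset.sum_le_sum
      intro j hj
      have hjm : (j : ℕ) < m := by simpa [hF] using hj
      have hle : j ≤ (⟨m, hmn⟩ : Fin n) := by
        rw [Fin.le_def]; exact hjm.le
      have h2 : θ ≤ lam j := hAnti j ⟨m, hmn⟩ hle
      nlinarith [hd0 j, hd1 j]
    have h2 : ∑ j ∈ Finset.filter (fun i : Fin n => ¬ (i : ℕ) < m) Finset.univ,
        (lam j - θ) * d j ≤ 0 := by
      apply Finset.sum_nonpos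
      intro j hj
      have hjm : ¬ (j : ℕ) < m := by simpa using hj
      have hle : (⟨m, hmn⟩ : Fin n) ≤ j := by
        exact Nat.le_of_not_lt hjm
      have h3 : lam j ≤ θ := hAnti ⟨m, hmn⟩ j hle
      have := hd0 j
      nlinarith
    linarith
  have expand : ∑ j, lam j * d j = ∑ j, (lam j - θ) * d j + θ * m := by
    simp_rw [sub_mul, Finset.sum_sub_distrib, ← Finset.mul_sum, hsum]
    ring
  have expand2 : ∑ i ∈ F, lam i = ∑ i ∈ F, (lam i - θ) + θ * m := by
    rw [Finset.sum_sub_distrib, Finset.sum_const, hcard]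
    simp
    ring
  linarith

set_option maxHeartbeats 1000000 in
/-- `∑_{i≤m} λᵢ ≥ ∑_{u∈U} d_u + |∂(U,Ū)|/|∂U|`. -/
theorem stmt7 (n : ℕ) (G : SimpleGraph (Fin n)) [DecidableRel G.Adj]
    (hconn : G.Connected)
    (hL : (G.lapMatrix ℝ).IsHermitian)
    (lam : Fin n → ℝ) (σ : Equiv.Perm (Fin n))
    (hlam : lam = hL.eigenvalues ∘ σ)
    (hlamAnti : ∀ i j : Fin n, i ≤ j → lam j ≤ lam i)
    (U : Finset (Fin n)) (m : ℕ) (hU : U.card = m) (hm0 : 0 < m) (hmn : m < n) :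
    (∑ u ∈ U, (G.degree u : ℝ)) +
      (edgeBoundary G U : ℝ) / ((vertexBoundary G U).card : ℝ) ≤
      ∑ i ∈ Finset.filter (fun i : Fin n => (i : ℕ) < m) Finset.univ, lam i := by
  classical
  set u : Fin n → Fin n → ℝ := fun j => (hL.eigenvectorBasis j : Fin n → ℝ) with hu
  set W := vertexBoundary G U with hWdef
  set w : ℕ := W.card with hwdef
  -- basic set facts
  have hUne : U.Nonempty := Finset.card_pos.mp (hU ▸ hm0)
  have hVne : ∃ v, v ∉ U := by
    by_contra h
    push_neg at h
    have hun : U = Finset.univ := Finset.eq_univ_iff_forall.mpr h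
    rw [hun, Finset.card_univ, Fintype.card_fin] at hU
    omega
  have hWne : W.Nonempty := vb_nonempty G U hconn hUne hVne
  have hwpos : 0 < w := Finset.card_pos.mpr hWne
  have hdisj : Disjoint U W := vb_disjoint G U
  have hUWcard : (U ∪ W).card = m + w := by
    rw [Finset.card_union_of_disjoint hdisj, hU]
  have hwR : (0:ℝ) < (w : ℝ) := by exact_mod_cast hwpos
  have hmR : (0:ℝ) < (m : ℝ) := by exact_mod_cast hm0
  have hmwR : (0:ℝ) < (m : ℝ) + (w : ℝ) := by linarith
  -- coefficient functions
  set sU : Fin n → ℝ := fun j => ∑ v ∈ U, (u j v)^2 with hsUdef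
  set bU : Fin n → ℝ := fun j => ∑ v ∈ U, u j v with hbUdef
  set bW : Fin n → ℝ := fun j => ∑ v ∈ W, u j v with hbWdef
  set c : Fin n → ℝ := fun j =>
    sU j + (bW j)^2 / (w : ℝ) - (bU j + bW j)^2 / ((m : ℝ) + (w : ℝ)) with hcdef
  -- dot product identities
  have hdotU : ∀ j, u j ⬝ᵥ chi U = bU j := fun j => dot_chi (u j) U
  have hdotW : ∀ j, u j ⬝ᵥ chi W = bW j := fun j => dot_chi (u j) W
  have hdotY : ∀ j, u j ⬝ᵥ chi (U ∪ W) = bU j + bW j := by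
    intro j
    rw [dot_chi, Finset.sum_union hdisj]
  have hdotS : ∀ j v, u j ⬝ᵥ Pi.single v (1:ℝ) = u j v := by
    intro j v
    rw [dotProduct_single, mul_one]
  -- per-vertex Parseval
  have hPv : ∀ v : Fin n, ∑ j, (u j v)^2 = 1 := by
    intro v
    have h := parseval hL (Pi.single v (1:ℝ))
    change ∑ j, (u j ⬝ᵥ Pi.single v (1:ℝ))^2 = _ at h
    simp_rw [hdotS] at h
    rw [h, single_dotProduct, one_mul, Pi.single_eq_same]
  -- sum of coefficients
  have hsum_sU : ∑ j, sU j = (m : ℝ) := by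
    simp_rw [hsUdef]
    rw [Finset.sum_comm]
    simp_rw [hPv]
    simp [hU]
  have hsum_bW : ∑ j, (bW j)^2 = (w : ℝ) := by
    have h := parseval hL (chi W)
    change ∑ j, (u j ⬝ᵥ chi W)^2 = _ at h
    simp_rw [hdotW] at h
    rw [h, chi_dot_self]
  have hsum_bY : ∑ j, (bU j + bW j)^2 = (m : ℝ) + (w : ℝ) := by
    have h := parseval hL (chi (U ∪ W))
    change ∑ j, (u j ⬝ᵥ chi (U ∪ W))^2 = _ at h
    simp_rw [hdotY] at h
    rw [h, chi_dot_self, hUWcard]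
    push_cast
    ring
  have hsum_c : ∑ j, c j = (m : ℝ) := by
    simp_rw [hcdef]
    rw [Finset.sum_sub_distrib, Finset.sum_add_distrib, ← Finset.sum_div, ← Finset.sum_div,
      hsum_sU, hsum_bW, hsum_bY]
    field_simp
    ring
  -- Cauchy-Schwarz facts
  have hCS_U : ∀ j, (bU j)^2 ≤ (m : ℝ) * sU j := by
    intro j
    have h := sq_sum_le_card_mul_sum_sq (s := U) (f := fun v => u j v)
    rw [hU] at h
    exact_mod_cast h
  have hCS_W : ∀ j, (bW j)^2 ≤ (w : ℝ) * ∑ v ∈ W, (u j v)^2 := by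
    intro j
    have h := sq_sum_le_card_mul_sum_sq (s := W) (f := fun v => u j v)
    exact_mod_cast h
  -- 0 ≤ c j
  have hc0 : ∀ j, 0 ≤ c j := by
    intro j
    rw [hcdef]
    have h1 : (bU j + bW j)^2 / ((m : ℝ) + (w : ℝ)) ≤ sU j + (bW j)^2 / (w : ℝ) := by
      rw [div_le_iff₀ hmwR]
      have e : sU j + (bW j)^2 / (w : ℝ) = (sU j * (w : ℝ) + (bW j)^2) / (w : ℝ) := by
        field_simp
      rw [e, div_mul_eq_mul_div, le_div_iff₀ hwR]
      nlinarith [mul_le_mul_of_nonneg_right (hCS_U j) (mul_nonneg hmR.le hwR.le),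
        mul_le_mul_of_nonneg_right (hCS_U j) (sq_nonneg (w : ℝ)),
        sq_nonneg ((w : ℝ) * bU j - (m : ℝ) * bW j), hmR, hwR]
    simp only [sub_nonneg]
    linarith
  -- c j ≤ 1
  have hc1 : ∀ j, c j ≤ 1 := by
    intro j
    rw [hcdef]
    have h1 : sU j + (bW j)^2 / (w : ℝ) ≤ 1 := by
      have hsW : (bW j)^2 / (w : ℝ) ≤ ∑ v ∈ W, (u j v)^2 := by
        rw [div_le_iff₀ hwR]
        calc (bW j)^2 ≤ (w : ℝ) * ∑ v ∈ W, (u j v)^2 := hCS_W j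
          _ = (∑ v ∈ W, (u j v)^2) * (w : ℝ) := by ring
      have hsub : sU j + ∑ v ∈ W, (u j v)^2 ≤ 1 := by
        have htot : ∑ v, (u j v)^2 = 1 := by
          have hb := basis_norm hL j
          rw [dotProduct] at hb
          simpa [sq] using hb
        have he : sU j + ∑ v ∈ W, (u j v)^2 = ∑ v ∈ U ∪ W, (u j v)^2 :=
          (Finset.sum_union hdisj).symm
        rw [he, ← htot]
        exact Finset.sum_le_sum_of_subset_of_nonneg (Finset.subset_univ _)
          (fun v _ _ => sq_nonneg _)
      linarith
    have h2 : 0 ≤ (bU j + bW j)^2 / ((m : ℝ) + (w : ℝ)) := by positivity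
    linarith
  -- quadratic form values
  have hQU : ∑ j, hL.eigenvalues j * sU j = ∑ v ∈ U, (G.degree v : ℝ) := by
    simp_rw [hsUdef, Finset.mul_sum]
    rw [Finset.sum_comm]
    refine Finset.sum_congr rfl fun v _ => ?_
    have h := quad_expand hL (Pi.single v (1:ℝ))
    change ∑ j, hL.eigenvalues j * (u j ⬝ᵥ Pi.single v (1:ℝ))^2 = _ at h
    simp_rw [hdotS] at h
    rw [h, single_dot_lap]
  have hQW : ∑ j, hL.eigenvalues j * (bW j)^2 = (edgeBoundary G W : ℝ) := by
    have h := quad_expand hL (chi W)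
    change ∑ j, hL.eigenvalues j * (u j ⬝ᵥ chi W)^2 = _ at h
    simp_rw [hdotW] at h
    rw [h, quad_chi]
  have hQY : ∑ j, hL.eigenvalues j * (bU j + bW j)^2 = (edgeBoundary G (U ∪ W) : ℝ) := by
    have h := quad_expand hL (chi (U ∪ W))
    change ∑ j, hL.eigenvalues j * (u j ⬝ᵥ chi (U ∪ W))^2 = _ at h
    simp_rw [hdotY] at h
    rw [h, quad_chi]
  -- main identity
  have hmain : ∑ j, hL.eigenvalues j * c j
      = ∑ v ∈ U, (G.degree v : ℝ) + (edgeBoundary G W : ℝ) / (w : ℝ)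
        - (edgeBoundary G (U ∪ W) : ℝ) / ((m : ℝ) + (w : ℝ)) := by
    simp_rw [hcdef, mul_sub, mul_add, ← mul_div_assoc]
    rw [Finset.sum_sub_distrib, Finset.sum_add_distrib, ← Finset.sum_div, ← Finset.sum_div,
      hQU, hQW, hQY]
  -- permutation
  have hperm : ∑ j, hL.eigenvalues j * c j = ∑ j, lam j * c (σ j) := by
    rw [← Equiv.sum_comp σ (fun j => hL.eigenvalues j * c j)]
    refine Finset.sum_congr rfl fun j _ => ?_
    rw [hlam]
    rfl
  have hsum_cσ : ∑ j, c (σ j) = (m : ℝ) := by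
    rw [Equiv.sum_comp σ c, hsum_c]
  have hsort := sorting hmn lam hlamAnti (fun j => c (σ j))
    (fun j => hc0 (σ j)) (fun j => hc1 (σ j)) hsum_cσ
  -- combinatorial split
  have hsplit : (edgeBoundary G W : ℝ)
      = (edgeBoundary G U : ℝ) + (edgeBoundary G (U ∪ W) : ℝ) := by
    rw [hWdef]
    exact_mod_cast eb_split G U
  -- final chain
  have hF0 : (0:ℝ) ≤ (edgeBoundary G (U ∪ W) : ℝ) := by positivity
  have hdiv : (edgeBoundary G (U ∪ W) : ℝ) / ((m : ℝ) + (w : ℝ))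
      ≤ (edgeBoundary G (U ∪ W) : ℝ) / (w : ℝ) := by
    exact div_le_div_of_nonneg_left hF0 hwR (by linarith)
  have hfinal : ∑ v ∈ U, (G.degree v : ℝ) + (edgeBoundary G U : ℝ) / (w : ℝ)
      ≤ ∑ j, hL.eigenvalues j * c j := by
    rw [hmain, hsplit, add_div]
    linarith
  calc ∑ v ∈ U, (G.degree v : ℝ) + (edgeBoundary G U : ℝ) / ((vertexBoundary G U).card : ℝ)
      = ∑ v ∈ U, (G.degree v : ℝ) + (edgeBoundary G U : ℝ) / (w : ℝ) := by rw [hwdef, hWdef]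
    _ ≤ ∑ j, hL.eigenvalues j * c j := hfinal
    _ = ∑ j, lam j * c (σ j) := hperm
    _ ≤ ∑ i ∈ Finset.filter (fun i : Fin n => (i : ℕ) < m) Finset.univ, lam i := hsort
end

section
/- Let G be a finite simple graph with Laplacian eigenvalues λ₁ ≥ ⋯ ≥ λₙ, and let U ⊆ V with |U| = m. Let h be the number of connected components of the induced subgraph G[U] that are not connected components of G. Then λ₁ + ⋯ + λₘ ≥ (∑_{u∈U} d_u) + h. -/
open Finset Matrix

namespace BH

/-! ### Generic helper lemmas -/

section Helpers
variable {α : Type*} [Fintype α] [DecidableEq α]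

lemma diag_nonneg {M : Matrix α α ℝ} (hM : M.PosSemidef) (i : α) : 0 ≤ M i i := by
  have := hM.dotProduct_mulVec_nonneg (Pi.single i 1)
  simpa [dotProduct, Pi.single_apply] using this

open scoped MatrixOrder in
lemma trace_mul_nonneg {M S : Matrix α α ℝ} (hM : M.PosSemidef) (hS : S.PosSemidef) :
    0 ≤ (M * S).trace := by
  obtain ⟨C, hC⟩ := CStarAlgebra.nonneg_iff_eq_star_mul_self.mp hS.nonneg
  have h1 : (M * S).trace = (C * M * Cᴴ).trace := by
    rw [hC, Matrix.star_eq_conjTranspose, ← Matrix.mul_assoc, Matrix.trace_mul_cycle]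
  rw [h1]
  have h2 : (C * M * Cᴴ).PosSemidef := hM.mul_mul_conjTranspose_same C
  exact Finset.sum_nonneg fun i _ => diag_nonneg h2 i

lemma psd_of_symm_idem {P : Matrix α α ℝ} (hsymm : Pᵀ = P) (hidem : P * P = P) :
    P.PosSemidef := by
  have := Matrix.posSemidef_conjTranspose_mul_self P
  rwa [Matrix.conjTranspose_eq_transpose_of_trivial, hsymm, hidem] at this

lemma div_le_div_of_nonneg_right' {a b c : ℝ} (h : a ≤ b) (hc : 0 < c) : a / c ≤ b / c := by
  gcongr

lemma threshold {n m : ℕ} (hm : m ≤ n) (lam p : Fin n → ℝ)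
    (hA : ∀ i j : Fin n, i ≤ j → lam j ≤ lam i)
    (hp0 : ∀ j, 0 ≤ p j) (hp1 : ∀ j, p j ≤ 1) (hsum : ∑ j, p j = m) :
    ∑ j, lam j * p j ≤ ∑ j ∈ Finset.filter (fun j : Fin n => (j : ℕ) < m) Finset.univ, lam j := by
  have hcard : (Finset.filter (fun j : Fin n => (j : ℕ) < m) Finset.univ).card = m := by
    rw [show Finset.filter (fun j : Fin n => (j : ℕ) < m) Finset.univ
        = Finset.univ.map (Fin.castLEEmb hm) by
      ext j
      simp only [mem_filter, mem_univ, true_and, Finset.mem_map, Fin.castLEEmb_apply]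
      constructor
      · intro hj; exact ⟨⟨j, hj⟩, by simp [Fin.ext_iff]⟩
      · rintro ⟨i, rfl⟩; simpa using i.2]
    simp
  rcases lt_or_eq_of_le hm with hlt | heq
  · set τ := lam ⟨m, hlt⟩ with hτ
    set F := Finset.filter (fun j : Fin n => (j : ℕ) < m) Finset.univ with hF
    have key1 : ∀ j ∈ F, τ ≤ lam j := by
      intro j hj
      simp only [hF, mem_filter] at hj
      exact hA j ⟨m, hlt⟩ (by simpa [Fin.le_def] using Nat.le_of_lt hj.2)
    set Fc := Finset.filter (fun j : Fin n => ¬ ((j : ℕ) < m)) Finset.univ with hFc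
    have key2 : ∀ j ∈ Fc, lam j ≤ τ := by
      intro j hj
      simp only [hFc, mem_filter, mem_univ, true_and, not_lt] at hj
      exact hA ⟨m, hlt⟩ j (by simpa [Fin.le_def] using hj)
    have hsplit : ∑ j, lam j * p j = ∑ j ∈ F, lam j * p j + ∑ j ∈ Fc, lam j * p j :=
      (Finset.sum_filter_add_sum_filter_not Finset.univ _ _).symm
    have hpsplit : ∑ j ∈ F, p j + ∑ j ∈ Fc, p j = (m : ℝ) := by
      rw [Finset.sum_filter_add_sum_filter_not Finset.univ _ p]; exact hsum
    have e1 : ∑ j ∈ F, lam j * p j ≤ ∑ j ∈ F, (lam j + τ * p j - τ) := by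
      refine Finset.sum_le_sum fun j hj => ?_
      have h1 := key1 j hj
      have h2 := hp1 j
      nlinarith [hp0 j]
    have e2 : ∑ j ∈ Fc, lam j * p j ≤ ∑ j ∈ Fc, τ * p j := by
      refine Finset.sum_le_sum fun j hj => ?_
      have h1 := key2 j hj
      nlinarith [hp0 j]
    have e3 : ∑ j ∈ F, (lam j + τ * p j - τ) = ∑ j ∈ F, lam j + τ * ∑ j ∈ F, p j - τ * m := by
      rw [Finset.sum_sub_distrib, Finset.sum_add_distrib, Finset.mul_sum, Finset.sum_const]
      rw [hcard]; ring
    have e4 : ∑ j ∈ Fc, τ * p j = τ * ∑ j ∈ Fc, p j := by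
      rw [Finset.mul_sum]
    calc ∑ j, lam j * p j ≤ (∑ j ∈ F, lam j + τ * ∑ j ∈ F, p j - τ * m) + τ * ∑ j ∈ Fc, p j := by
          rw [hsplit]; rw [← e3, ← e4]; exact add_le_add e1 e2
      _ = ∑ j ∈ F, lam j + τ * (∑ j ∈ F, p j + ∑ j ∈ Fc, p j) - τ * m := by ring
      _ = ∑ j ∈ F, lam j := by rw [hpsplit]; ring
  · subst heq
    have hp : ∀ j, p j = 1 := by
      have hz : ∑ j, ((1:ℝ) - p j) = 0 := by
        rw [Finset.sum_sub_distrib, hsum]; simp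
      intro j
      have := (Finset.sum_eq_zero_iff_of_nonneg (fun i _ => by linarith [hp1 i])).mp hz j (Finset.mem_univ j)
      linarith
    have hFu : Finset.filter (fun j : Fin m => (j : ℕ) < m) Finset.univ = Finset.univ := by
      apply Finset.filter_true_of_mem; intro j _; exact j.2
    rw [hFu]
    apply Finset.sum_le_sum
    intro j _
    rw [hp j]; simp

end Helpers

/-! ### Inclusion matrices -/

section Emat
variable {β : Type*} [Fintype β] [DecidableEq β]

/-- Inclusion matrix of a finite subset. -/
def E (S : Finset β) : Matrix β {x // x ∈ S} ℝ := fun i u => if i = ↑u then 1 else 0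

variable (S T : Finset β)

lemma mul_E_apply {γ : Type*} [Fintype γ] (M : Matrix γ β ℝ) (a : γ) (u : {x // x ∈ S}) :
    (M * E S) a u = M a ↑u := by
  simp [Matrix.mul_apply, E, mul_ite]

lemma Et_mul_apply {γ : Type*} [Fintype γ] (M : Matrix β γ ℝ) (u : {x // x ∈ S}) (a : γ) :
    ((E S)ᵀ * M) u a = M ↑u a := by
  simp [Matrix.mul_apply, E, Matrix.transpose_apply, ite_mul]

lemma Et_mul_E_self : (E S)ᵀ * E S = 1 := by
  ext u v
  rw [Et_mul_apply]
  simp only [E, Matrix.one_apply, Subtype.ext_iff]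

lemma Et_mul_E_disj (h : ∀ x ∈ S, x ∉ T) : (E S)ᵀ * E T = 0 := by
  ext u v
  rw [Et_mul_apply]
  simp only [E, Matrix.zero_apply, ite_eq_right_iff]
  intro he
  exact absurd (he ▸ v.2) (h _ u.2)

lemma E_mulVec (x : {x // x ∈ S} → ℝ) (i : β) :
    (E S *ᵥ x) i = if h : i ∈ S then x ⟨i, h⟩ else 0 := by
  rw [mulVec]
  split_ifs with h
  · rw [show x ⟨i, h⟩ = ∑ u : {x // x ∈ S}, (if (⟨i, h⟩ : {x // x ∈ S}) = u then 1 else 0) * x u by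
      simp [ite_mul]]
    congr 1 with u
    have : (i = ↑u) = ((⟨i, h⟩ : {x // x ∈ S}) = u) := by
      simp [Subtype.ext_iff]
    simp [E, this]
  · apply Finset.sum_eq_zero
    intro u _
    have : i ≠ ↑u := fun he => h (he ▸ u.2)
    simp [E, this]

lemma E_mulVec_mem (x : {x // x ∈ S} → ℝ) (u : {x // x ∈ S}) :
    (E S *ᵥ x) ↑u = x u := by
  rw [E_mulVec]
  simp

lemma trace_Et_mul_M_mul_E (M : Matrix β β ℝ) :
    ((E S)ᵀ * M * E S).trace = ∑ i ∈ S, M i i := by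
  have : ∀ u : {x // x ∈ S}, ((E S)ᵀ * M * E S) u u = M ↑u ↑u := by
    intro u
    rw [Matrix.mul_assoc, Et_mul_apply, mul_E_apply]
  rw [Matrix.trace]
  simp_rw [Matrix.diag]
  rw [Finset.sum_congr rfl (fun u _ => this u)]
  exact Finset.sum_coe_sort S (fun i => M i i)

lemma trace_E_mul_Et_mul (M : Matrix β β ℝ) :
    (E S * (E S)ᵀ * M).trace = ∑ i ∈ S, M i i := by
  rw [← trace_Et_mul_M_mul_E S M]
  conv_rhs => rw [Matrix.trace_mul_cycle]

lemma trace_E_mul_Et : (E S * (E S)ᵀ).trace = (S.card : ℝ) := by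
  rw [Matrix.trace_mul_comm, Et_mul_E_self, Matrix.trace_one]
  simp

lemma dot_EtME (M : Matrix β β ℝ) (x : {x // x ∈ S} → ℝ) :
    x ⬝ᵥ ((E S)ᵀ * M * E S) *ᵥ x = (E S *ᵥ x) ⬝ᵥ (M *ᵥ (E S *ᵥ x)) := by
  rw [← Matrix.mulVec_mulVec, ← Matrix.mulVec_mulVec, Matrix.dotProduct_mulVec x,
    Matrix.vecMul_transpose]

lemma dot_EtME₂ (S : Finset β) (M : Matrix β β ℝ) (x y : {x // x ∈ S} → ℝ) :
    x ⬝ᵥ ((E S)ᵀ * M * E S) *ᵥ y = (E S *ᵥ x) ⬝ᵥ (M *ᵥ (E S *ᵥ y)) := by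
  rw [← Matrix.mulVec_mulVec, ← Matrix.mulVec_mulVec, Matrix.dotProduct_mulVec x,
    Matrix.vecMul_transpose]

lemma dot_symm (M : Matrix β β ℝ) (hM : Mᵀ = M) (x y : β → ℝ) :
    x ⬝ᵥ (M *ᵥ y) = y ⬝ᵥ (M *ᵥ x) := by
  rw [Matrix.dotProduct_mulVec x, ← Matrix.vecMul_transpose, hM, dotProduct_comm]

end Emat

/-! ### Graph definitions -/

section Graph
variable {n : ℕ} (G : SimpleGraph (Fin n)) [DecidableRel G.Adj] (U : Finset (Fin n))

/-- A component of `G[U]` is bad if it has a vertex with a neighbour outside `U`. -/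
def BadComp (c : (SimpleGraph.induce (↑U : Set (Fin n)) G).ConnectedComponent) : Prop :=
  ∃ u : (↑U : Set (Fin n)),
    (SimpleGraph.induce (↑U : Set (Fin n)) G).connectedComponentMk u = c ∧
    ∃ w : Fin n, w ∉ U ∧ G.Adj ↑u w

open Classical in
/-- Vertices of `U` lying in bad components. -/
noncomputable def U1 : Finset (Fin n) :=
  U.filter fun x => ∃ hx : x ∈ (↑U : Set (Fin n)),
    BadComp G U ((SimpleGraph.induce (↑U : Set (Fin n)) G).connectedComponentMk ⟨x, hx⟩)

open Classical in
/-- Vertices outside `U` adjacent to `U1`. -/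
noncomputable def R1 : Finset (Fin n) :=
  Finset.univ.filter fun w => w ∉ U ∧ ∃ u ∈ U1 G U, G.Adj u w

lemma mem_U1_iff (x : Fin n) : x ∈ U1 G U ↔ x ∈ U ∧ ∃ hx : x ∈ (↑U : Set (Fin n)),
    BadComp G U ((SimpleGraph.induce (↑U : Set (Fin n)) G).connectedComponentMk ⟨x, hx⟩) := by
  classical
  unfold U1
  convert Finset.mem_filter using 2

lemma U1_subset : U1 G U ⊆ U := fun x hx => ((mem_U1_iff G U x).mp hx).1

lemma mem_R1_iff (w : Fin n) : w ∈ R1 G U ↔ w ∉ U ∧ ∃ u ∈ U1 G U, G.Adj u w := by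
  unfold R1
  rw [Finset.mem_filter]
  simp

lemma R1_not_mem_U {w : Fin n} (hw : w ∈ R1 G U) : w ∉ U :=
  ((mem_R1_iff G U w).mp hw).1

lemma disj_U1_R1 : ∀ x ∈ U1 G U, x ∉ R1 G U :=
  fun x hx hr => (R1_not_mem_U G U hr) (U1_subset G U hx)

lemma comp_eq_of_adj {x y : Fin n} (hx : x ∈ U) (hy : y ∈ U) (hadj : G.Adj x y) :
    (SimpleGraph.induce (↑U : Set (Fin n)) G).connectedComponentMk ⟨x, by simpa using hx⟩ =
    (SimpleGraph.induce (↑U : Set (Fin n)) G).connectedComponentMk ⟨y, by simpa using hy⟩ := by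
  apply SimpleGraph.ConnectedComponent.connectedComponentMk_eq_of_adj
  simpa [SimpleGraph.comap_adj] using hadj

lemma mem_U1_of_adj {x y : Fin n} (hx : x ∈ U1 G U) (hy : y ∈ U) (hadj : G.Adj x y) :
    y ∈ U1 G U := by
  rw [mem_U1_iff] at hx ⊢
  obtain ⟨hxU, hx', hbad⟩ := hx
  refine ⟨hy, by simpa using hy, ?_⟩
  rwa [show (SimpleGraph.induce (↑U : Set (Fin n)) G).connectedComponentMk ⟨y, by simpa using hy⟩
      = (SimpleGraph.induce (↑U : Set (Fin n)) G).connectedComponentMk ⟨x, hx'⟩ from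
    (comp_eq_of_adj G U hxU hy hadj).symm]

lemma mem_R1_of_adj {x w : Fin n} (hx : x ∈ U1 G U) (hw : w ∉ U) (hadj : G.Adj x w) :
    w ∈ R1 G U := by
  rw [mem_R1_iff]
  exact ⟨hw, x, hx, hadj⟩

lemma eq_of_reachable (f : Fin n → ℝ) (hf : ∀ i j, G.Adj i j → f i = f j)
    {a b : (↑U : Set (Fin n))}
    (hr : (SimpleGraph.induce (↑U : Set (Fin n)) G).Reachable a b) : f ↑a = f ↑b := by
  obtain ⟨p⟩ := hr
  induction p with
  | nil => rfl
  | cons hadj _ ih =>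
    exact (hf _ _ (by simpa using hadj)).trans ih

lemma lapMatrix_diag (i : Fin n) : (G.lapMatrix ℝ) i i = (G.degree i : ℝ) := by
  simp [SimpleGraph.lapMatrix, SimpleGraph.degMatrix]

lemma lapMatrix_offdiag {i j : Fin n} (hij : i ≠ j) :
    (G.lapMatrix ℝ) i j = if G.Adj i j then (-1 : ℝ) else 0 := by
  simp [SimpleGraph.lapMatrix, SimpleGraph.degMatrix, Matrix.diagonal_apply_ne _ hij,
    SimpleGraph.adjMatrix]
  split_ifs <;> ring

/-! ### Matrices of the construction -/

noncomputable def Amat : Matrix {x // x ∈ U1 G U} {x // x ∈ U1 G U} ℝ :=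
  (E (U1 G U))ᵀ * G.lapMatrix ℝ * E (U1 G U)

noncomputable def Bmat : Matrix {x // x ∈ U1 G U} {x // x ∈ R1 G U} ℝ :=
  (E (U1 G U))ᵀ * G.lapMatrix ℝ * E (R1 G U)

noncomputable def Zmat : Matrix {x // x ∈ U1 G U} {x // x ∈ R1 G U} ℝ :=
  (Amat G U)⁻¹ * Bmat G U

noncomputable def Ymat : Matrix (Fin n) {x // x ∈ R1 G U} ℝ :=
  E (R1 G U) - E (U1 G U) * Zmat G U

noncomputable def Nmat : Matrix {x // x ∈ R1 G U} {x // x ∈ R1 G U} ℝ :=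
  (Ymat G U)ᵀ * Ymat G U

noncomputable def Smat : Matrix {x // x ∈ R1 G U} {x // x ∈ R1 G U} ℝ :=
  (Ymat G U)ᵀ * G.lapMatrix ℝ * Ymat G U

noncomputable def Pw : Matrix (Fin n) (Fin n) ℝ :=
  Ymat G U * (Nmat G U)⁻¹ * (Ymat G U)ᵀ

noncomputable def Qmat : Matrix (Fin n) (Fin n) ℝ :=
  E (U \ U1 G U) * (E (U \ U1 G U))ᵀ + E (U1 G U) * (E (U1 G U))ᵀ
    + E (R1 G U) * (E (R1 G U))ᵀ

noncomputable def Pmat : Matrix (Fin n) (Fin n) ℝ := Qmat G U - Pw G U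

end Graph

section Core
variable {n : ℕ} (G : SimpleGraph (Fin n)) [DecidableRel G.Adj] (U : Finset (Fin n))

lemma lap_symm : (G.lapMatrix ℝ)ᵀ = G.lapMatrix ℝ := G.isSymm_lapMatrix (R := ℝ)

lemma Amat_symm : (Amat G U)ᵀ = Amat G U := by
  unfold Amat
  rw [Matrix.transpose_mul, Matrix.transpose_mul, Matrix.transpose_transpose, lap_symm,
    Matrix.mul_assoc]

lemma Amat_posdef : (Amat G U).PosDef := by
  refine Matrix.posDef_iff_dotProduct_mulVec.mpr ⟨?_, ?_⟩
  · rw [Matrix.IsHermitian, Matrix.conjTranspose_eq_transpose_of_trivial]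
    exact Amat_symm G U
  · intro x hx
    rw [star_trivial]
    have hq : x ⬝ᵥ (Amat G U) *ᵥ x = (E (U1 G U) *ᵥ x) ⬝ᵥ (G.lapMatrix ℝ *ᵥ (E (U1 G U) *ᵥ x)) :=
      dot_EtME _ _ x
    have hpsd := (SimpleGraph.posSemidef_lapMatrix ℝ G).dotProduct_mulVec_nonneg (E (U1 G U) *ᵥ x)
    rw [star_trivial] at hpsd
    rcases lt_or_eq_of_le hpsd with hlt | heqz
    · rw [hq]; exact hlt
    · exfalso
      -- the quadratic form vanishes, so the extended vector is constant on edges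
      set y := E (U1 G U) *ᵥ x with hy
      have hconst : ∀ i j, G.Adj i j → y i = y j := by
        have := (SimpleGraph.lapMatrix_toLinearMap₂'_apply'_eq_zero_iff_forall_adj G
          (R := ℝ) y).mp ?_
        · exact this
        · rw [Matrix.toLinearMap₂'_apply']
          exact heqz.symm
      -- y vanishes on U1, hence everywhere in U1, hence x = 0
      have hyzero : ∀ i, y i = 0 := by
        intro i
        by_cases hi : i ∈ U1 G U
        · -- i lies in a bad component
          obtain ⟨hiU, hi', hbad⟩ := (mem_U1_iff G U i).mp hi
          obtain ⟨u, hu, w, hwU, hadj⟩ := hbad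
          -- y is constant on the component of i, and equals y at u, which equals y w = 0
          have h1 : y i = y ↑u := by
            have hr : (SimpleGraph.induce (↑U : Set (Fin n)) G).Reachable ⟨i, hi'⟩ u :=
              (SimpleGraph.ConnectedComponent.eq.mp hu).symm
            exact eq_of_reachable G U y hconst hr
          have h2 : y ↑u = y w := hconst _ _ hadj
          have h3 : y w = 0 := by
            rw [hy, E_mulVec]
            have : w ∉ U1 G U := fun hw => hwU (U1_subset G U hw)
            simp [this]
          rw [h1, h2, h3]
        · rw [hy, E_mulVec]; simp [hi]
      apply hx
      funext u
      have := hyzero ↑u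
      rwa [hy, E_mulVec_mem] at this

lemma Amat_inv_symm : ((Amat G U)⁻¹)ᵀ = (Amat G U)⁻¹ := by
  rw [Matrix.transpose_nonsing_inv, Amat_symm]

lemma Amat_mul_inv : Amat G U * (Amat G U)⁻¹ = 1 :=
  Matrix.mul_nonsing_inv _ (Matrix.isUnit_iff_isUnit_det _ |>.mp (Amat_posdef G U).isUnit)

lemma Amat_inv_mul : (Amat G U)⁻¹ * Amat G U = 1 :=
  Matrix.nonsing_inv_mul _ (Matrix.isUnit_iff_isUnit_det _ |>.mp (Amat_posdef G U).isUnit)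

end Core

section Core2
variable {n : ℕ} (G : SimpleGraph (Fin n)) [DecidableRel G.Adj] (U : Finset (Fin n))

lemma EtEir : (E (U1 G U))ᵀ * E (R1 G U) = 0 := Et_mul_E_disj _ _ (disj_U1_R1 G U)

lemma EtEri : (E (R1 G U))ᵀ * E (U1 G U) = 0 :=
  Et_mul_E_disj _ _ (fun x hx hmem => disj_U1_R1 G U x hmem hx)

lemma Nmat_eq : Nmat G U = 1 + (Zmat G U)ᵀ * Zmat G U := by
  unfold Nmat Ymat
  rw [Matrix.transpose_sub, Matrix.sub_mul, Matrix.mul_sub, Matrix.mul_sub,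
    Et_mul_E_self, Matrix.transpose_mul]
  have h1 : (E (R1 G U))ᵀ * (E (U1 G U) * Zmat G U) = 0 := by
    rw [← Matrix.mul_assoc, EtEri, Matrix.zero_mul]
  have h2 : (Zmat G U)ᵀ * (E (U1 G U))ᵀ * E (R1 G U) = 0 := by
    rw [Matrix.mul_assoc, EtEir, Matrix.mul_zero]
  have h3 : (Zmat G U)ᵀ * (E (U1 G U))ᵀ * (E (U1 G U) * Zmat G U)
      = (Zmat G U)ᵀ * Zmat G U := by
    rw [Matrix.mul_assoc, ← Matrix.mul_assoc ((E (U1 G U))ᵀ), Et_mul_E_self, Matrix.one_mul]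
  rw [h1, h2, h3]
  abel

lemma Nmat_symm : (Nmat G U)ᵀ = Nmat G U := by
  unfold Nmat
  rw [Matrix.transpose_mul, Matrix.transpose_transpose]

lemma Nmat_posdef : (Nmat G U).PosDef := by
  refine Matrix.posDef_iff_dotProduct_mulVec.mpr ⟨?_, ?_⟩
  · rw [Matrix.IsHermitian, Matrix.conjTranspose_eq_transpose_of_trivial]
    exact Nmat_symm G U
  · intro x hx
    rw [star_trivial, Nmat_eq, Matrix.add_mulVec, dotProduct_add, Matrix.one_mulVec]
    have h1 : 0 < x ⬝ᵥ x :=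
      lt_of_le_of_ne (Finset.sum_nonneg fun i _ => mul_self_nonneg _)
        (fun hcon => hx (dotProduct_self_eq_zero.mp hcon.symm))
    have h2 : 0 ≤ x ⬝ᵥ ((Zmat G U)ᵀ * Zmat G U) *ᵥ x := by
      rw [← Matrix.mulVec_mulVec, Matrix.dotProduct_mulVec x, Matrix.vecMul_transpose]
      exact Finset.sum_nonneg fun i _ => mul_self_nonneg _
    linarith

lemma Nmat_mul_inv : Nmat G U * (Nmat G U)⁻¹ = 1 :=
  Matrix.mul_nonsing_inv _ (Matrix.isUnit_iff_isUnit_det _ |>.mp (Nmat_posdef G U).isUnit)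

lemma Nmat_inv_mul : (Nmat G U)⁻¹ * Nmat G U = 1 :=
  Matrix.nonsing_inv_mul _ (Matrix.isUnit_iff_isUnit_det _ |>.mp (Nmat_posdef G U).isUnit)

lemma Nmat_inv_symm : ((Nmat G U)⁻¹)ᵀ = (Nmat G U)⁻¹ := by
  rw [Matrix.transpose_nonsing_inv, Nmat_symm]

lemma one_sub_Ninv_psd : ((1 : Matrix _ _ ℝ) - (Nmat G U)⁻¹).PosSemidef := by
  refine Matrix.posSemidef_iff_dotProduct_mulVec.mpr ⟨?_, ?_⟩
  · rw [Matrix.IsHermitian, Matrix.conjTranspose_eq_transpose_of_trivial, Matrix.transpose_sub,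
      Matrix.transpose_one, Nmat_inv_symm]
  · intro x
    rw [star_trivial, Matrix.sub_mulVec, dotProduct_sub, Matrix.one_mulVec, sub_nonneg]
    -- x ⬝ᵥ N⁻¹ x ≤ x ⬝ᵥ x
    set y := (Nmat G U)⁻¹ *ᵥ x with hy
    have hxy : x = Nmat G U *ᵥ y := by
      rw [hy, Matrix.mulVec_mulVec, Nmat_mul_inv, Matrix.one_mulVec]
    have e1 : x ⬝ᵥ (Nmat G U)⁻¹ *ᵥ x = y ⬝ᵥ Nmat G U *ᵥ y := by
      rw [← hy]
      conv_lhs => rw [hxy]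
      rw [dotProduct_comm]
    have e2 : x ⬝ᵥ x = y ⬝ᵥ (Nmat G U * Nmat G U) *ᵥ y := by
      conv_lhs => rw [hxy]
      rw [dot_symm _ (Nmat_symm G U), Matrix.mulVec_mulVec]
    rw [e1, e2]
    set W := (Zmat G U)ᵀ * Zmat G U with hW
    have hWsymm : Wᵀ = W := by
      rw [hW, Matrix.transpose_mul, Matrix.transpose_transpose]
    have key : y ⬝ᵥ (Nmat G U * Nmat G U) *ᵥ y - y ⬝ᵥ Nmat G U *ᵥ y
        = y ⬝ᵥ W *ᵥ y + (W *ᵥ y) ⬝ᵥ (W *ᵥ y) := by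
      have expand : Nmat G U * Nmat G U - Nmat G U = W + W * W := by
        rw [Nmat_eq, hW]; noncomm_ring
      have e3 : y ⬝ᵥ (Nmat G U * Nmat G U) *ᵥ y - y ⬝ᵥ Nmat G U *ᵥ y
          = y ⬝ᵥ ((Nmat G U * Nmat G U - Nmat G U) *ᵥ y) := by
        rw [Matrix.sub_mulVec, dotProduct_sub]
      rw [e3, expand, Matrix.add_mulVec, dotProduct_add]
      congr 1
      conv_lhs => rw [show W * W = Wᵀ * W by rw [hWsymm]]
      rw [← Matrix.mulVec_mulVec, Matrix.dotProduct_mulVec y, Matrix.vecMul_transpose]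
    have t1 : 0 ≤ y ⬝ᵥ W *ᵥ y := by
      rw [hW, ← Matrix.mulVec_mulVec, Matrix.dotProduct_mulVec y, Matrix.vecMul_transpose]
      exact Finset.sum_nonneg fun i _ => mul_self_nonneg _
    have t2 : 0 ≤ (W *ᵥ y) ⬝ᵥ (W *ᵥ y) :=
      Finset.sum_nonneg fun i _ => mul_self_nonneg _
    linarith

end Core2

section Core3
variable {n : ℕ} (G : SimpleGraph (Fin n)) [DecidableRel G.Adj] (U : Finset (Fin n))

lemma sub_quad {a : Type*} [Fintype a] [DecidableEq a]
    (X Y : Matrix (Fin n) a ℝ) (L : Matrix (Fin n) (Fin n) ℝ) :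
    (X - Y)ᵀ * L * (X - Y)
      = Xᵀ * L * X - Xᵀ * L * Y - Yᵀ * L * X + Yᵀ * L * Y := by
  rw [Matrix.transpose_sub, Matrix.sub_mul, Matrix.sub_mul, Matrix.mul_sub, Matrix.mul_sub]
  abel

lemma hAZ : Amat G U * Zmat G U = Bmat G U := by
  unfold Zmat
  rw [← Matrix.mul_assoc, Amat_mul_inv, Matrix.one_mul]

lemma hZtB : (Zmat G U)ᵀ * Bmat G U = (Bmat G U)ᵀ * Zmat G U := by
  unfold Zmat
  rw [Matrix.transpose_mul, Amat_inv_symm, Matrix.mul_assoc]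

lemma hBt : (E (R1 G U))ᵀ * G.lapMatrix ℝ * E (U1 G U) = (Bmat G U)ᵀ := by
  unfold Bmat
  rw [Matrix.transpose_mul, Matrix.transpose_mul, Matrix.transpose_transpose, lap_symm,
    Matrix.mul_assoc]

lemma Smat_eq : Smat G U
    = (E (R1 G U))ᵀ * G.lapMatrix ℝ * E (R1 G U) - (Bmat G U)ᵀ * Zmat G U := by
  unfold Smat Ymat
  rw [sub_quad]
  have e2 : (E (R1 G U))ᵀ * G.lapMatrix ℝ * (E (U1 G U) * Zmat G U)
      = (Bmat G U)ᵀ * Zmat G U := by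
    rw [← Matrix.mul_assoc, hBt]
  have e3 : (E (U1 G U) * Zmat G U)ᵀ * G.lapMatrix ℝ * E (R1 G U)
      = (Bmat G U)ᵀ * Zmat G U := by
    rw [Matrix.transpose_mul, Matrix.mul_assoc ((Zmat G U)ᵀ), Matrix.mul_assoc ((Zmat G U)ᵀ)]
    exact hZtB G U
  have e4 : (E (U1 G U) * Zmat G U)ᵀ * G.lapMatrix ℝ * (E (U1 G U) * Zmat G U)
      = (Bmat G U)ᵀ * Zmat G U := by
    rw [Matrix.transpose_mul, Matrix.mul_assoc ((Zmat G U)ᵀ), Matrix.mul_assoc ((Zmat G U)ᵀ),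
      ← Matrix.mul_assoc ((E (U1 G U))ᵀ * G.lapMatrix ℝ)]
    rw [show (E (U1 G U))ᵀ * G.lapMatrix ℝ * E (U1 G U) = Amat G U from rfl, hAZ]
    exact hZtB G U
  rw [e2, e3, e4]
  abel

lemma Smat_psd : (Smat G U).PosSemidef := by
  have := (SimpleGraph.posSemidef_lapMatrix ℝ G).conjTranspose_mul_mul_same (Ymat G U)
  unfold Smat
  rwa [Matrix.conjTranspose_eq_transpose_of_trivial] at this

lemma trace_Smat : (Smat G U).trace
    = (∑ w ∈ R1 G U, (G.degree w : ℝ)) - ((Bmat G U)ᵀ * Zmat G U).trace := by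
  rw [Smat_eq, Matrix.trace_sub, trace_Et_mul_M_mul_E]
  congr 1
  exact Finset.sum_congr rfl fun w _ => lapMatrix_diag G w

lemma trace_Pw_mul_L : (Pw G U * G.lapMatrix ℝ).trace = ((Nmat G U)⁻¹ * Smat G U).trace := by
  unfold Pw
  rw [Matrix.mul_assoc (Ymat G U * (Nmat G U)⁻¹), Matrix.trace_mul_comm, ← Matrix.mul_assoc]
  rw [show (Ymat G U)ᵀ * G.lapMatrix ℝ * Ymat G U * (Nmat G U)⁻¹
      = Smat G U * (Nmat G U)⁻¹ from rfl]
  rw [Matrix.trace_mul_comm]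

lemma trace_Pw_mul_L_le : (Pw G U * G.lapMatrix ℝ).trace ≤ (Smat G U).trace := by
  rw [trace_Pw_mul_L]
  have h0 : 0 ≤ (((1 : Matrix _ _ ℝ) - (Nmat G U)⁻¹) * Smat G U).trace :=
    trace_mul_nonneg (one_sub_Ninv_psd G U) (Smat_psd G U)
  rw [Matrix.sub_mul, Matrix.one_mul, Matrix.trace_sub] at h0
  linarith

end Core3

section Core4
variable {n : ℕ} (G : SimpleGraph (Fin n)) [DecidableRel G.Adj] (U : Finset (Fin n))

lemma disj_U0_U1 : ∀ x ∈ U \ U1 G U, x ∉ U1 G U := fun x hx => (Finset.mem_sdiff.mp hx).2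
lemma disj_U1_U0 : ∀ x ∈ U1 G U, x ∉ U \ U1 G U := fun x hx hc => (Finset.mem_sdiff.mp hc).2 hx
lemma disj_U0_R1 : ∀ x ∈ U \ U1 G U, x ∉ R1 G U :=
  fun x hx hr => R1_not_mem_U G U hr (Finset.mem_sdiff.mp hx).1
lemma disj_R1_U0 : ∀ x ∈ R1 G U, x ∉ U \ U1 G U :=
  fun x hx hc => R1_not_mem_U G U hx (Finset.mem_sdiff.mp hc).1
lemma disj_R1_U1 : ∀ x ∈ R1 G U, x ∉ U1 G U :=
  fun x hx hc => disj_U1_R1 G U x hc hx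

lemma QE0 : Qmat G U * E (U \ U1 G U) = E (U \ U1 G U) := by
  unfold Qmat
  rw [Matrix.add_mul, Matrix.add_mul, Matrix.mul_assoc, Matrix.mul_assoc, Matrix.mul_assoc,
    Et_mul_E_self, Et_mul_E_disj _ _ (disj_U1_U0 G U), Et_mul_E_disj _ _ (disj_R1_U0 G U)]
  simp

lemma QE1 : Qmat G U * E (U1 G U) = E (U1 G U) := by
  unfold Qmat
  rw [Matrix.add_mul, Matrix.add_mul, Matrix.mul_assoc, Matrix.mul_assoc, Matrix.mul_assoc,
    Et_mul_E_self, Et_mul_E_disj _ _ (disj_U0_U1 G U), Et_mul_E_disj _ _ (disj_R1_U1 G U)]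
  simp

lemma QEr : Qmat G U * E (R1 G U) = E (R1 G U) := by
  unfold Qmat
  rw [Matrix.add_mul, Matrix.add_mul, Matrix.mul_assoc, Matrix.mul_assoc, Matrix.mul_assoc,
    Et_mul_E_self, Et_mul_E_disj _ _ (disj_U0_R1 G U), Et_mul_E_disj _ _ (disj_U1_R1 G U)]
  simp

lemma Qmat_symm : (Qmat G U)ᵀ = Qmat G U := by
  unfold Qmat
  simp [Matrix.transpose_add, Matrix.transpose_mul]

lemma QY : Qmat G U * Ymat G U = Ymat G U := by
  unfold Ymat
  rw [Matrix.mul_sub, QEr, ← Matrix.mul_assoc, QE1]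

lemma Qmat_idem : Qmat G U * Qmat G U = Qmat G U := by
  conv_lhs => rw [show Qmat G U * Qmat G U
    = Qmat G U * (E (U \ U1 G U) * (E (U \ U1 G U))ᵀ) + Qmat G U * (E (U1 G U) * (E (U1 G U))ᵀ)
      + Qmat G U * (E (R1 G U) * (E (R1 G U))ᵀ) by
      unfold Qmat; rw [Matrix.mul_add, Matrix.mul_add]]
  rw [← Matrix.mul_assoc, ← Matrix.mul_assoc, ← Matrix.mul_assoc, QE0, QE1, QEr]
  rfl

lemma Pw_symm : (Pw G U)ᵀ = Pw G U := by
  unfold Pw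
  rw [Matrix.transpose_mul, Matrix.transpose_mul, Matrix.transpose_transpose, Nmat_inv_symm,
    Matrix.mul_assoc]

lemma QPw : Qmat G U * Pw G U = Pw G U := by
  unfold Pw
  rw [← Matrix.mul_assoc, ← Matrix.mul_assoc, QY]

lemma PwQ : Pw G U * Qmat G U = Pw G U := by
  have := congrArg Matrix.transpose (QPw G U)
  rwa [Matrix.transpose_mul, Pw_symm, Qmat_symm] at this

lemma Pw_idem : Pw G U * Pw G U = Pw G U := by
  unfold Pw
  have h1 : (Ymat G U)ᵀ * (Ymat G U * (Nmat G U)⁻¹ * (Ymat G U)ᵀ)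
      = Nmat G U * (Nmat G U)⁻¹ * (Ymat G U)ᵀ := by
    rw [← Matrix.mul_assoc, ← Matrix.mul_assoc]
    rfl
  rw [Matrix.mul_assoc (Ymat G U * (Nmat G U)⁻¹), h1, Nmat_mul_inv, Matrix.one_mul]

lemma Pmat_symm : (Pmat G U)ᵀ = Pmat G U := by
  unfold Pmat
  rw [Matrix.transpose_sub, Qmat_symm, Pw_symm]

lemma Pmat_idem : Pmat G U * Pmat G U = Pmat G U := by
  unfold Pmat
  rw [Matrix.sub_mul, Matrix.mul_sub, Matrix.mul_sub, Qmat_idem, QPw, PwQ, Pw_idem]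
  abel

lemma Pmat_psd : (Pmat G U).PosSemidef := psd_of_symm_idem (Pmat_symm G U) (Pmat_idem G U)

lemma one_sub_Pmat_psd : ((1 : Matrix (Fin n) (Fin n) ℝ) - Pmat G U).PosSemidef := by
  apply psd_of_symm_idem
  · rw [Matrix.transpose_sub, Matrix.transpose_one, Pmat_symm]
  · simp only [Matrix.mul_sub, Matrix.sub_mul, Matrix.one_mul, Matrix.mul_one, Pmat_idem]
    abel

lemma trace_Pw : (Pw G U).trace = ((R1 G U).card : ℝ) := by
  unfold Pw
  rw [Matrix.mul_assoc, Matrix.trace_mul_comm, Matrix.mul_assoc]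
  rw [show (Ymat G U)ᵀ * Ymat G U = Nmat G U from rfl]
  rw [Nmat_inv_mul, Matrix.trace_one]
  simp

lemma trace_Pmat : (Pmat G U).trace = (U.card : ℝ) := by
  unfold Pmat Qmat
  rw [Matrix.trace_sub, Matrix.trace_add, Matrix.trace_add, trace_E_mul_Et, trace_E_mul_Et,
    trace_E_mul_Et, trace_Pw]
  have : (U \ U1 G U).card + (U1 G U).card = U.card :=
    Finset.card_sdiff_add_card_eq_card (U1_subset G U)
  push_cast [← this]
  ring

lemma trace_Qmat_mul_L : (Qmat G U * G.lapMatrix ℝ).trace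
    = (∑ u ∈ U, (G.degree u : ℝ)) + ∑ w ∈ R1 G U, (G.degree w : ℝ) := by
  unfold Qmat
  rw [Matrix.add_mul, Matrix.add_mul, Matrix.trace_add, Matrix.trace_add,
    trace_E_mul_Et_mul, trace_E_mul_Et_mul, trace_E_mul_Et_mul]
  have hsplit : ∑ u ∈ U \ U1 G U, (G.lapMatrix ℝ) u u + ∑ u ∈ U1 G U, (G.lapMatrix ℝ) u u
      = ∑ u ∈ U, (G.lapMatrix ℝ) u u := Finset.sum_sdiff (U1_subset G U)
  rw [hsplit]
  congr 1
  · exact Finset.sum_congr rfl fun u _ => lapMatrix_diag G u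
  · exact Finset.sum_congr rfl fun w _ => lapMatrix_diag G w

lemma trace_Pmat_mul_L_ge :
    (∑ u ∈ U, (G.degree u : ℝ)) + ((Bmat G U)ᵀ * Zmat G U).trace
      ≤ (Pmat G U * G.lapMatrix ℝ).trace := by
  unfold Pmat
  rw [Matrix.sub_mul, Matrix.trace_sub, trace_Qmat_mul_L]
  have h1 := trace_Pw_mul_L_le G U
  rw [trace_Smat] at h1
  linarith

end Core4

section Bessel

lemma sum_dotProduct' {ι κ : Type*} [Fintype ι] (s : Finset κ) (f : κ → ι → ℝ) (v : ι → ℝ) :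
    (∑ c ∈ s, f c) ⬝ᵥ v = ∑ c ∈ s, f c ⬝ᵥ v := by
  unfold dotProduct
  simp only [Finset.sum_apply, Finset.sum_mul]
  rw [Finset.sum_comm]

/-- Abstract Bessel-type inequality in the `A`-inner product. -/
lemma bessel {ι' : Type*} [Fintype ι'] [DecidableEq ι'] {A : Matrix ι' ι' ℝ}
    (hsym : Aᵀ = A) (hApsd : ∀ x : ι' → ℝ, 0 ≤ x ⬝ᵥ A *ᵥ x)
    (hmulinv : A * A⁻¹ = 1)
    {κ' : Type*} (𝒞 : Finset κ') (z : κ' → ι' → ℝ)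
    (horth : ∀ c ∈ 𝒞, ∀ c' ∈ 𝒞, c ≠ c' → z c ⬝ᵥ A *ᵥ z c' = 0)
    (hq : ∀ c ∈ 𝒞, 0 < z c ⬝ᵥ A *ᵥ z c) (b : ι' → ℝ) :
    ∑ c ∈ 𝒞, (b ⬝ᵥ z c)^2 / (z c ⬝ᵥ A *ᵥ z c) ≤ b ⬝ᵥ A⁻¹ *ᵥ b := by
  classical
  set q : κ' → ℝ := fun c => z c ⬝ᵥ A *ᵥ z c with hqdef
  set β : κ' → ℝ := fun c => (b ⬝ᵥ z c) / q c with hβ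
  set x : ι' → ℝ := A⁻¹ *ᵥ b with hx
  set s : ι' → ℝ := ∑ c ∈ 𝒞, β c • z c with hs
  have hAx : A *ᵥ x = b := by
    rw [hx, Matrix.mulVec_mulVec, hmulinv, Matrix.one_mulVec]
  have hQsx : s ⬝ᵥ A *ᵥ x = ∑ c ∈ 𝒞, β c * (b ⬝ᵥ z c) := by
    rw [hs, sum_dotProduct']
    refine Finset.sum_congr rfl fun c hc => ?_
    rw [smul_dotProduct, hAx, smul_eq_mul, dotProduct_comm]
  have hQss : s ⬝ᵥ A *ᵥ s = ∑ c ∈ 𝒞, β c * β c * q c := by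
    rw [hs, sum_dotProduct']
    refine Finset.sum_congr rfl fun c hc => ?_
    rw [smul_dotProduct]
    have : z c ⬝ᵥ A *ᵥ (∑ c' ∈ 𝒞, β c' • z c') = β c * q c := by
      rw [dot_symm A hsym, sum_dotProduct']
      rw [Finset.sum_eq_single c]
      · rw [smul_dotProduct, smul_eq_mul, hqdef]
      · intro c' hc' hne
        rw [smul_dotProduct, dot_symm A hsym, horth c hc c' hc' (fun h => hne h.symm),
          smul_eq_mul, mul_zero]
      · intro hcc; exact absurd hc hcc
    rw [this, smul_eq_mul]; ring
  have hexp : 0 ≤ x ⬝ᵥ A *ᵥ x - 2 * (s ⬝ᵥ A *ᵥ x) + s ⬝ᵥ A *ᵥ s := by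
    have h0 := hApsd (x - s)
    have e : (x - s) ⬝ᵥ A *ᵥ (x - s)
        = x ⬝ᵥ A *ᵥ x - 2 * (s ⬝ᵥ A *ᵥ x) + s ⬝ᵥ A *ᵥ s := by
      rw [Matrix.mulVec_sub, dotProduct_sub, sub_dotProduct,
        sub_dotProduct]
      have : x ⬝ᵥ A *ᵥ s = s ⬝ᵥ A *ᵥ x := dot_symm A hsym x s
      rw [this]; ring
    linarith [e ▸ h0]
  have hxx : x ⬝ᵥ A *ᵥ x = b ⬝ᵥ A⁻¹ *ᵥ b := by
    rw [hAx, hx, dotProduct_comm]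
  have hterm : ∀ c ∈ 𝒞, β c * (b ⬝ᵥ z c) = (b ⬝ᵥ z c)^2 / q c := by
    intro c hc
    rw [hβ]
    field_simp
  have hterm2 : ∀ c ∈ 𝒞, β c * β c * q c = (b ⬝ᵥ z c)^2 / q c := by
    intro c hc
    have hqc := hq c hc
    rw [hβ]
    field_simp
  rw [Finset.sum_congr rfl hterm2] at hQss
  rw [Finset.sum_congr rfl hterm] at hQsx
  rw [hxx, hQsx, hQss] at hexp
  linarith

end Bessel

section Core5
variable {n : ℕ} (G : SimpleGraph (Fin n)) [DecidableRel G.Adj] (U : Finset (Fin n))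

/-- Membership of `x` in component `c` (as a vertex of `Fin n`). -/
def cpred (c : (SimpleGraph.induce (↑U : Set (Fin n)) G).ConnectedComponent) (x : Fin n) : Prop :=
  ∃ hx : x ∈ (↑U : Set (Fin n)),
    (SimpleGraph.induce (↑U : Set (Fin n)) G).connectedComponentMk ⟨x, hx⟩ = c

open Classical in
noncomputable def zvec (c : (SimpleGraph.induce (↑U : Set (Fin n)) G).ConnectedComponent) :
    {x // x ∈ U1 G U} → ℝ := fun u => if cpred G U c ↑u then 1 else 0

open Classical in
noncomputable def Cc (c : (SimpleGraph.induce (↑U : Set (Fin n)) G).ConnectedComponent) :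
    Finset (Fin n) := (U1 G U).filter (cpred G U c)

open Classical in
noncomputable def ecount (c : (SimpleGraph.induce (↑U : Set (Fin n)) G).ConnectedComponent)
    (w : Fin n) : ℕ := ∑ i ∈ Cc G U c, if G.Adj i w then 1 else 0

lemma mem_Cc_iff (c) (x : Fin n) : x ∈ Cc G U c ↔ x ∈ U1 G U ∧ cpred G U c x := by
  classical
  unfold Cc
  convert Finset.mem_filter using 2

lemma zvec_extend (c) : E (U1 G U) *ᵥ zvec G U c
    = fun i => if i ∈ Cc G U c then (1 : ℝ) else 0 := by
  classical
  funext i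
  rw [E_mulVec]
  by_cases h : i ∈ U1 G U
  · simp only [h, dif_pos]
    unfold zvec
    by_cases hc : cpred G U c i
    · simp only [hc, if_pos]
      rw [if_pos ((mem_Cc_iff G U c i).mpr ⟨h, hc⟩)]
    · rw [if_neg (fun hm => hc ((mem_Cc_iff G U c i).mp hm).2)]
      simp [hc]
  · rw [dif_neg h, if_neg (fun hm => h ((mem_Cc_iff G U c i).mp hm).1)]

lemma dot_ind (S : Finset (Fin n)) (v : Fin n → ℝ) :
    (fun i => if i ∈ S then (1:ℝ) else 0) ⬝ᵥ v = ∑ i ∈ S, v i := by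
  classical
  unfold dotProduct
  simp only [ite_mul, one_mul, zero_mul]
  rw [Finset.sum_ite_mem, Finset.univ_inter]

end Core5

section Core6
variable {n : ℕ} (G : SimpleGraph (Fin n)) [DecidableRel G.Adj] (U : Finset (Fin n))

lemma nbrFinset_eq (i : Fin n) : G.neighborFinset i = Finset.univ.filter (G.Adj i) := by
  ext j; simp

lemma zAz (c c' : (SimpleGraph.induce (↑U : Set (Fin n)) G).ConnectedComponent) :
    zvec G U c ⬝ᵥ Amat G U *ᵥ zvec G U c'
      = ∑ i ∈ Cc G U c, ((G.degree i : ℝ) * (if i ∈ Cc G U c' then 1 else 0)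
          - ∑ j ∈ G.neighborFinset i, (if j ∈ Cc G U c' then (1:ℝ) else 0)) := by
  unfold Amat
  rw [dot_EtME₂, zvec_extend, zvec_extend, dot_ind]
  exact Finset.sum_congr rfl fun i _ => SimpleGraph.lapMatrix_mulVec_apply G i _

lemma cpred_unique {c c' : (SimpleGraph.induce (↑U : Set (Fin n)) G).ConnectedComponent}
    {x : Fin n} (h : cpred G U c x) (h' : cpred G U c' x) : c = c' := by
  obtain ⟨hx, e⟩ := h
  obtain ⟨hx', e'⟩ := h'
  rw [← e, ← e']

lemma mem_Cc_of_adj {c : (SimpleGraph.induce (↑U : Set (Fin n)) G).ConnectedComponent}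
    {x y : Fin n} (hx : x ∈ Cc G U c) (hyU : y ∈ U) (hadj : G.Adj x y) : y ∈ Cc G U c := by
  obtain ⟨hx1, hxc⟩ := (mem_Cc_iff G U c x).mp hx
  refine (mem_Cc_iff G U c y).mpr ⟨mem_U1_of_adj G U hx1 hyU hadj, ?_⟩
  obtain ⟨hxm, e⟩ := hxc
  exact ⟨by simpa using hyU, by rw [← comp_eq_of_adj G U (U1_subset G U hx1) hyU hadj]; exact e⟩

lemma zAz_orth {c c' : (SimpleGraph.induce (↑U : Set (Fin n)) G).ConnectedComponent}
    (hne : c ≠ c') : zvec G U c ⬝ᵥ Amat G U *ᵥ zvec G U c' = 0 := by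
  rw [zAz]
  refine Finset.sum_eq_zero fun i hi => ?_
  have hic : cpred G U c i := ((mem_Cc_iff G U c i).mp hi).2
  have h1 : i ∉ Cc G U c' := fun hm =>
    hne (cpred_unique G U hic ((mem_Cc_iff G U c' i).mp hm).2)
  have h2 : ∀ j ∈ G.neighborFinset i, (if j ∈ Cc G U c' then (1:ℝ) else 0) = 0 := by
    intro j hj
    rw [SimpleGraph.mem_neighborFinset] at hj
    have : j ∉ Cc G U c' := by
      intro hm
      have hjc' : cpred G U c' j := ((mem_Cc_iff G U c' j).mp hm).2
      have hjc : j ∈ Cc G U c :=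
        mem_Cc_of_adj G U hi (U1_subset G U ((mem_Cc_iff G U c' j).mp hm).1) hj
      exact hne (cpred_unique G U ((mem_Cc_iff G U c j).mp hjc).2 hjc')
    rw [if_neg this]
  rw [if_neg h1, Finset.sum_eq_zero h2]
  ring

lemma zAz_diag (c : (SimpleGraph.induce (↑U : Set (Fin n)) G).ConnectedComponent) :
    zvec G U c ⬝ᵥ Amat G U *ᵥ zvec G U c = ∑ w ∈ R1 G U, (ecount G U c w : ℝ) := by
  classical
  rw [zAz]
  have key : ∀ i ∈ Cc G U c,
      (G.degree i : ℝ) * (if i ∈ Cc G U c then 1 else 0)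
        - ∑ j ∈ G.neighborFinset i, (if j ∈ Cc G U c then (1:ℝ) else 0)
      = ∑ w ∈ R1 G U, (if G.Adj i w then (1:ℝ) else 0) := by
    intro i hi
    rw [if_pos hi, mul_one, SimpleGraph.degree_eq_sum_if_adj, nbrFinset_eq, Finset.sum_filter]
    have hrhs : ∑ w ∈ R1 G U, (if G.Adj i w then (1:ℝ) else 0)
        = ∑ j : Fin n, (if j ∈ R1 G U then (if G.Adj i j then (1:ℝ) else 0) else 0) := by
      rw [Finset.sum_ite_mem, Finset.univ_inter]
    rw [hrhs, ← Finset.sum_sub_distrib]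
    refine Finset.sum_congr rfl fun j _ => ?_
    by_cases hadj : G.Adj i j
    · simp only [if_pos hadj]
      by_cases hjR : j ∈ R1 G U
      · have hjC : j ∉ Cc G U c := fun hm =>
          R1_not_mem_U G U hjR (U1_subset G U ((mem_Cc_iff G U c j).mp hm).1)
        rw [if_pos hjR, if_neg hjC]; ring
      · have hjC : j ∈ Cc G U c := by
          by_cases hjU : j ∈ U
          · exact mem_Cc_of_adj G U hi hjU hadj
          · exact absurd (mem_R1_of_adj G U ((mem_Cc_iff G U c i).mp hi).1 hjU hadj) hjR
        rw [if_pos hjC, if_neg hjR]; ring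
    · simp [hadj]
  rw [Finset.sum_congr rfl key, Finset.sum_comm]
  refine Finset.sum_congr rfl fun w _ => ?_
  unfold ecount
  push_cast
  rfl

lemma Bcol (w : {x // x ∈ R1 G U}) (u : {x // x ∈ U1 G U}) :
    Bmat G U u w = - (if G.Adj ↑u ↑w then (1:ℝ) else 0) := by
  unfold Bmat
  rw [Matrix.mul_assoc, Et_mul_apply, mul_E_apply]
  have hne : (↑u : Fin n) ≠ ↑w := fun he => disj_U1_R1 G U ↑u u.2 (he ▸ w.2)
  rw [lapMatrix_offdiag G hne]
  split_ifs <;> ring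

lemma bz (w : {x // x ∈ R1 G U}) (c : (SimpleGraph.induce (↑U : Set (Fin n)) G).ConnectedComponent) :
    (fun u => Bmat G U u w) ⬝ᵥ zvec G U c = -(ecount G U c ↑w : ℝ) := by
  classical
  unfold dotProduct
  have : ∀ u : {x // x ∈ U1 G U}, Bmat G U u w * zvec G U c u
      = (fun x : Fin n => -(if cpred G U c x then (if G.Adj x ↑w then (1:ℝ) else 0) else 0)) ↑u := by
    intro u
    rw [Bcol]
    unfold zvec
    by_cases hc : cpred G U c ↑u
    · simp [hc]
    · simp [hc]
  rw [Finset.sum_congr rfl fun u _ => this u]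
  rw [← Finset.sum_subtype (U1 G U) (fun x => Iff.rfl)
    (fun x : Fin n => -(if cpred G U c x then (if G.Adj x ↑w then (1:ℝ) else 0) else 0))]
  rw [Finset.sum_neg_distrib]
  rw [show ∑ x ∈ U1 G U, (if cpred G U c x then (if G.Adj x ↑w then (1:ℝ) else 0) else 0)
      = ∑ x ∈ Cc G U c, (if G.Adj x ↑w then (1:ℝ) else 0) from (Finset.sum_filter _ _).symm]
  unfold ecount
  push_cast
  rfl

lemma bad_q_ge_one {c : (SimpleGraph.induce (↑U : Set (Fin n)) G).ConnectedComponent}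
    (hc : BadComp G U c) : (1:ℝ) ≤ ∑ w ∈ R1 G U, (ecount G U c w : ℝ) := by
  have hc' := hc
  obtain ⟨u, hu, w, hwU, hadj⟩ := hc'
  have huU1 : (↑u : Fin n) ∈ U1 G U := by
    rw [mem_U1_iff]
    refine ⟨by simpa using u.2, u.2, ?_⟩
    rw [Subtype.coe_eta, hu]
    exact hc
  have hucc : (↑u : Fin n) ∈ Cc G U c := by
    rw [mem_Cc_iff]
    exact ⟨huU1, u.2, by rwa [Subtype.coe_eta]⟩
  have hwR : w ∈ R1 G U := mem_R1_of_adj G U huU1 hwU hadj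
  have h1 : 1 ≤ ecount G U c w := by
    unfold ecount
    calc 1 = (if G.Adj (↑u : Fin n) w then 1 else 0) := by rw [if_pos hadj]
      _ ≤ ∑ i ∈ Cc G U c, (if G.Adj i w then 1 else 0) :=
        Finset.single_le_sum (f := fun i => if G.Adj i w then 1 else 0)
          (fun i _ => Nat.zero_le _) hucc
  calc (1:ℝ) ≤ (ecount G U c w : ℝ) := by exact_mod_cast h1
    _ ≤ ∑ w' ∈ R1 G U, (ecount G U c w' : ℝ) :=
      Finset.single_le_sum (f := fun w' => (ecount G U c w' : ℝ))
        (fun i _ => by positivity) hwR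

end Core6

section Core7
variable {n : ℕ} (G : SimpleGraph (Fin n)) [DecidableRel G.Adj] (U : Finset (Fin n))

lemma trace_BtZ_entry (w : {x // x ∈ R1 G U}) :
    ((Bmat G U)ᵀ * Zmat G U) w w
      = (fun u => Bmat G U u w) ⬝ᵥ ((Amat G U)⁻¹ *ᵥ (fun u => Bmat G U u w)) := by
  unfold Zmat
  simp [Matrix.mul_apply, Matrix.mulVec, Matrix.transpose_apply, dotProduct]

lemma gamma_ge : ((Set.ncard {c | BadComp G U c} : ℕ) : ℝ) ≤ ((Bmat G U)ᵀ * Zmat G U).trace := by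
  classical
  haveI : Fintype ((SimpleGraph.induce (↑U : Set (Fin n)) G).ConnectedComponent) :=
    Fintype.ofFinite _
  set 𝒞 := Finset.univ.filter (fun c => BadComp G U c) with h𝒞
  have hset : {c | BadComp G U c} = (↑𝒞 : Set _) := by
    ext c; simp [h𝒞]
  have hcard : ({c | BadComp G U c}).ncard = 𝒞.card := by
    rw [hset, Set.ncard_coe_finset]
  have hqpos : ∀ c ∈ 𝒞, (0:ℝ) < zvec G U c ⬝ᵥ Amat G U *ᵥ zvec G U c := by
    intro c hc
    rw [zAz_diag]
    have := bad_q_ge_one G U (Finset.mem_filter.mp hc).2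
    linarith
  have hBessel : ∀ w : {x // x ∈ R1 G U},
      ∑ c ∈ 𝒞, ((fun u => Bmat G U u w) ⬝ᵥ zvec G U c)^2
          / (zvec G U c ⬝ᵥ Amat G U *ᵥ zvec G U c)
        ≤ (fun u => Bmat G U u w) ⬝ᵥ (Amat G U)⁻¹ *ᵥ (fun u => Bmat G U u w) := by
    intro w
    refine bessel (Amat_symm G U) (fun x => ?_) (Amat_mul_inv G U) 𝒞 (zvec G U)
      (fun c _ c' _ hne => zAz_orth G U hne) hqpos _
    have := (Amat_posdef G U).posSemidef.dotProduct_mulVec_nonneg x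
    rwa [star_trivial] at this
  have htrace : ((Bmat G U)ᵀ * Zmat G U).trace
      = ∑ w : {x // x ∈ R1 G U}, ((Bmat G U)ᵀ * Zmat G U) w w := rfl
  have hperc : ∀ c ∈ 𝒞, (1:ℝ) ≤ ∑ w : {x // x ∈ R1 G U},
      ((fun u => Bmat G U u w) ⬝ᵥ zvec G U c)^2
        / (zvec G U c ⬝ᵥ Amat G U *ᵥ zvec G U c) := by
    intro c hc
    have hq := hqpos c hc
    set q := zvec G U c ⬝ᵥ Amat G U *ᵥ zvec G U c with hqd
    have hsum : ∑ w : {x // x ∈ R1 G U},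
        ((fun u => Bmat G U u w) ⬝ᵥ zvec G U c)^2 / q
        = (∑ w : {x // x ∈ R1 G U}, ((ecount G U c ↑w : ℝ))^2) / q := by
      rw [← Finset.sum_div]
      congr 1
      refine Finset.sum_congr rfl fun w _ => ?_
      rw [bz]
      ring
    rw [hsum]
    have hge : q ≤ ∑ w : {x // x ∈ R1 G U}, ((ecount G U c ↑w : ℝ))^2 := by
      have e1 : q = ∑ w : {x // x ∈ R1 G U}, (ecount G U c ↑w : ℝ) := by
        rw [hqd, zAz_diag]
        exact Finset.sum_subtype (R1 G U) (fun x => Iff.rfl) _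
      rw [e1]
      refine Finset.sum_le_sum fun w _ => ?_
      have : (ecount G U c ↑w) ≤ (ecount G U c ↑w)^2 :=
        Nat.le_self_pow (by norm_num) _
      exact_mod_cast this
    calc (1:ℝ) = q / q := by rw [div_self (ne_of_gt hq)]
      _ ≤ (∑ w : {x // x ∈ R1 G U}, ((ecount G U c ↑w : ℝ))^2) / q :=
        div_le_div_of_nonneg_right' hge hq
  rw [htrace, hcard]
  calc (𝒞.card : ℝ) = ∑ _c ∈ 𝒞, (1:ℝ) := by simp
    _ ≤ ∑ c ∈ 𝒞, ∑ w : {x // x ∈ R1 G U},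
        ((fun u => Bmat G U u w) ⬝ᵥ zvec G U c)^2
          / (zvec G U c ⬝ᵥ Amat G U *ᵥ zvec G U c) :=
      Finset.sum_le_sum hperc
    _ = ∑ w : {x // x ∈ R1 G U}, ∑ c ∈ 𝒞,
        ((fun u => Bmat G U u w) ⬝ᵥ zvec G U c)^2
          / (zvec G U c ⬝ᵥ Amat G U *ᵥ zvec G U c) := Finset.sum_comm
    _ ≤ ∑ w : {x // x ∈ R1 G U},
        (fun u => Bmat G U u w) ⬝ᵥ (Amat G U)⁻¹ *ᵥ (fun u => Bmat G U u w) :=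
      Finset.sum_le_sum fun w _ => hBessel w
    _ = ∑ w : {x // x ∈ R1 G U}, ((Bmat G U)ᵀ * Zmat G U) w w :=
      Finset.sum_congr rfl fun w _ => (trace_BtZ_entry G U w).symm

end Core7

section KyFan

lemma entry_dot {n : ℕ} (P V : Matrix (Fin n) (Fin n) ℝ) (j : Fin n) :
    (Vᵀ * P * V) j j = (fun i => V i j) ⬝ᵥ (P *ᵥ (fun i => V i j)) := by
  simp only [Matrix.mul_apply, Matrix.mulVec, Matrix.transpose_apply, dotProduct]
  simp only [Finset.sum_mul, Finset.mul_sum]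
  rw [Finset.sum_comm]
  refine Finset.sum_congr rfl fun x _ => Finset.sum_congr rfl fun y _ => by ring

lemma kyfan {n m : ℕ} (hm : m ≤ n) (M P : Matrix (Fin n) (Fin n) ℝ)
    (hM : M.IsHermitian) (hPs : Pᵀ = P) (hPi : P * P = P) (hPt : P.trace = (m : ℝ))
    (lam : Fin n → ℝ) (σ : Equiv.Perm (Fin n)) (hlam : lam = hM.eigenvalues ∘ σ)
    (hanti : ∀ i j : Fin n, i ≤ j → lam j ≤ lam i) :
    (P * M).trace ≤ ∑ i ∈ Finset.filter (fun i : Fin n => (i : ℕ) < m) Finset.univ, lam i := by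
  classical
  set V : Matrix (Fin n) (Fin n) ℝ := (Matrix.IsHermitian.eigenvectorUnitary hM : Matrix (Fin n) (Fin n) ℝ) with hV
  have hstar : star V = Vᵀ := by
    rw [Matrix.star_eq_conjTranspose, Matrix.conjTranspose_eq_transpose_of_trivial]
  have hVVt : V * Vᵀ = 1 := by
    rw [← hstar]
    exact (Matrix.mem_unitaryGroup_iff).mp (Matrix.IsHermitian.eigenvectorUnitary hM).2
  have hVtV : Vᵀ * V = 1 := by
    rw [← hstar]
    exact (Matrix.mem_unitaryGroup_iff').mp (Matrix.IsHermitian.eigenvectorUnitary hM).2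
  have hspec : M = V * Matrix.diagonal hM.eigenvalues * Vᵀ := by
    have := hM.spectral_theorem
    rw [Unitary.conjStarAlgAut_apply, ← hV] at this
    rwa [hstar, show (RCLike.ofReal ∘ hM.eigenvalues : Fin n → ℝ) = hM.eigenvalues by
      funext i; simp [RCLike.ofReal_real_eq_id]] at this
  set q : Fin n → ℝ := fun j => (Vᵀ * P * V) j j with hq
  have htr : (P * M).trace = ∑ j, hM.eigenvalues j * q j := by
    conv_lhs => rw [hspec]
    rw [← Matrix.mul_assoc, ← Matrix.mul_assoc, Matrix.trace_mul_comm, ← Matrix.mul_assoc,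
      ← Matrix.mul_assoc]
    rw [Matrix.trace]
    refine Finset.sum_congr rfl fun j _ => ?_
    rw [Matrix.diag]
    rw [Matrix.mul_diagonal]
    ring
  have hPpsd := psd_of_symm_idem hPs hPi
  have hIPpsd : ((1 : Matrix (Fin n) (Fin n) ℝ) - P).PosSemidef := by
    apply psd_of_symm_idem
    · rw [Matrix.transpose_sub, Matrix.transpose_one, hPs]
    · simp only [Matrix.mul_sub, Matrix.sub_mul, Matrix.one_mul, Matrix.mul_one, hPi]
      abel
  have hq0 : ∀ j, 0 ≤ q j := by
    intro j
    show 0 ≤ (Vᵀ * P * V) j j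
    rw [entry_dot]
    have := hPpsd.dotProduct_mulVec_nonneg (fun i => V i j)
    rwa [star_trivial] at this
  have hcol : ∀ j, (fun i => V i j) ⬝ᵥ (fun i => V i j) = 1 := by
    intro j
    have : (Vᵀ * V) j j = 1 := by rw [hVtV]; simp
    rw [← this]
    simp [Matrix.mul_apply, dotProduct, Matrix.transpose_apply]
  have hq1 : ∀ j, q j ≤ 1 := by
    intro j
    have h2 := hIPpsd.dotProduct_mulVec_nonneg (fun i => V i j)
    rw [star_trivial, Matrix.sub_mulVec, dotProduct_sub, Matrix.one_mulVec, hcol j] at h2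
    show (Vᵀ * P * V) j j ≤ 1
    rw [entry_dot]
    linarith
  have hqsum : ∑ j, q j = (m : ℝ) := by
    have : ∑ j, q j = (Vᵀ * P * V).trace := rfl
    rw [this, Matrix.trace_mul_comm, ← Matrix.mul_assoc, hVVt, Matrix.one_mul, hPt]
  have hreindex : ∑ j, hM.eigenvalues j * q j = ∑ j, lam j * q (σ j) := by
    rw [hlam]
    exact (Equiv.sum_comp σ (fun j => hM.eigenvalues j * q j)).symm
  have hpsum : ∑ j, q (σ j) = (m : ℝ) := by
    rw [Equiv.sum_comp σ q, hqsum]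
  rw [htr, hreindex]
  exact threshold hm lam (fun j => q (σ j)) hanti (fun j => hq0 _) (fun j => hq1 _) hpsum

end KyFan

end BH

/-- Brouwer–Haemers: `∑_{i≤m} λᵢ ≥ ∑_{u∈U} d_u + h`, where `h` is the number of
connected components of `G[U]` that are not connected components of `G`
(i.e. components containing a vertex with a neighbor outside `U`). -/
theorem stmt9 (n : ℕ) (G : SimpleGraph (Fin n)) [DecidableRel G.Adj]
    (hL : (G.lapMatrix ℝ).IsHermitian)
    (lam : Fin n → ℝ) (σ : Equiv.Perm (Fin n))
    (hlam : lam = hL.eigenvalues ∘ σ)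
    (hlamAnti : ∀ i j : Fin n, i ≤ j → lam j ≤ lam i)
    (U : Finset (Fin n)) (m : ℕ) (hU : U.card = m)
    (h : ℕ)
    (hh : h = Set.ncard {c : (SimpleGraph.induce (↑U : Set (Fin n)) G).ConnectedComponent |
      ∃ u : (↑U : Set (Fin n)),
        (SimpleGraph.induce (↑U : Set (Fin n)) G).connectedComponentMk u = c ∧
        ∃ w : Fin n, w ∉ U ∧ G.Adj ↑u w}) :
    (∑ u ∈ U, (G.degree u : ℝ)) + (h : ℝ) ≤
      ∑ i ∈ Finset.filter (fun i : Fin n => (i : ℕ) < m) Finset.univ, lam i := by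
  classical
  have hm : m ≤ n := by
    rw [← hU]
    calc U.card ≤ (Finset.univ : Finset (Fin n)).card := Finset.card_le_univ U
      _ = n := by simp
  have hγ := BH.gamma_ge G U
  have htr := BH.trace_Pmat_mul_L_ge G U
  have hky := BH.kyfan hm (G.lapMatrix ℝ) (BH.Pmat G U) hL (BH.Pmat_symm G U)
    (BH.Pmat_idem G U) (by rw [BH.trace_Pmat, hU]) lam σ hlam hlamAnti
  have hh' : h = Set.ncard {c | BH.BadComp G U c} := hh
  rw [hh']
  linarith
end

section
/- Let G be a connected finite simple graph on n vertices with Laplacian eigenvalues λ₁ ≥ ⋯ ≥ λₙ and degrees d₁ ≥ ⋯ ≥ dₙ. Then the edge-connectivity κₑ(G) satisfies κₑ(G) ≤ min over 0 < m < n of (n − m)·∑_{i=1}^{m}(λᵢ − dᵢ). -/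
open Finset Matrix

section Aux

lemma aux_vecMulVec_mulVec {n : ℕ} (w v x : Fin n → ℝ) :
    Matrix.vecMulVec w v *ᵥ x = (v ⬝ᵥ x) • w := by
  ext u
  simp only [Matrix.mulVec, dotProduct, Matrix.vecMulVec_apply, Pi.smul_apply,
    smul_eq_mul]
  rw [Finset.sum_mul]
  exact Finset.sum_congr rfl fun j _ => by ring

lemma aux_trace_diagonal_mul {n : ℕ} (f : Fin n → ℝ) (M : Matrix (Fin n) (Fin n) ℝ) :
    (Matrix.diagonal f * M).trace = ∑ i, f i * M i i := by
  simp [Matrix.trace, Matrix.diag, Matrix.diagonal_mul]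

lemma aux_trace_mul_diagonal {n : ℕ} (f : Fin n → ℝ) (M : Matrix (Fin n) (Fin n) ℝ) :
    (M * Matrix.diagonal f).trace = ∑ i, M i i * f i := by
  simp [Matrix.trace, Matrix.diag, Matrix.mul_diagonal]

end Aux

/-- The edge-connectivity (minimum size of a cut `∂(U,Ū)` over proper nonempty
`U`) satisfies `κₑ(G) ≤ (n-m) ∑_{i≤m} (λᵢ - dᵢ)` for every `0 < m < n`. -/
theorem stmt12 (n : ℕ) (G : SimpleGraph (Fin n)) [DecidableRel G.Adj]
    (hconn : G.Connected)
    (hL : (G.lapMatrix ℝ).IsHermitian)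
    (lam : Fin n → ℝ) (σ : Equiv.Perm (Fin n))
    (hlam : lam = hL.eigenvalues ∘ σ)
    (hlamAnti : ∀ i j : Fin n, i ≤ j → lam j ≤ lam i)
    (d : Fin n → ℝ) (τ : Equiv.Perm (Fin n))
    (hd : d = (fun v => (G.degree v : ℝ)) ∘ τ)
    (hdAnti : ∀ i j : Fin n, i ≤ j → d j ≤ d i)
    (κ : ℕ)
    (hκ : IsLeast {c : ℕ | ∃ U : Finset (Fin n),
      U.Nonempty ∧ U ≠ Finset.univ ∧ c = edgeBoundary G U} κ) :
    ∀ m : ℕ, 0 < m → m < n →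
      (κ : ℝ) ≤ ((n : ℝ) - m) *
        ∑ i ∈ Finset.filter (fun i : Fin n => (i : ℕ) < m) Finset.univ, (lam i - d i) := by
  intro m hm0 hmn
  classical
  have hn0 : 0 < n := lt_trans hm0 hmn
  set A' : Finset (Fin n) := Finset.filter (fun i : Fin n => (i : ℕ) < m) Finset.univ with hA'
  set B : Finset (Fin n) := Finset.filter (fun i : Fin n => ¬ (i : ℕ) < m) Finset.univ with hB
  set k : ℝ := ((n : ℝ) - m) with hkdef
  have hmR : (m : ℝ) < n := by exact_mod_cast hmn
  have hk0 : 0 < k := by rw [hkdef]; linarith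
  have hkcast : ((n - m : ℕ) : ℝ) = k := by
    rw [hkdef, Nat.cast_sub (le_of_lt hmn)]
  have hnR0 : (0:ℝ) < n := by exact_mod_cast hn0
  -- cardinalities
  have hcardA' : A'.card = m := by
    have himg : A'.image Fin.val = Finset.range m := by
      ext x
      simp only [Finset.mem_image, Finset.mem_range, hA', Finset.mem_filter, Finset.mem_univ,
        true_and]
      constructor
      · rintro ⟨j, hj, rfl⟩; exact hj
      · intro hx; exact ⟨⟨x, lt_trans hx hmn⟩, hx, rfl⟩
    calc A'.card = (A'.image Fin.val).card :=
          (Finset.card_image_of_injective _ Fin.val_injective).symm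
      _ = m := by rw [himg, Finset.card_range]
  have hcardB : B.card = n - m := by
    have h := Finset.card_filter_add_card_filter_not
      (s := (Finset.univ : Finset (Fin n))) (p := fun i : Fin n => (i : ℕ) < m)
    rw [Finset.card_univ, Fintype.card_fin] at h
    rw [← hA', ← hB] at h
    omega
  -- the vertex set S of the n-m smallest degrees
  set S : Finset (Fin n) := B.image τ with hS
  have hcardS : S.card = n - m := by
    rw [hS, Finset.card_image_of_injective _ τ.injective, hcardB]
  have hSne : S.Nonempty := ⟨τ ⟨m, hmn⟩, Finset.mem_image_of_mem _ (by simp [hB])⟩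
  have hSnu : S ≠ Finset.univ := by
    intro h
    have h2 := hcardS
    rw [h, Finset.card_univ, Fintype.card_fin] at h2
    omega
  have hκS : (κ : ℝ) ≤ (edgeBoundary G S : ℝ) := by
    exact_mod_cast hκ.2 ⟨S, hSne, hSnu, rfl⟩
  -- the projection matrix P
  set a : Fin n → ℝ := fun v => if v ∈ S then 1 else 0 with ha
  set P : Matrix (Fin n) (Fin n) ℝ :=
    Matrix.diagonal a - k⁻¹ • Matrix.vecMulVec a a + (n:ℝ)⁻¹ • Matrix.vecMulVec 1 1 with hP
  have hScardR : (S.card : ℝ) = k := by rw [hcardS]; exact hkcast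
  -- quadratic form of P
  have hdota : ∀ x : Fin n → ℝ, a ⬝ᵥ x = ∑ v ∈ S, x v := by
    intro x
    simp [ha, dotProduct, ite_mul, one_mul, zero_mul]
  have hquad : ∀ x : Fin n → ℝ, x ⬝ᵥ (P *ᵥ x) =
      (∑ v ∈ S, x v ^ 2) - k⁻¹ * (∑ v ∈ S, x v) ^ 2 + (n:ℝ)⁻¹ * (∑ v, x v) ^ 2 := by
    intro x
    have h1 : x ⬝ᵥ (Matrix.diagonal a *ᵥ x) = ∑ v ∈ S, x v ^ 2 := by
      simp only [dotProduct, Matrix.mulVec_diagonal, ha, pow_two]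
      simp [mul_ite, ite_mul, mul_one, mul_zero, zero_mul, mul_assoc]
    have h2 : x ⬝ᵥ (Matrix.vecMulVec a a *ᵥ x) = (∑ v ∈ S, x v) ^ 2 := by
      rw [aux_vecMulVec_mulVec, dotProduct_smul, hdota]
      have : x ⬝ᵥ a = ∑ v ∈ S, x v := by
        simp [ha, dotProduct, mul_ite, mul_one, mul_zero]
      rw [this, smul_eq_mul, pow_two]
    have h3 : x ⬝ᵥ (Matrix.vecMulVec (1 : Fin n → ℝ) 1 *ᵥ x) = (∑ v, x v) ^ 2 := by
      rw [aux_vecMulVec_mulVec, dotProduct_smul]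
      simp [dotProduct, pow_two]
    rw [hP, Matrix.add_mulVec, Matrix.sub_mulVec, Matrix.smul_mulVec,
      Matrix.smul_mulVec, dotProduct_add, dotProduct_sub,
      dotProduct_smul, dotProduct_smul, h1, h2, h3, smul_eq_mul, smul_eq_mul]
  -- bounds on the quadratic form
  have hqlow : ∀ x : Fin n → ℝ, 0 ≤ x ⬝ᵥ (P *ᵥ x) := by
    intro x
    rw [hquad]
    have hcs : (∑ v ∈ S, x v) ^ 2 ≤ (S.card : ℝ) * ∑ v ∈ S, x v ^ 2 :=
      sq_sum_le_card_mul_sum_sq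
    rw [hScardR] at hcs
    have h1 : k⁻¹ * (∑ v ∈ S, x v) ^ 2 ≤ ∑ v ∈ S, x v ^ 2 := by
      rw [inv_mul_eq_div, div_le_iff₀' hk0]
      exact hcs
    have h2 : (0:ℝ) ≤ (n:ℝ)⁻¹ * (∑ v, x v) ^ 2 := by positivity
    linarith
  have hqup : ∀ x : Fin n → ℝ, x ⬝ᵥ (P *ᵥ x) ≤ x ⬝ᵥ x := by
    intro x
    rw [hquad]
    have hxx : x ⬝ᵥ x = ∑ v, x v ^ 2 := by simp [dotProduct, pow_two]
    set p : ℝ := ∑ v ∈ S, x v with hp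
    set r : ℝ := ∑ v ∈ Sᶜ, x v with hr
    set Q : ℝ := ∑ v ∈ Sᶜ, x v ^ 2 with hQ
    set l : ℝ := (m : ℝ) with hl
    have hl0 : 0 < l := by rw [hl]; exact_mod_cast hm0
    have hcardSc : ((Sᶜ : Finset (Fin n)).card : ℝ) = l := by
      rw [Finset.card_compl, Fintype.card_fin, hcardS, hl]
      have : n - (n - m) = m := by omega
      rw [this]
    have hsum_split : ∑ v, x v = p + r := by
      rw [hp, hr, Finset.sum_add_sum_compl]
    have hsq_split : ∑ v, x v ^ 2 = (∑ v ∈ S, x v ^ 2) + Q := by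
      rw [hQ, Finset.sum_add_sum_compl]
    have hcs2 : r ^ 2 ≤ l * Q := by
      have := sq_sum_le_card_mul_sum_sq (s := Sᶜ) (f := fun v => x v)
      rwa [hcardSc] at this
    have hnkl : (n : ℝ) = k + l := by rw [hkdef, hl]; ring
    have key : (p + r)^2 / (n:ℝ) ≤ k⁻¹ * p^2 + l⁻¹ * r^2 := by
      have h1 : (p + r)^2 / (n:ℝ) ≤ (l * p^2 + k * r^2) / (k * l) := by
        rw [hnkl, div_le_div_iff₀ (by linarith) (by positivity)]
        nlinarith [sq_nonneg (k * r - l * p)]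
      have h2 : (l * p^2 + k * r^2) / (k * l) = k⁻¹ * p^2 + l⁻¹ * r^2 := by
        field_simp
      linarith [h1, h2.symm.le, h2.le]
    have hlr : l⁻¹ * r^2 ≤ Q := by
      rw [inv_mul_eq_div, div_le_iff₀' hl0]
      exact hcs2
    rw [hxx, hsq_split, hsum_split]
    have : (n:ℝ)⁻¹ * (p + r)^2 = (p + r)^2 / (n:ℝ) := by rw [inv_mul_eq_div]
    rw [this]
    linarith
  -- spectral decomposition
  set V : Matrix (Fin n) (Fin n) ℝ := (hL.eigenvectorUnitary : Matrix (Fin n) (Fin n) ℝ)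
    with hV
  have hV1 : star V * V = 1 := Matrix.mem_unitaryGroup_iff'.mp hL.eigenvectorUnitary.2
  have hV2 : V * star V = 1 := Matrix.mem_unitaryGroup_iff.mp hL.eigenvectorUnitary.2
  have hspec : (G.lapMatrix ℝ) = V * Matrix.diagonal hL.eigenvalues * star V := by
    have h := hL.spectral_theorem
    rwa [RCLike.ofReal_real_eq_id, Function.id_comp] at h
  set c : Fin n → ℝ := fun i => (star V * P * V) i i with hc
  have hcform : ∀ i, c i = (fun u => V u i) ⬝ᵥ (P *ᵥ (fun u => V u i)) := by
    intro i
    simp only [hc, Matrix.mul_apply, dotProduct, Matrix.mulVec, Matrix.star_apply,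
      star_trivial]
    simp only [Finset.sum_mul, Finset.mul_sum]
    rw [Finset.sum_comm]
    exact Finset.sum_congr rfl fun u _ => Finset.sum_congr rfl fun w _ => by ring
  have hc0 : ∀ i, 0 ≤ c i := by
    intro i
    rw [hcform i]
    exact hqlow _
  have hVcol : ∀ i, ((fun u => V u i) ⬝ᵥ (fun u => V u i)) = 1 := by
    intro i
    have h := congrFun (congrFun hV1 i) i
    simp only [Matrix.mul_apply, Matrix.star_apply, star_trivial, Matrix.one_apply_eq] at h
    simpa [dotProduct] using h
  have hc1 : ∀ i, c i ≤ 1 := by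
    intro i
    rw [hcform i]
    exact le_trans (hqup _) (le_of_eq (hVcol i))
  -- trace of P
  have htrP : P.trace = k := by
    have t1 : (Matrix.diagonal a).trace = k := by
      rw [Matrix.trace_diagonal]
      simp only [ha]
      rw [Finset.sum_ite_mem, Finset.univ_inter, Finset.sum_const, nsmul_eq_mul, mul_one]
      exact hScardR
    have t2 : (Matrix.vecMulVec a a).trace = k := by
      have haa : ∀ v, a v * a v = a v := by
        intro v; by_cases hv : v ∈ S <;> simp [ha, hv]
      simp only [Matrix.trace, Matrix.diag, Matrix.vecMulVec_apply, haa]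
      simp only [ha]
      rw [Finset.sum_ite_mem, Finset.univ_inter, Finset.sum_const, nsmul_eq_mul, mul_one]
      exact hScardR
    have t3 : (Matrix.vecMulVec (1 : Fin n → ℝ) 1).trace = n := by
      simp [Matrix.trace, Matrix.diag, Matrix.vecMulVec_apply]
    rw [hP, Matrix.trace_add, Matrix.trace_sub, Matrix.trace_smul, Matrix.trace_smul,
      t1, t2, t3, smul_eq_mul, smul_eq_mul, inv_mul_cancel₀ (ne_of_gt hk0),
      inv_mul_cancel₀ (ne_of_gt hnR0)]
    ring
  have hcsum : ∑ i, c i = k := by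
    have h1 : ∑ i, c i = (star V * P * V).trace := by
      simp [Matrix.trace, Matrix.diag, hc]
    rw [h1, Matrix.trace_mul_cycle, hV2, Matrix.one_mul, htrP]
  -- trace((G.lapMatrix ℝ)*P), spectral side
  have htr1 : ((G.lapMatrix ℝ) * P).trace = ∑ i, hL.eigenvalues i * c i := by
    calc ((G.lapMatrix ℝ) * P).trace = (V * Matrix.diagonal hL.eigenvalues * star V * P).trace := by
          rw [← hspec]
      _ = (Matrix.diagonal hL.eigenvalues * (star V * P * V)).trace := by
          rw [Matrix.mul_assoc, Matrix.trace_mul_comm, ← Matrix.mul_assoc,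
            Matrix.trace_mul_comm]
      _ = ∑ i, hL.eigenvalues i * (star V * P * V) i i := aux_trace_diagonal_mul _ _
      _ = ∑ i, hL.eigenvalues i * c i := by simp [hc]
  -- row sums of (G.lapMatrix ℝ) are zero
  have hrowsum : ∀ u, ∑ w, (G.lapMatrix ℝ) u w = 0 := by
    intro u
    have h := congrFun (G.lapMatrix_mulVec_const_eq_zero (R := ℝ)) u
    simpa [Matrix.mulVec, dotProduct] using h
  have hdiagL : ∀ v, (G.lapMatrix ℝ) v v = (G.degree v : ℝ) := by
    intro v
    simp [SimpleGraph.lapMatrix, SimpleGraph.degMatrix, Matrix.sub_apply]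
  have hoffL : ∀ u w, u ≠ w → (G.lapMatrix ℝ) u w = -(if G.Adj u w then (1:ℝ) else 0) := by
    intro u w h
    simp [SimpleGraph.lapMatrix, SimpleGraph.degMatrix, Matrix.sub_apply,
      Matrix.diagonal_apply_ne _ h]
  -- trace((G.lapMatrix ℝ)*P), combinatorial side
  have htr_diag : ((G.lapMatrix ℝ) * Matrix.diagonal a).trace = ∑ j ∈ B, d j := by
    rw [aux_trace_mul_diagonal]
    have h1 : ∑ v, (G.lapMatrix ℝ) v v * a v = ∑ v ∈ S, (G.degree v : ℝ) := by
      simp only [ha, mul_ite, mul_one, mul_zero]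
      rw [Finset.sum_ite_mem, Finset.univ_inter]
      exact Finset.sum_congr rfl fun v _ => hdiagL v
    rw [h1, hS, Finset.sum_image (fun x _ y _ h => τ.injective h)]
    exact Finset.sum_congr rfl fun j _ => by rw [hd]; rfl
  have htr_aa : ((G.lapMatrix ℝ) * Matrix.vecMulVec a a).trace = (edgeBoundary G S : ℝ) := by
    have hEB' : (edgeBoundary G S : ℝ) =
        ∑ u, ∑ w, (if u ∈ S ∧ w ∉ S ∧ G.Adj u w then (1:ℝ) else 0) := by
      rw [edgeBoundary, Finset.card_filter]
      push_cast
      rw [Fintype.sum_prod_type]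
    rw [hEB']
    simp only [Matrix.trace, Matrix.diag, Matrix.mul_apply, Matrix.vecMulVec_apply]
    apply Finset.sum_congr rfl
    intro u _
    by_cases hu : u ∈ S
    · have hau : a u = 1 := by simp [ha, hu]
      have hstep : ∀ w, (G.lapMatrix ℝ) u w * (a w * a u) = (G.lapMatrix ℝ) u w - (if w ∉ S then (G.lapMatrix ℝ) u w else 0) := by
        intro w
        by_cases hw : w ∈ S <;> simp [ha, hw, hu]
      rw [Finset.sum_congr rfl fun w _ => hstep w, Finset.sum_sub_distrib, hrowsum u,
        zero_sub]
      rw [← Finset.sum_neg_distrib]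
      apply Finset.sum_congr rfl
      intro w _
      by_cases hw : w ∈ S
      · simp [hw, hu]
      · have huw : u ≠ w := fun h => hw (h ▸ hu)
        rw [if_pos hw, hoffL u w huw, neg_neg]
        simp [hu, hw]
    · have hau : a u = 0 := by simp [ha, hu]
      simp [hau, hu]
  have htr_bb : ((G.lapMatrix ℝ) * Matrix.vecMulVec (1 : Fin n → ℝ) 1).trace = 0 := by
    simp only [Matrix.trace, Matrix.diag, Matrix.mul_apply, Matrix.vecMulVec_apply,
      Pi.one_apply, mul_one, one_mul]
    exact Finset.sum_eq_zero fun u _ => hrowsum u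
  have htr2 : ((G.lapMatrix ℝ) * P).trace = (∑ j ∈ B, d j) - k⁻¹ * (edgeBoundary G S : ℝ) := by
    rw [hP, Matrix.mul_add, Matrix.mul_sub, Matrix.mul_smul, Matrix.mul_smul,
      Matrix.trace_add, Matrix.trace_sub, Matrix.trace_smul, Matrix.trace_smul,
      htr_diag, htr_aa, htr_bb, smul_eq_mul, smul_eq_mul, mul_zero, add_zero]
  -- Ky Fan step
  have hKF : ∑ j ∈ B, lam j ≤ ∑ i, hL.eigenvalues i * c i := by
    have hre : ∑ i, hL.eigenvalues i * c i = ∑ j, lam j * c (σ j) := by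
      rw [hlam]
      exact (Equiv.sum_comp σ (fun i => hL.eigenvalues i * c i)).symm
    rw [hre]
    set t : ℝ := lam ⟨m, hmn⟩ with htdef
    have hsplit : ∑ j ∈ A', lam j * c (σ j) + ∑ j ∈ B, lam j * c (σ j)
        = ∑ j, lam j * c (σ j) :=
      Finset.sum_filter_add_sum_filter_not Finset.univ _ _
    have hcsplit : ∑ j ∈ A', c (σ j) + ∑ j ∈ B, c (σ j) = k := by
      rw [Finset.sum_filter_add_sum_filter_not, ← hcsum]
      exact Equiv.sum_comp σ c
    have hBk : (B.card : ℝ) = k := by rw [hcardB]; exact hkcast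
    have h1 : ∀ j ∈ B, lam j ≤ t := by
      intro j hj
      apply hlamAnti ⟨m, hmn⟩ j
      have : ¬ (j : ℕ) < m := by simpa [hB] using hj
      exact Fin.mk_le_of_le_val (by omega)
    have h2 : ∀ j ∈ A', t ≤ lam j := by
      intro j hj
      apply hlamAnti j ⟨m, hmn⟩
      have : (j : ℕ) < m := by simpa [hA'] using hj
      exact Fin.le_def.mpr (by simpa using le_of_lt this)
    have e1 : ∑ j ∈ B, lam j * (1 - c (σ j)) ≤ ∑ j ∈ B, t * (1 - c (σ j)) :=
      Finset.sum_le_sum fun j hj =>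
        mul_le_mul_of_nonneg_right (h1 j hj) (by linarith [hc1 (σ j)])
    have e2 : ∑ j ∈ A', t * c (σ j) ≤ ∑ j ∈ A', lam j * c (σ j) :=
      Finset.sum_le_sum fun j hj => mul_le_mul_of_nonneg_right (h2 j hj) (hc0 (σ j))
    have e3 : ∑ j ∈ B, t * (1 - c (σ j)) = t * (∑ j ∈ A', c (σ j)) := by
      rw [← Finset.mul_sum, Finset.sum_sub_distrib, Finset.sum_const, nsmul_eq_mul, mul_one]
      congr 1
      rw [hBk]
      linarith [hcsplit]
    have e4 : ∑ j ∈ A', t * c (σ j) = t * ∑ j ∈ A', c (σ j) := by rw [Finset.mul_sum]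
    have e5 : ∑ j ∈ B, lam j = ∑ j ∈ B, lam j * c (σ j) + ∑ j ∈ B, lam j * (1 - c (σ j)) := by
      rw [← Finset.sum_add_distrib]
      exact Finset.sum_congr rfl fun j _ => by ring
    linarith [e1, e2, e3, e4, e5, hsplit]
  -- trace identities
  have htrL : ∑ j, d j = ∑ i, hL.eigenvalues i := by
    have h1 : (G.lapMatrix ℝ).trace = ∑ i, hL.eigenvalues i := by
      calc (G.lapMatrix ℝ).trace = (V * Matrix.diagonal hL.eigenvalues * star V).trace := by rw [← hspec]
        _ = (star V * V * Matrix.diagonal hL.eigenvalues).trace := by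
            rw [Matrix.trace_mul_cycle]
        _ = ∑ i, hL.eigenvalues i := by
            rw [hV1, Matrix.one_mul, Matrix.trace_diagonal]
    have h2 : (G.lapMatrix ℝ).trace = ∑ v, (G.degree v : ℝ) := by
      simp only [Matrix.trace, Matrix.diag]
      exact Finset.sum_congr rfl fun v _ => hdiagL v
    have h3 : ∑ j, d j = ∑ v, (G.degree v : ℝ) := by
      rw [hd]
      exact Fintype.sum_equiv τ _ _ fun j => rfl
    rw [h3, ← h2, h1]
  have hlam_eq : ∑ j, lam j = ∑ j, d j := by
    calc ∑ j, lam j = ∑ i, hL.eigenvalues i := by rw [hlam]; exact Fintype.sum_equiv σ _ _ fun j => rfl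
      _ = ∑ j, d j := htrL.symm
  -- final assembly
  have hsplit_lam : ∑ j ∈ A', lam j + ∑ j ∈ B, lam j = ∑ j, lam j :=
    Finset.sum_filter_add_sum_filter_not Finset.univ _ lam
  have hsplit_d : ∑ j ∈ A', d j + ∑ j ∈ B, d j = ∑ j, d j :=
    Finset.sum_filter_add_sum_filter_not Finset.univ _ d
  have hsum_sub : ∑ j ∈ A', (lam j - d j) = ∑ j ∈ A', lam j - ∑ j ∈ A', d j := by
    rw [Finset.sum_sub_distrib]
  have hκk : k⁻¹ * (κ : ℝ) ≤ k⁻¹ * (edgeBoundary G S : ℝ) :=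
    mul_le_mul_of_nonneg_left hκS (inv_nonneg.mpr hk0.le)
  have hmain : k⁻¹ * (κ : ℝ) ≤ ∑ j ∈ A', (lam j - d j) := by
    have hchain : ∑ j ∈ B, lam j ≤ (∑ j ∈ B, d j) - k⁻¹ * (edgeBoundary G S : ℝ) := by
      rw [← htr2, htr1]
      exact hKF
    rw [hsum_sub]
    linarith [hchain, hsplit_lam, hsplit_d, hlam_eq, hκk]
  have hfin := mul_le_mul_of_nonneg_left hmain hk0.le
  rw [← mul_assoc, mul_inv_cancel₀ (ne_of_gt hk0), one_mul] at hfin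
  exact hfin
end
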